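/- arXiv:2205.06838 — 13 statements merged into one kernel-verified Lean document; each statement's English description precedes it below -/
import Mathlib

section
/- Let X be a Banach space with a semi-normalized Markushevich basis (e_n) with biorthogonal functionals (e_n^*). Fix m ∈ ℕ and define k_m^c = sup{‖I − P_A‖ : A ⊂ ℕ, |A| ≤ m}, where P_A(x) = ∑_{n∈A} e_n^*(x) e_n. Let J ⊂ ℕ with |J| ≤ m, and let (a_n)_{n∈J}, (b_n)_{n∈J} be real scalars with |a_n| ≤ |b_n| for all n ∈ J and sgn(a_n) = sgn(b_n) whenever a_n b_n ≠ 0. Then for every x ∈ X with supp(x) ∩ J = ∅, one has ‖x + ∑_{n∈J} a_n e_n‖ ≤ k_m^c ‖x + ∑_{n∈J} b_n e_n‖. -/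
/-- Proposition 2.1 (first part): bounding perturbed sums via the
complemented unconditionality constant `k_m^c`. -/
theorem stmt_0
    {X : Type*} [NormedAddCommGroup X] [NormedSpace ℝ X] [CompleteSpace X]
    (e : ℕ → X) (f : ℕ → X →L[ℝ] ℝ)
    (hbi : ∀ i j, f i (e j) = if i = j then (1 : ℝ) else 0)
    (htotal : ∀ x : X, (∀ n, f n x = 0) → x = 0)
    (hdense : Dense (Submodule.span ℝ (Set.range e) : Set X))
    (m : ℕ) (kc : ℝ)
    (hkc : ∀ A : Finset ℕ, A.card ≤ m → ∀ x : X,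
      ‖x - ∑ n ∈ A, f n x • e n‖ ≤ kc * ‖x‖)
    (J : Finset ℕ) (hJ : J.card ≤ m)
    (a b : ℕ → ℝ)
    (hab : ∀ n ∈ J, |a n| ≤ |b n|)
    (hsgn : ∀ n ∈ J, a n * b n ≠ 0 → Real.sign (a n) = Real.sign (b n))
    (x : X) (hx : ∀ n ∈ J, f n x = 0) :
    ‖x + ∑ n ∈ J, a n • e n‖ ≤ kc * ‖x + ∑ n ∈ J, b n • e n‖ := by
  classical
  set y := x + ∑ n ∈ J, b n • e n with hy
  -- the coordinates of y
  have hfy : ∀ n ∈ J, f n y = b n := by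
    intro n hn
    have : f n y = f n x + ∑ k ∈ J, b k * (if n = k then (1 : ℝ) else 0) := by
      simp [hy, hbi, mul_comm]
    rw [this, hx n hn]
    simp [Finset.sum_ite_eq, hn]
  -- every "vertex" x + ∑_{n ∈ S} b n • e n (S ⊆ J) has norm ≤ kc * ‖y‖
  have hvert : ∀ S ⊆ J, ‖x + ∑ n ∈ S, b n • e n‖ ≤ kc * ‖y‖ := by
    intro S hS
    have hA : (J \ S).card ≤ m :=
      le_trans (Finset.card_le_card (Finset.sdiff_subset)) hJ
    have h := hkc (J \ S) hA y
    have h1 : ∑ n ∈ J \ S, f n y • e n = ∑ n ∈ J \ S, b n • e n :=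
      Finset.sum_congr rfl fun n hn => by rw [hfy n (Finset.mem_sdiff.mp hn).1]
    have heq : y - ∑ n ∈ J \ S, f n y • e n = x + ∑ n ∈ S, b n • e n := by
      rw [h1, hy, ← Finset.sum_sdiff hS]
      abel
    rwa [heq] at h
  -- existence of convexity coefficients
  have hcoef : ∀ j ∈ J, ∃ t : ℝ, 0 ≤ t ∧ t ≤ 1 ∧ a j = t * b j := by
    intro j hj
    by_cases hb : b j = 0
    · refine ⟨0, le_refl _, zero_le_one, ?_⟩
      have : |a j| ≤ 0 := by simpa [hb] using hab j hj
      have : a j = 0 := abs_nonpos_iff.mp this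
      simp [this, hb]
    by_cases ha : a j = 0
    · exact ⟨0, le_refl _, zero_le_one, by simp [ha]⟩
    -- a j and b j have the same sign
    have hprod : 0 < a j * b j := by
      have hs := hsgn j hj (mul_ne_zero ha hb)
      rcases lt_trichotomy (a j) 0 with hA | hA | hA
      · rcases lt_trichotomy (b j) 0 with hB | hB | hB
        · exact mul_pos_of_neg_of_neg hA hB
        · exact absurd hB hb
        · rw [Real.sign_of_neg hA, Real.sign_of_pos hB] at hs; norm_num at hs
      · exact absurd hA ha
      · rcases lt_trichotomy (b j) 0 with hB | hB | hB
        · rw [Real.sign_of_pos hA, Real.sign_of_neg hB] at hs; norm_num at hs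
        · exact absurd hB hb
        · exact mul_pos hA hB
    refine ⟨a j / b j, ?_, ?_, ?_⟩
    · have : a j / b j = a j * b j / (b j * b j) := by
        field_simp
      rw [this]
      exact div_nonneg hprod.le (mul_self_nonneg _)
    · have h1 : |a j / b j| ≤ 1 := by
        rw [abs_div]
        rw [div_le_one (abs_pos.mpr hb)]
        exact hab j hj
      exact le_trans (le_abs_self _) h1
    · field_simp
  -- main induction: replace b-coefficients by a-coefficients one index at a time
  have key : ∀ T : Finset ℕ, T ⊆ J → ∀ S ⊆ J, Disjoint T S →
      ‖x + ∑ n ∈ T, a n • e n + ∑ n ∈ S, b n • e n‖ ≤ kc * ‖y‖ := by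
    intro T
    induction T using Finset.induction_on with
    | empty =>
      intro _ S hS _
      simpa using hvert S hS
    | @insert j T hjT ih =>
      intro hTJ S hS hdisj
      have hjJ : j ∈ J := hTJ (Finset.mem_insert_self j T)
      have hT : T ⊆ J := fun n hn => hTJ (Finset.mem_insert_of_mem hn)
      have hjS : j ∉ S := Finset.disjoint_left.mp hdisj (Finset.mem_insert_self j T)
      have hdisjT : Disjoint T S :=
        Finset.disjoint_of_subset_left (Finset.subset_insert j T) hdisj
      have hdisjTj : Disjoint T (insert j S) := by
        rw [Finset.disjoint_insert_right]
        exact ⟨hjT, hdisjT⟩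
      obtain ⟨t, ht0, ht1, hta⟩ := hcoef j hjJ
      have hu := ih hT (insert j S) (Finset.insert_subset hjJ hS) hdisjTj
      have hv := ih hT S hS hdisjT
      set w := x + ∑ n ∈ T, a n • e n + ∑ n ∈ S, b n • e n with hw
      have hueq : x + ∑ n ∈ T, a n • e n + ∑ n ∈ insert j S, b n • e n
          = w + b j • e j := by
        rw [Finset.sum_insert hjS, hw]; abel
      have hpeq : x + ∑ n ∈ insert j T, a n • e n + ∑ n ∈ S, b n • e n
          = w + a j • e j := by
        rw [Finset.sum_insert hjT, hw]; abel
      rw [hueq] at hu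
      rw [hpeq]
      have hcomb : w + a j • e j = t • (w + b j • e j) + (1 - t) • w := by
        rw [hta, smul_add, mul_smul]
        module
      rw [hcomb]
      calc ‖t • (w + b j • e j) + (1 - t) • w‖
          ≤ ‖t • (w + b j • e j)‖ + ‖(1 - t) • w‖ := norm_add_le _ _
        _ = t * ‖w + b j • e j‖ + (1 - t) * ‖w‖ := by
            rw [norm_smul, norm_smul, Real.norm_eq_abs, Real.norm_eq_abs,
              abs_of_nonneg ht0, abs_of_nonneg (by linarith)]
        _ ≤ t * (kc * ‖y‖) + (1 - t) * (kc * ‖y‖) := by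
            gcongr <;> linarith
        _ = kc * ‖y‖ := by ring
  have h := key J (le_refl J) ∅ (Finset.empty_subset J) (Finset.disjoint_empty_right J)
  simpa using h
end

section
/- With the setup of the previous context, if additionally there exists j ∈ J with a_j = b_j, then ‖x + ∑_{n∈J} a_n e_n‖ ≤ k_{m−1}^c ‖x + ∑_{n∈J} b_n e_n‖, where k_{m−1}^c = sup{‖I − P_A‖ : |A| ≤ m−1}. -/
/-- Sum of the binomial-type weights is 1. -/
lemma weight_sum (s t : ℕ → ℝ) (J : Finset ℕ) (h1 : ∀ n ∈ J, s n + t n = 1) :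
    ∑ A ∈ J.powerset, ((∏ n ∈ A, s n) * ∏ n ∈ J \ A, t n) = 1 := by
  rw [← Finset.prod_add]
  exact Finset.prod_eq_one h1

/-- Key convexity identity. -/
lemma key_sum {V : Type*} [AddCommGroup V] [Module ℝ V] (s t : ℕ → ℝ) (v : ℕ → V)
    (J : Finset ℕ) : (∀ n ∈ J, s n + t n = 1) →
    ∑ A ∈ J.powerset, ((∏ n ∈ A, s n) * ∏ n ∈ J \ A, t n) • (∑ n ∈ A, v n)
      = ∑ n ∈ J, s n • v n := by
  classical
  induction J using Finset.induction with
  | empty => intro _; simp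
  | @insert c J ha ih0 =>
    intro h1
    have ih : (∀ n ∈ J, s n + t n = 1) →
        ∑ A ∈ J.powerset, ((∏ n ∈ A, s n) * ∏ n ∈ J \ A, t n) • (∑ n ∈ A, v n)
          = ∑ n ∈ J, s n • v n := ih0
    rw [Finset.sum_powerset_insert ha]
    have h1' : ∀ n ∈ J, s n + t n = 1 := fun n hn => h1 n (Finset.mem_insert_of_mem hn)
    have hc : s c + t c = 1 := h1 c (Finset.mem_insert_self c J)
    have e1 : ∀ A ∈ J.powerset,
        ((∏ n ∈ A, s n) * ∏ n ∈ (insert c J) \ A, t n) • (∑ n ∈ A, v n)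
          = t c • (((∏ n ∈ A, s n) * ∏ n ∈ J \ A, t n) • (∑ n ∈ A, v n)) := by
      intro A hA
      have hcA : c ∉ A := fun h => ha ((Finset.mem_powerset.mp hA) h)
      rw [Finset.insert_sdiff_of_notMem _ hcA,
        Finset.prod_insert (fun h => ha (Finset.mem_sdiff.mp h).1)]
      rw [smul_smul]; ring_nf
    have e2 : ∀ A ∈ J.powerset,
        ((∏ n ∈ insert c A, s n) * ∏ n ∈ (insert c J) \ insert c A, t n) •
            (∑ n ∈ insert c A, v n)
          = s c • (((∏ n ∈ A, s n) * ∏ n ∈ J \ A, t n) • (v c + ∑ n ∈ A, v n)) := by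
      intro A hA
      have hAJ := Finset.mem_powerset.mp hA
      have hcA : c ∉ A := fun h => ha (hAJ h)
      have hd : (insert c J) \ insert c A = J \ A := by
        rw [Finset.insert_sdiff_insert]
        rw [Finset.sdiff_insert, Finset.erase_eq_of_notMem]
        exact fun h => ha (Finset.mem_sdiff.mp h).1
      rw [hd, Finset.prod_insert hcA, Finset.sum_insert hcA]
      rw [smul_smul]; ring_nf
    rw [Finset.sum_congr rfl e1, Finset.sum_congr rfl e2, ← Finset.smul_sum,
      ← Finset.smul_sum, ih h1']
    have e3 : ∑ A ∈ J.powerset, ((∏ n ∈ A, s n) * ∏ n ∈ J \ A, t n) • (v c + ∑ n ∈ A, v n)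
        = v c + ∑ n ∈ J, s n • v n := by
      have := weight_sum s t J h1'
      calc ∑ A ∈ J.powerset, ((∏ n ∈ A, s n) * ∏ n ∈ J \ A, t n) • (v c + ∑ n ∈ A, v n)
          = ∑ A ∈ J.powerset, (((∏ n ∈ A, s n) * ∏ n ∈ J \ A, t n) • v c
            + ((∏ n ∈ A, s n) * ∏ n ∈ J \ A, t n) • (∑ n ∈ A, v n)) := by
            simp [smul_add]
        _ = (∑ A ∈ J.powerset, ((∏ n ∈ A, s n) * ∏ n ∈ J \ A, t n)) • v c
            + ∑ n ∈ J, s n • v n := by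
            rw [Finset.sum_add_distrib, ih h1', Finset.sum_smul]
        _ = v c + ∑ n ∈ J, s n • v n := by rw [this, one_smul]
    rw [e3, Finset.sum_insert ha]
    rw [smul_add]
    have : t c • ∑ n ∈ J, s n • v n + (s c • v c + s c • ∑ n ∈ J, s n • v n)
        = s c • v c + (s c + t c) • ∑ n ∈ J, s n • v n := by
      rw [add_smul]; abel
    rw [this, hc, one_smul]

/-- Proposition 2.1 (second part): if some coefficient is unchanged, the
constant improves to `k_{m-1}^c`. -/
theorem stmt_1
    {X : Type*} [NormedAddCommGroup X] [NormedSpace ℝ X] [CompleteSpace X]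
    (e : ℕ → X) (f : ℕ → X →L[ℝ] ℝ)
    (hbi : ∀ i j, f i (e j) = if i = j then (1 : ℝ) else 0)
    (htotal : ∀ x : X, (∀ n, f n x = 0) → x = 0)
    (hdense : Dense (Submodule.span ℝ (Set.range e) : Set X))
    (m : ℕ) (kc : ℝ)
    (hkc : ∀ A : Finset ℕ, A.card ≤ m - 1 → ∀ x : X,
      ‖x - ∑ n ∈ A, f n x • e n‖ ≤ kc * ‖x‖)
    (J : Finset ℕ) (hJ : J.card ≤ m)
    (a b : ℕ → ℝ)
    (hab : ∀ n ∈ J, |a n| ≤ |b n|)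
    (hsgn : ∀ n ∈ J, a n * b n ≠ 0 → Real.sign (a n) = Real.sign (b n))
    (hfix : ∃ j ∈ J, a j = b j)
    (x : X) (hx : ∀ n ∈ J, f n x = 0) :
    ‖x + ∑ n ∈ J, a n • e n‖ ≤ kc * ‖x + ∑ n ∈ J, b n • e n‖ := by
  classical
  obtain ⟨j, hjJ, hjab⟩ := hfix
  set y : X := x + ∑ n ∈ J, b n • e n with hy
  -- the ratio coefficients
  set lam : ℕ → ℝ := fun n => if b n = 0 then 0 else a n / b n with hlam
  have hlam01 : ∀ n ∈ J, 0 ≤ lam n ∧ lam n ≤ 1 := by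
    intro n hn
    by_cases hb : b n = 0
    · simp [hlam, hb]
    · simp only [hlam, hb, if_false]
      by_cases ha0 : a n = 0
      · simp [ha0]
      · have hprod : a n * b n ≠ 0 := mul_ne_zero ha0 hb
        have hs := hsgn n hn hprod
        have habn := hab n hn
        have hpos : 0 < a n / b n := by
          rcases lt_or_gt_of_ne ha0 with h | h
          · have hb' : b n < 0 := by
              by_contra hb'
              push_neg at hb'
              have hb'' : 0 < b n := lt_of_le_of_ne hb' (Ne.symm hb)
              rw [Real.sign_of_neg h, Real.sign_of_pos hb''] at hs
              norm_num at hs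
            exact div_pos_of_neg_of_neg h hb'
          · have hb' : 0 < b n := by
              by_contra hb'
              push_neg at hb'
              have hb'' : b n < 0 := lt_of_le_of_ne hb' hb
              rw [Real.sign_of_pos h, Real.sign_of_neg hb''] at hs
              norm_num at hs
            exact div_pos h hb'
        refine ⟨le_of_lt hpos, ?_⟩
        rw [div_le_one_iff]
        rcases lt_or_gt_of_ne hb with h | h
        · right; right
          constructor
          · exact h
          · have := habn
            rw [abs_of_neg h] at this
            have ha' : a n < 0 := by
              by_contra ha'
              push_neg at ha'
              have : 0 < a n := lt_of_le_of_ne ha' (Ne.symm ha0)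
              rw [Real.sign_of_pos this, Real.sign_of_neg h] at hs
              norm_num at hs
            rw [abs_of_neg ha'] at this
            linarith
        · left
          constructor
          · exact h
          · have := habn
            rw [abs_of_pos h] at this
            exact le_trans (le_abs_self _) this
  have hlab : ∀ n ∈ J, a n = lam n * b n := by
    intro n hn
    by_cases hb : b n = 0
    · have := hab n hn
      rw [hb, abs_zero] at this
      have : a n = 0 := abs_nonpos_iff.mp this
      simp [hlam, hb, this]
    · simp [hlam, hb, div_mul_cancel₀ _ hb]
  -- f n y = b n for n ∈ J
  have hfy : ∀ n ∈ J, f n y = b n := by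
    intro n hn
    rw [hy]
    rw [map_add, hx n hn, zero_add, map_sum]
    have : ∀ k ∈ J, f n (b k • e k) = if n = k then b k else 0 := by
      intro k _
      rw [map_smul, hbi n k]
      by_cases h : n = k <;> simp [h]
    rw [Finset.sum_congr rfl this, Finset.sum_ite_eq J n b, if_pos hn]
  set J' : Finset ℕ := J.erase j with hJ'
  set s : ℕ → ℝ := fun n => 1 - lam n with hs
  set w : Finset ℕ → ℝ := fun A => (∏ n ∈ A, s n) * ∏ n ∈ J' \ A, lam n with hw
  have h1 : ∀ n ∈ J', s n + lam n = 1 := by intro n _; simp [hs]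
  have hwsum : ∑ A ∈ J'.powerset, w A = 1 := weight_sum s lam J' h1
  have hwnn : ∀ A ∈ J'.powerset, 0 ≤ w A := by
    intro A hA
    have hAJ := Finset.mem_powerset.mp hA
    apply mul_nonneg
    · apply Finset.prod_nonneg
      intro n hn
      have := hlam01 n (Finset.mem_of_mem_erase (hAJ hn))
      simp [hs]; linarith [this.2]
    · apply Finset.prod_nonneg
      intro n hn
      exact (hlam01 n (Finset.mem_of_mem_erase (Finset.mem_sdiff.mp hn).1)).1
  -- the convex combination identity
  have hkey : x + ∑ n ∈ J, a n • e n
      = ∑ A ∈ J'.powerset, w A • (y - ∑ n ∈ A, f n y • e n) := by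
    have hAv : ∀ A ∈ J'.powerset,
        w A • (y - ∑ n ∈ A, f n y • e n) = w A • (y - ∑ n ∈ A, b n • e n) := by
      intro A hA
      have hAJ := Finset.mem_powerset.mp hA
      congr 1
      congr 1
      apply Finset.sum_congr rfl
      intro n hn
      rw [hfy n (Finset.mem_of_mem_erase (hAJ hn))]
    rw [Finset.sum_congr rfl hAv]
    have : ∀ A ∈ J'.powerset, w A • (y - ∑ n ∈ A, b n • e n)
        = w A • y - w A • (∑ n ∈ A, b n • e n) := fun A _ => smul_sub _ _ _
    rw [Finset.sum_congr rfl this, Finset.sum_sub_distrib, ← Finset.sum_smul, hwsum,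
      one_smul]
    have hk2 := key_sum s lam (fun n => b n • e n) J' h1
    rw [hw]
    rw [hk2]
    -- now: x + ∑ a = y - ∑_{n∈J'} s n • (b n • e n)
    have hyJ : y = x + b j • e j + ∑ n ∈ J', b n • e n := by
      rw [hy, hJ', add_assoc, Finset.add_sum_erase J (fun n => b n • e n) hjJ]
    rw [hyJ]
    have haJ : ∑ n ∈ J, a n • e n = a j • e j + ∑ n ∈ J', a n • e n := by
      rw [hJ', Finset.add_sum_erase J (fun n => a n • e n) hjJ]
    rw [haJ, hjab]
    have : ∑ n ∈ J', b n • e n - ∑ n ∈ J', s n • b n • e n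
        = ∑ n ∈ J', a n • e n := by
      rw [← Finset.sum_sub_distrib]
      apply Finset.sum_congr rfl
      intro n hn
      rw [hlab n (Finset.mem_of_mem_erase hn), smul_smul, ← sub_smul]
      congr 1
      simp only [hs]
      ring
    rw [add_assoc, ← this]
    abel
  rw [hkey]
  -- norm estimate
  have hcard : ∀ A ∈ J'.powerset, A.card ≤ m - 1 := by
    intro A hA
    have hAJ := Finset.mem_powerset.mp hA
    calc A.card ≤ J'.card := Finset.card_le_card hAJ
      _ = J.card - 1 := Finset.card_erase_of_mem hjJ
      _ ≤ m - 1 := Nat.sub_le_sub_right hJ 1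
  calc ‖∑ A ∈ J'.powerset, w A • (y - ∑ n ∈ A, f n y • e n)‖
      ≤ ∑ A ∈ J'.powerset, ‖w A • (y - ∑ n ∈ A, f n y • e n)‖ :=
        norm_sum_le _ _
    _ ≤ ∑ A ∈ J'.powerset, w A * (kc * ‖y‖) := by
        apply Finset.sum_le_sum
        intro A hA
        rw [norm_smul, Real.norm_eq_abs, abs_of_nonneg (hwnn A hA)]
        exact mul_le_mul_of_nonneg_left (hkc A (hcard A hA) y) (hwnn A hA)
    _ = kc * ‖y‖ := by rw [← Finset.sum_mul, hwsum, one_mul]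
end

section
/- Let X be a Banach space with Markushevich basis (e_n), let τ ∈ (0,1], m ∈ ℕ, and α ≥ 0. Define g_{m,τ}^c = sup{‖x − P_Λ(x)‖/‖x‖ : x ∈ X, Λ a τ-weak greedy set of x with |Λ| ≤ m}, where Λ is τ-weak greedy for x if min_{n∈Λ}|e_n^*(x)| ≥ τ · max_{n∉Λ}|e_n^*(x)|. Then for any x ∈ X with ‖x‖_∞ := sup_n |e_n^*(x)| ≤ α/τ, any finite A ⊂ ℕ with |A| ≤ m and A ∩ supp(x) = ∅, any signs (ε_n)_{n∈A} with |ε_n| = 1, and any real scalars (a_n)_{n∈A} with a_n ≥ α, one has ‖x + α ∑_{n∈A} ε_n e_n‖ ≤ g_{m,τ}^c ‖x + ∑_{n∈A} ε_n a_n e_n‖. -/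
private lemma coord
    {X : Type*} [NormedAddCommGroup X] [NormedSpace ℝ X]
    {e : ℕ → X} {f : ℕ → X →L[ℝ] ℝ}
    (hbi : ∀ i j, f i (e j) = if i = j then (1 : ℝ) else 0)
    (n : ℕ) (A : Finset ℕ) (c : ℕ → ℝ) :
    f n (∑ k ∈ A, c k • e k) = if n ∈ A then c n else 0 := by
  rw [map_sum]
  simp only [map_smul, hbi, smul_eq_mul, mul_ite, mul_one, mul_zero,
    Finset.sum_ite_eq]

private lemma key
    {X : Type*} [NormedAddCommGroup X] [NormedSpace ℝ X]
    (e : ℕ → X) (f : ℕ → X →L[ℝ] ℝ)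
    (hbi : ∀ i j, f i (e j) = if i = j then (1 : ℝ) else 0)
    (τ : ℝ) (hτ : 0 < τ) (hτ1 : τ ≤ 1)
    (m : ℕ) (g : ℝ)
    (hg : ∀ (x : X) (Λ : Finset ℕ), Λ.card ≤ m →
      (∀ i ∈ Λ, ∀ j ∉ Λ, τ * |f j x| ≤ |f i x|) →
      ‖x - ∑ n ∈ Λ, f n x • e n‖ ≤ g * ‖x‖)
    (ε : ℕ → ℝ)
    (d : ℕ) :
    ∀ (α : ℝ), 0 ≤ α → ∀ (x : X), (∀ n, |f n x| ≤ α / τ) →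
      ∀ (A : Finset ℕ), A.card ≤ m → (∀ n ∈ A, f n x = 0) →
      (∀ n ∈ A, |ε n| = 1) →
      ∀ (a : ℕ → ℝ), (∀ n ∈ A, α ≤ a n) →
      (A.filter (fun n => α < a n)).card ≤ d →
      ‖x + α • ∑ n ∈ A, ε n • e n‖ ≤ g * ‖x + ∑ n ∈ A, (ε n * a n) • e n‖ := by
  induction d with
  | zero =>
    intro α hα x hxinf A hA hAx hε a ha hcard
    -- all a n = α on A
    have hall : ∀ n ∈ A, a n = α := by
      intro n hn
      by_contra h
      have hlt : α < a n := lt_of_le_of_ne (ha n hn) (Ne.symm h)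
      have : n ∈ A.filter (fun n => α < a n) := Finset.mem_filter.mpr ⟨hn, hlt⟩
      have := Finset.card_pos.mpr ⟨n, this⟩
      omega
    have heq : x + α • ∑ n ∈ A, ε n • e n = x + ∑ n ∈ A, (ε n * a n) • e n := by
      congr 1
      rw [Finset.smul_sum]
      refine Finset.sum_congr rfl (fun n hn => ?_)
      rw [smul_smul, hall n hn, mul_comm]
    rw [heq]
    have := hg (x + ∑ n ∈ A, (ε n * a n) • e n) ∅ (by simp) (by simp)
    simpa using this
  | succ d ih =>
    intro α hα x hxinf A hA hAx hε a ha hcard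
    set D := A.filter (fun n => α < a n) with hD
    by_cases hDne : D = ∅
    · -- same as base case
      have hall : ∀ n ∈ A, a n = α := by
        intro n hn
        by_contra h
        have hlt : α < a n := lt_of_le_of_ne (ha n hn) (Ne.symm h)
        have : n ∈ D := Finset.mem_filter.mpr ⟨hn, hlt⟩
        simp [hDne] at this
      have heq : x + α • ∑ n ∈ A, ε n • e n = x + ∑ n ∈ A, (ε n * a n) • e n := by
        congr 1
        rw [Finset.smul_sum]
        refine Finset.sum_congr rfl (fun n hn => ?_)
        rw [smul_smul, hall n hn, mul_comm]
      rw [heq]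
      have := hg (x + ∑ n ∈ A, (ε n * a n) • e n) ∅ (by simp) (by simp)
      simpa using this
    · have hDsub : D ⊆ A := Finset.filter_subset _ _
      obtain ⟨n₀, hn₀D, hmin⟩ := Finset.exists_min_image D a
        (Finset.nonempty_of_ne_empty hDne)
      set β := a n₀ with hβdef
      have hαβ : α < β := (Finset.mem_filter.mp hn₀D).2
      have hβpos : 0 < β := lt_of_le_of_lt hα hαβ
      set C := A.filter (fun n => ¬ α < a n) with hC
      have hCsub : C ⊆ A := Finset.filter_subset _ _
      have hCval : ∀ n ∈ C, a n = α := by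
        intro n hn
        have := Finset.mem_filter.mp hn
        exact le_antisymm (not_lt.mp this.2) (ha n this.1)
      have hsplit : ∀ (c : ℕ → ℝ),
          ∑ n ∈ A, c n • e n = ∑ n ∈ C, c n • e n + ∑ n ∈ D, c n • e n := by
        intro c
        rw [add_comm, Finset.sum_filter_add_sum_filter_not]
      set y := x + ∑ n ∈ A, (ε n * a n) • e n with hy
      have hfy : ∀ n, f n y = f n x + (if n ∈ A then ε n * a n else 0) := by
        intro n
        rw [hy, map_add, coord hbi]
      have hfyA : ∀ n ∈ A, f n y = ε n * a n := by
        intro n hn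
        rw [hfy n, hAx n hn, if_pos hn, zero_add]
      have hfyN : ∀ n ∉ A, f n y = f n x := by
        intro n hn
        rw [hfy n, if_neg hn, add_zero]
      have habs : ∀ n ∈ A, |f n y| = a n := by
        intro n hn
        rw [hfyA n hn, abs_mul, hε n hn, one_mul,
          abs_of_nonneg (le_trans hα (ha n hn))]
      -- D is a τ-greedy set of y
      have hgreedy : ∀ i ∈ D, ∀ j ∉ D, τ * |f j y| ≤ |f i y| := by
        intro i hi j hj
        have hiA : i ∈ A := hDsub hi
        have hβai : β ≤ a i := hmin i hi
        rw [habs i hiA]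
        by_cases hjA : j ∈ A
        · have hjC : j ∈ C := Finset.mem_filter.mpr
            ⟨hjA, fun h => hj (Finset.mem_filter.mpr ⟨hjA, h⟩)⟩
          rw [habs j hjA, hCval j hjC]
          calc τ * α ≤ 1 * α := by nlinarith
            _ = α := one_mul α
            _ ≤ a i := ha i hiA
        · rw [hfyN j hjA]
          calc τ * |f j x| ≤ τ * (α / τ) := by
                have := hxinf j
                nlinarith
            _ = α := mul_div_cancel₀ α hτ.ne'
            _ ≤ a i := ha i hiA
      have hcardD : D.card ≤ m := le_trans (Finset.card_le_card hDsub) hA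
      -- bound 1 : ‖u‖ ≤ g ‖y‖ where u = x + α • ∑_{C} ε • e
      set u := x + α • ∑ n ∈ C, ε n • e n with hu
      have hueq : y - ∑ n ∈ D, f n y • e n = u := by
        rw [hy, hu]
        have h1 : ∑ n ∈ D, f n y • e n = ∑ n ∈ D, (ε n * a n) • e n :=
          Finset.sum_congr rfl (fun n hn => by rw [hfyA n (hDsub hn)])
        rw [h1, hsplit (fun n => ε n * a n)]
        have h2 : ∑ n ∈ C, (ε n * a n) • e n = α • ∑ n ∈ C, ε n • e n := by
          rw [Finset.smul_sum]
          refine Finset.sum_congr rfl (fun n hn => ?_)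
          rw [smul_smul, hCval n hn, mul_comm]
        rw [h2]; abel
      have hubound : ‖u‖ ≤ g * ‖y‖ := by
        rw [← hueq]; exact hg y D hcardD hgreedy
      -- bound 2 : ‖w‖ ≤ g ‖y‖ where w = u + β • ∑_{D} ε • e, via ih
      have hfu : ∀ n, f n u = f n x + (if n ∈ C then ε n * α else 0) := by
        intro n
        rw [hu, map_add, map_smul, smul_eq_mul, coord hbi n C ε]
        split <;> ring
      have hfuD : ∀ n ∈ D, f n u = 0 := by
        intro n hn
        have hnC : n ∉ C := by
          intro h
          exact (Finset.mem_filter.mp h).2 (Finset.mem_filter.mp hn).2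
        rw [hfu n, if_neg hnC, hAx n (hDsub hn), add_zero]
      have hfubd : ∀ n, |f n u| ≤ β / τ := by
        intro n
        rw [hfu n]
        by_cases hnC : n ∈ C
        · rw [hAx n (hCsub hnC), zero_add, if_pos hnC, abs_mul,
            hε n (hCsub hnC), one_mul, abs_of_nonneg hα]
          rw [le_div_iff₀ hτ]
          nlinarith
        · rw [if_neg hnC, add_zero]
          calc |f n x| ≤ α / τ := hxinf n
            _ ≤ β / τ := by
              have := hαβ.le
              gcongr
      have hDfilter : (D.filter (fun n => β < a n)).card ≤ d := by
        have hss : D.filter (fun n => β < a n) ⊂ D := by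
          refine (Finset.ssubset_iff_of_subset (Finset.filter_subset _ _)).mpr ?_
          refine ⟨n₀, hn₀D, ?_⟩
          simp only [Finset.mem_filter]
          exact fun h => lt_irrefl _ h.2
        have := Finset.card_lt_card hss
        omega
      have hCsum : ∑ n ∈ C, (ε n * a n) • e n = α • ∑ n ∈ C, ε n • e n := by
        rw [Finset.smul_sum]
        refine Finset.sum_congr rfl (fun n hn => ?_)
        rw [smul_smul, hCval n hn, mul_comm]
      have hyeq : u + ∑ n ∈ D, (ε n * a n) • e n = y := by
        rw [hu, hy, hsplit (fun n => ε n * a n), hCsum]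
        abel
      have hwbound : ‖u + β • ∑ n ∈ D, ε n • e n‖ ≤ g * ‖y‖ := by
        have := ih β hβpos.le u hfubd D hcardD hfuD
          (fun n hn => hε n (hDsub hn)) a hmin hDfilter
        rwa [hyeq] at this
      set s := α / β with hsdef
      have hs0 : 0 ≤ s := div_nonneg hα hβpos.le
      have hs1 : s ≤ 1 := (div_le_one hβpos).mpr hαβ.le
      have hsb : s * β = α := div_mul_cancel₀ α hβpos.ne'
      have hvconv : x + α • ∑ n ∈ A, ε n • e n
          = (1 - s) • u + s • (u + β • ∑ n ∈ D, ε n • e n) := by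
        rw [hsplit ε, hu]
        match_scalars
        · ring
        · ring
        · linear_combination -hsb
      rw [hvconv]
      calc ‖(1 - s) • u + s • (u + β • ∑ n ∈ D, ε n • e n)‖
          ≤ ‖(1 - s) • u‖ + ‖s • (u + β • ∑ n ∈ D, ε n • e n)‖ := norm_add_le _ _
        _ = (1 - s) * ‖u‖ + s * ‖u + β • ∑ n ∈ D, ε n • e n‖ := by
            rw [norm_smul, norm_smul, Real.norm_eq_abs, Real.norm_eq_abs,
              abs_of_nonneg (by linarith), abs_of_nonneg hs0]
        _ ≤ (1 - s) * (g * ‖y‖) + s * (g * ‖y‖) := by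
            exact add_le_add (mul_le_mul_of_nonneg_left hubound (by linarith))
              (mul_le_mul_of_nonneg_left hwbound hs0)
        _ = g * ‖y‖ := by ring

/-- Proposition 2.4 (first part): the truncation-type estimate with the
weak quasi-greedy constant `g_{m,τ}^c`. -/
theorem stmt_2
    {X : Type*} [NormedAddCommGroup X] [NormedSpace ℝ X] [CompleteSpace X]
    (e : ℕ → X) (f : ℕ → X →L[ℝ] ℝ)
    (hbi : ∀ i j, f i (e j) = if i = j then (1 : ℝ) else 0)
    (htotal : ∀ x : X, (∀ n, f n x = 0) → x = 0)
    (hdense : Dense (Submodule.span ℝ (Set.range e) : Set X))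
    (τ : ℝ) (hτ : 0 < τ) (hτ1 : τ ≤ 1)
    (m : ℕ) (α : ℝ) (hα : 0 ≤ α)
    (g : ℝ)
    (hg : ∀ (x : X) (Λ : Finset ℕ), Λ.card ≤ m →
      (∀ i ∈ Λ, ∀ j ∉ Λ, τ * |f j x| ≤ |f i x|) →
      ‖x - ∑ n ∈ Λ, f n x • e n‖ ≤ g * ‖x‖)
    (x : X) (hxinf : ∀ n, |f n x| ≤ α / τ)
    (A : Finset ℕ) (hA : A.card ≤ m) (hAx : ∀ n ∈ A, f n x = 0)
    (ε : ℕ → ℝ) (hε : ∀ n ∈ A, |ε n| = 1)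
    (a : ℕ → ℝ) (ha : ∀ n ∈ A, α ≤ a n) :
    ‖x + α • ∑ n ∈ A, ε n • e n‖ ≤ g * ‖x + ∑ n ∈ A, (ε n * a n) • e n‖ :=
  key e f hbi τ hτ hτ1 m g hg ε (A.filter (fun n => α < a n)).card
    α hα x hxinf A hA hAx hε a ha le_rfl
end

section
/- Let X be a Banach space with Markushevich basis (e_n) and let C_ℓ ≥ 1 be such that ‖x − P_Λ(x)‖ ≤ C_ℓ ‖x‖ for every x ∈ X and every greedy set Λ of x (a finite set with min_{n∈Λ}|e_n^*(x)| ≥ max_{n∉Λ}|e_n^*(x)|). For α > 0 define the truncation operator T_α(x) = α ∑_{n∈Γ_α(x)} sgn(e_n^*(x)) e_n + ∑_{n∉Γ_α(x)} e_n^*(x) e_n, where Γ_α(x) = {n : |e_n^*(x)| > α}. Then ‖T_α(x)‖ ≤ C_ℓ ‖x‖ for all x ∈ X with finitely supported coefficient sequence above level α. -/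
private lemma sign_mul_abs_eq (r : ℝ) : Real.sign r * |r| = r := by
  rcases lt_trichotomy r 0 with h | h | h
  · rw [Real.sign_of_neg h, abs_of_neg h]; ring
  · simp [h]
  · rw [Real.sign_of_pos h, abs_of_pos h]; ring


/-- The truncation operator is bounded by the suppression quasi-greedy
constant: `‖T_α x‖ ≤ C_ℓ ‖x‖`. -/
theorem stmt_3
    {X : Type*} [NormedAddCommGroup X] [NormedSpace ℝ X] [CompleteSpace X]
    (e : ℕ → X) (f : ℕ → X →L[ℝ] ℝ)
    (hbi : ∀ i j, f i (e j) = if i = j then (1 : ℝ) else 0)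
    (htotal : ∀ x : X, (∀ n, f n x = 0) → x = 0)
    (hdense : Dense (Submodule.span ℝ (Set.range e) : Set X))
    (Cl : ℝ) (hCl1 : 1 ≤ Cl)
    (hCl : ∀ (x : X) (Λ : Finset ℕ),
      (∀ i ∈ Λ, ∀ j ∉ Λ, |f j x| ≤ |f i x|) →
      ‖x - ∑ n ∈ Λ, f n x • e n‖ ≤ Cl * ‖x‖)
    (α : ℝ) (hα : 0 < α) (x : X)
    (Γ : Finset ℕ) (hΓ : ∀ n, n ∈ Γ ↔ α < |f n x|) :
    ‖α • ∑ n ∈ Γ, Real.sign (f n x) • e n + (x - ∑ n ∈ Γ, f n x • e n)‖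
      ≤ Cl * ‖x‖ := by
  have main : ∀ (Γ : Finset ℕ) (α : ℝ), 0 < α → (∀ n, n ∈ Γ ↔ α < |f n x|) →
      ‖α • ∑ n ∈ Γ, Real.sign (f n x) • e n + (x - ∑ n ∈ Γ, f n x • e n)‖
        ≤ Cl * ‖x‖ := by
    intro Γ
    induction Γ using Finset.strongInduction with
    | _ Γ IH =>
      intro α hα hΓ
      by_cases hΓe : Γ = ∅
      · subst hΓe
        simp only [Finset.sum_empty, smul_zero, zero_add, sub_zero]
        nlinarith [norm_nonneg x]
      · have hne : Γ.Nonempty := Finset.nonempty_iff_ne_empty.mpr hΓe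
        set β := Γ.inf' hne (fun n => |f n x|) with hβdef
        have hαβ : α < β := by
          rw [hβdef, Finset.lt_inf'_iff]
          intro n hn; exact (hΓ n).mp hn
        have hβpos : 0 < β := hα.trans hαβ
        have hβ0 : β ≠ 0 := ne_of_gt hβpos
        set Γ' := Γ.filter (fun n => β < |f n x|) with hΓ'def
        have hΓ'sub : Γ' ⊂ Γ := by
          obtain ⟨i, hiΓ, hi⟩ := Finset.exists_mem_eq_inf' hne (fun n => |f n x|)
          refine Finset.filter_ssubset.mpr ⟨i, hiΓ, ?_⟩
          rw [← hβdef] at hi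
          simp [← hi]
        have hΓ'mem : ∀ n, n ∈ Γ' ↔ β < |f n x| := by
          intro n
          constructor
          · intro h; exact (Finset.mem_filter.mp h).2
          · intro h; exact Finset.mem_filter.mpr ⟨(hΓ n).mpr (hαβ.trans h), h⟩
        have IH' := IH Γ' hΓ'sub β hβpos hΓ'mem
        have hgreedy : ‖x - ∑ n ∈ Γ, f n x • e n‖ ≤ Cl * ‖x‖ := by
          refine hCl x Γ ?_
          intro i hi j hj
          have h1 : |f j x| ≤ α := le_of_not_gt (fun h => hj ((hΓ j).mpr h))
          exact h1.trans (le_of_lt ((hΓ i).mp hi))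
        -- split sums over Γ into Γ' and the rest
        set D := Γ.filter (fun n => ¬ β < |f n x|) with hDdef
        have hS1 : ∑ n ∈ Γ, Real.sign (f n x) • e n
            = ∑ n ∈ Γ', Real.sign (f n x) • e n + ∑ n ∈ D, Real.sign (f n x) • e n :=
          (Finset.sum_filter_add_sum_filter_not Γ _ _).symm
        have hPD : ∑ n ∈ D, f n x • e n = β • ∑ n ∈ D, Real.sign (f n x) • e n := by
          rw [Finset.smul_sum]
          refine Finset.sum_congr rfl ?_
          intro n hn
          obtain ⟨hnΓ, hnb⟩ := Finset.mem_filter.mp hn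
          have habs : |f n x| = β :=
            le_antisymm (not_lt.mp hnb) (Finset.inf'_le _ hnΓ)
          rw [smul_smul]
          congr 1
          rw [← habs, mul_comm]
          exact (sign_mul_abs_eq _).symm
        have hP : ∑ n ∈ Γ, f n x • e n
            = ∑ n ∈ Γ', f n x • e n + β • ∑ n ∈ D, Real.sign (f n x) • e n := by
          rw [← hPD]
          exact (Finset.sum_filter_add_sum_filter_not Γ _ _).symm
        have key : α • ∑ n ∈ Γ, Real.sign (f n x) • e n + (x - ∑ n ∈ Γ, f n x • e n)
            = (α / β) • (β • ∑ n ∈ Γ', Real.sign (f n x) • e n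
                + (x - ∑ n ∈ Γ', f n x • e n))
              + (1 - α / β) • (x - ∑ n ∈ Γ, f n x • e n) := by
          rw [hS1, hP]
          match_scalars <;> field_simp <;> ring
        rw [key]
        have hl0 : 0 ≤ α / β := le_of_lt (div_pos hα hβpos)
        have hl1 : α / β ≤ 1 := (div_le_one hβpos).mpr (le_of_lt hαβ)
        calc ‖(α / β) • (β • ∑ n ∈ Γ', Real.sign (f n x) • e n
                + (x - ∑ n ∈ Γ', f n x • e n))
              + (1 - α / β) • (x - ∑ n ∈ Γ, f n x • e n)‖
            ≤ ‖(α / β) • (β • ∑ n ∈ Γ', Real.sign (f n x) • e n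
                + (x - ∑ n ∈ Γ', f n x • e n))‖
              + ‖(1 - α / β) • (x - ∑ n ∈ Γ, f n x • e n)‖ := norm_add_le _ _
          _ = (α / β) * ‖β • ∑ n ∈ Γ', Real.sign (f n x) • e n
                + (x - ∑ n ∈ Γ', f n x • e n)‖
              + (1 - α / β) * ‖x - ∑ n ∈ Γ, f n x • e n‖ := by
              rw [norm_smul, norm_smul, Real.norm_eq_abs, Real.norm_eq_abs,
                abs_of_nonneg hl0, abs_of_nonneg (by linarith)]
          _ ≤ (α / β) * (Cl * ‖x‖) + (1 - α / β) * (Cl * ‖x‖) := by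
              have := mul_le_mul_of_nonneg_left IH' hl0
              have := mul_le_mul_of_nonneg_left hgreedy (by linarith : (0:ℝ) ≤ 1 - α / β)
              linarith
          _ = Cl * ‖x‖ := by ring
  exact main Γ α hα hΓ
end

section
/- Fix τ ∈ (0,1] and m ∈ ℕ. Define ν_{m,τ} = sup{‖τx + 1_{δB}‖/‖x + 1_{εA}‖} over all x ∈ X with ‖x‖_∞ ≤ 1/τ, finite sets A, B with |A| = |B| ≤ m and A, B, supp(x) pairwise disjoint, and all signs (ε), (δ). Define Ω_{m,τ} = sup{‖x‖/‖x − P_B(x) + t·1_{εA}‖} over all t > 0, x ∈ X with ‖x‖_∞ ≤ t/τ, finite sets A, B with |A| = |B| ≤ m, (supp(x) ∪ B) ∩ A = ∅, and signs (ε). Then Ω_{m,τ} = ν_{m,τ}/τ. -/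
/-- Evaluation of a biorthogonal functional on a finite linear combination. -/
lemma aux_fsum {X : Type*} [NormedAddCommGroup X] [NormedSpace ℝ X]
    (e : ℕ → X) (f : ℕ → X →L[ℝ] ℝ)
    (hbi : ∀ i j, f i (e j) = if i = j then (1 : ℝ) else 0)
    (g : ℕ → ℝ) (B : Finset ℕ) (n : ℕ) :
    f n (∑ k ∈ B, g k • e k) = if n ∈ B then g n else 0 := by
  rw [map_sum]
  simp only [map_smul, hbi, smul_eq_mul, mul_ite, mul_one, mul_zero]
  exact Finset.sum_ite_eq B n g

/-- Convexity: replacing a coefficient by an extreme one does not decrease some norm. -/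
lemma aux_convex {X : Type*} [NormedAddCommGroup X] [NormedSpace ℝ X]
    (w u : X) (c r : ℝ) (h : |c| ≤ r) :
    ‖w + c • u‖ ≤ max ‖w + r • u‖ ‖w - r • u‖ := by
  rcases eq_or_lt_of_le (le_trans (abs_nonneg c) h) with hr | hr
  · have hc : c = 0 := abs_eq_zero.mp (le_antisymm (le_trans h hr.symm.le) (abs_nonneg c))
    rw [hc, ← hr]
    simp
  · set a : ℝ := (r + c) / (2 * r) with ha
    have ha0 : 0 ≤ a := by
      apply div_nonneg _ (by linarith)
      have := neg_abs_le c
      linarith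
    have ha1 : a ≤ 1 := by
      rw [div_le_one (by linarith)]
      have := le_abs_self c
      linarith
    have hca : a * r - (1 - a) * r = c := by
      have h2 : a * (2 * r) = r + c := by
        rw [ha]; exact div_mul_cancel₀ _ (by positivity)
      linear_combination h2
    have hkey : w + c • u = a • (w + r • u) + (1 - a) • (w - r • u) := by
      rw [← hca]
      module
    rw [hkey]
    have hM1 : ‖w + r • u‖ ≤ max ‖w + r • u‖ ‖w - r • u‖ := le_max_left _ _
    have hM2 : ‖w - r • u‖ ≤ max ‖w + r • u‖ ‖w - r • u‖ := le_max_right _ _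
    calc ‖a • (w + r • u) + (1 - a) • (w - r • u)‖
        ≤ ‖a • (w + r • u)‖ + ‖(1 - a) • (w - r • u)‖ := norm_add_le _ _
      _ = a * ‖w + r • u‖ + (1 - a) * ‖w - r • u‖ := by
          rw [norm_smul, norm_smul, Real.norm_of_nonneg ha0,
            Real.norm_of_nonneg (by linarith)]
      _ ≤ max ‖w + r • u‖ ‖w - r • u‖ := by
          nlinarith [mul_le_mul_of_nonneg_left hM1 ha0,
            mul_le_mul_of_nonneg_left hM2 (by linarith : (0:ℝ) ≤ 1 - a)]

/-- Sign extremization: a linear combination with small coefficients is dominated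
by some sign combination. -/
lemma aux_signs {X : Type*} [NormedAddCommGroup X] [NormedSpace ℝ X]
    (e : ℕ → X) (r : ℝ) (c : ℕ → ℝ) (B : Finset ℕ) :
    ∀ (v : X), (∀ n ∈ B, |c n| ≤ r) →
      ∃ δ : ℕ → ℝ, (∀ n ∈ B, |δ n| = 1) ∧
        ‖v + ∑ n ∈ B, c n • e n‖ ≤ ‖v + r • ∑ n ∈ B, δ n • e n‖ := by
  classical
  induction B using Finset.induction_on with
  | empty =>
      intro v _
      exact ⟨fun _ => 1, by simp, by simp⟩
  | @insert a B haB ih =>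
      intro v hc
      obtain ⟨δ, hδ1, hδ2⟩ := ih (v + c a • e a) (fun n hn => hc n (Finset.mem_insert_of_mem hn))
      set w := v + r • ∑ n ∈ B, δ n • e n with hw
      have hstep : ‖v + ∑ n ∈ insert a B, c n • e n‖ ≤ max ‖w + r • e a‖ ‖w - r • e a‖ := by
        calc ‖v + ∑ n ∈ insert a B, c n • e n‖
            = ‖(v + c a • e a) + ∑ n ∈ B, c n • e n‖ := by
              rw [Finset.sum_insert haB, ← add_assoc]
          _ ≤ ‖(v + c a • e a) + r • ∑ n ∈ B, δ n • e n‖ := hδ2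
          _ = ‖w + c a • e a‖ := by rw [hw]; congr 1; abel
          _ ≤ max ‖w + r • e a‖ ‖w - r • e a‖ :=
              aux_convex w (e a) (c a) r (hc a (Finset.mem_insert_self a B))
      rcases max_cases ‖w + r • e a‖ ‖w - r • e a‖ with ⟨hmax, _⟩ | ⟨hmax, _⟩
      · refine ⟨Function.update δ a 1, ?_, ?_⟩
        · intro n hn
          rcases Finset.mem_insert.mp hn with rfl | hn
          · simp
          · rw [Function.update_of_ne (ne_of_mem_of_not_mem hn haB)]
            exact hδ1 n hn
        · rw [hmax] at hstep
          refine le_trans hstep (le_of_eq ?_)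
          have hs : ∑ n ∈ B, Function.update δ a 1 n • e n = ∑ n ∈ B, δ n • e n :=
            Finset.sum_congr rfl fun n hn => by
              rw [Function.update_of_ne (ne_of_mem_of_not_mem hn haB)]
          rw [Finset.sum_insert haB, Function.update_self, hs, hw]
          congr 1
          module
      · refine ⟨Function.update δ a (-1), ?_, ?_⟩
        · intro n hn
          rcases Finset.mem_insert.mp hn with rfl | hn
          · simp
          · rw [Function.update_of_ne (ne_of_mem_of_not_mem hn haB)]
            exact hδ1 n hn
        · rw [hmax] at hstep
          refine le_trans hstep (le_of_eq ?_)
          have hs : ∑ n ∈ B, Function.update δ a (-1) n • e n = ∑ n ∈ B, δ n • e n :=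
            Finset.sum_congr rfl fun n hn => by
              rw [Function.update_of_ne (ne_of_mem_of_not_mem hn haB)]
          rw [Finset.sum_insert haB, Function.update_self, hs, hw]
          congr 1
          module

/-- Lemma 2.2: `Ω_{m,τ} = ν_{m,τ}/τ`, expressed by the equivalence of the
corresponding upper-bound properties (`Ω_{m,τ} ≤ C ↔ ν_{m,τ} ≤ τ·C`). -/
theorem stmt_4
    {X : Type*} [NormedAddCommGroup X] [NormedSpace ℝ X] [CompleteSpace X]
    (e : ℕ → X) (f : ℕ → X →L[ℝ] ℝ)
    (hbi : ∀ i j, f i (e j) = if i = j then (1 : ℝ) else 0)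
    (htotal : ∀ x : X, (∀ n, f n x = 0) → x = 0)
    (hdense : Dense (Submodule.span ℝ (Set.range e) : Set X))
    (τ : ℝ) (hτ : 0 < τ) (hτ1 : τ ≤ 1) (m : ℕ)
    (C : ℝ) (hC : 0 < C) :
    (∀ (t : ℝ), 0 < t → ∀ (x : X), (∀ n, |f n x| ≤ t / τ) →
      ∀ (A B : Finset ℕ), A.card = B.card → B.card ≤ m →
      (∀ n ∈ A, f n x = 0) → Disjoint A B →
      ∀ ε : ℕ → ℝ, (∀ n ∈ A, |ε n| = 1) →
      ‖x‖ ≤ C * ‖x - ∑ n ∈ B, f n x • e n + t • ∑ n ∈ A, ε n • e n‖)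
    ↔
    (∀ (x : X), (∀ n, |f n x| ≤ 1 / τ) →
      ∀ (A B : Finset ℕ), A.card = B.card → B.card ≤ m →
      (∀ n ∈ A, f n x = 0) → (∀ n ∈ B, f n x = 0) → Disjoint A B →
      ∀ ε δ : ℕ → ℝ, (∀ n ∈ A, |ε n| = 1) → (∀ n ∈ B, |δ n| = 1) →
      ‖τ • x + ∑ n ∈ B, δ n • e n‖ ≤ (τ * C) * ‖x + ∑ n ∈ A, ε n • e n‖) := by
  constructor
  · -- Ω bound → ν bound
    intro hΩ x hx A B hcard hm hA0 hB0 hdisj ε δ hε hδ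
    set y : X := τ • x + ∑ n ∈ B, δ n • e n with hy
    have hfy : ∀ n, f n y = τ * f n x + (if n ∈ B then δ n else 0) := by
      intro n
      rw [hy, map_add, map_smul, aux_fsum e f hbi δ B n, smul_eq_mul]
    have hττ : τ / τ = 1 := div_self hτ.ne'
    have h1 := hΩ τ hτ y ?_ A B hcard hm ?_ hdisj ε hε
    · have hsum : ∑ n ∈ B, f n y • e n = ∑ n ∈ B, δ n • e n :=
        Finset.sum_congr rfl fun n hn => by
          rw [hfy n, hB0 n hn, if_pos hn, mul_zero, zero_add]
      rw [hsum] at h1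
      have h2 : y - ∑ n ∈ B, δ n • e n + τ • ∑ n ∈ A, ε n • e n
          = τ • (x + ∑ n ∈ A, ε n • e n) := by
        rw [hy, smul_add]; abel
      rw [h2, norm_smul, Real.norm_of_nonneg hτ.le] at h1
      calc ‖τ • x + ∑ n ∈ B, δ n • e n‖ = ‖y‖ := by rw [hy]
        _ ≤ C * (τ * ‖x + ∑ n ∈ A, ε n • e n‖) := h1
        _ = (τ * C) * ‖x + ∑ n ∈ A, ε n • e n‖ := by ring
    · intro n
      rw [hfy n, hττ]
      by_cases hn : n ∈ B
      · rw [hB0 n hn, mul_zero, zero_add, if_pos hn]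
        exact (hδ n hn).le
      · rw [if_neg hn, add_zero, abs_mul, abs_of_pos hτ]
        calc τ * |f n x| ≤ τ * (1 / τ) :=
              mul_le_mul_of_nonneg_left (hx n) hτ.le
          _ = 1 := by field_simp
    · intro n hn
      have hnB : n ∉ B := Finset.disjoint_left.mp hdisj hn
      rw [hfy n, hA0 n hn, if_neg hnB, mul_zero, add_zero]
  · -- ν bound → Ω bound
    intro hν t ht x hx A B hcard hm hA0 hdisj ε hε
    set v : X := x - ∑ n ∈ B, f n x • e n with hv
    have hfv : ∀ n, f n v = if n ∈ B then 0 else f n x := by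
      intro n
      rw [hv, map_sub, aux_fsum e f hbi _ B n]
      split <;> simp
    set y : X := (1 / t) • v with hy
    have hfy : ∀ n, f n y = (1 / t) * f n v := by
      intro n; rw [hy, map_smul, smul_eq_mul]
    -- extremize signs on B
    obtain ⟨δ, hδ1, hδ2⟩ := aux_signs e (t / τ) (fun n => f n x) B v (fun n _ => hx n)
    have hxv : v + ∑ n ∈ B, f n x • e n = x := by rw [hv]; abel
    rw [hxv] at hδ2
    -- apply the ν bound to y
    have h2 := hν y ?_ A B hcard hm ?_ ?_ hdisj ε δ hε hδ1
    · have e1 : τ * (1 / t) = τ / t := by ring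
      have e2 : τ / t * (t / τ) = 1 := by field_simp
      have e3 : (1 : ℝ) / t * t = 1 := by field_simp
      have key1 : τ • y + ∑ n ∈ B, δ n • e n
          = (τ / t) • (v + (t / τ) • ∑ n ∈ B, δ n • e n) := by
        rw [hy, smul_smul, smul_add, smul_smul, e1, e2, one_smul]
      have key2 : y + ∑ n ∈ A, ε n • e n
          = (1 / t) • (v + t • ∑ n ∈ A, ε n • e n) := by
        rw [hy, smul_add, smul_smul, e3, one_smul]
      rw [key1, key2, norm_smul, norm_smul,
        Real.norm_of_nonneg (by positivity : (0:ℝ) ≤ τ / t),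
        Real.norm_of_nonneg (by positivity : (0:ℝ) ≤ 1 / t)] at h2
      have h3 : (τ / t) * ‖x‖ ≤ (τ / t) * (C * ‖v + t • ∑ n ∈ A, ε n • e n‖) := by
        calc (τ / t) * ‖x‖ ≤ (τ / t) * ‖v + (t / τ) • ∑ n ∈ B, δ n • e n‖ :=
              mul_le_mul_of_nonneg_left hδ2 (by positivity)
          _ ≤ τ * C * (1 / t * ‖v + t • ∑ n ∈ A, ε n • e n‖) := h2
          _ = (τ / t) * (C * ‖v + t • ∑ n ∈ A, ε n • e n‖) := by ring
      have h4 := (mul_le_mul_iff_right₀ (div_pos hτ ht)).mp h3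
      calc ‖x‖ ≤ C * ‖v + t • ∑ n ∈ A, ε n • e n‖ := h4
        _ = C * ‖x - ∑ n ∈ B, f n x • e n + t • ∑ n ∈ A, ε n • e n‖ := by rw [hv]
    · intro n
      rw [hfy n, hfv n]
      by_cases hn : n ∈ B
      · rw [if_pos hn, mul_zero, abs_zero]
        positivity
      · rw [if_neg hn, abs_mul, abs_of_pos (by positivity : (0:ℝ) < 1 / t)]
        calc 1 / t * |f n x| ≤ 1 / t * (t / τ) :=
              mul_le_mul_of_nonneg_left (hx n) (by positivity)
          _ = 1 / τ := by field_simp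
    · intro n hn
      have hnB : n ∉ B := Finset.disjoint_left.mp hdisj hn
      rw [hfy n, hfv n, if_neg hnB, hA0 n hn, mul_zero]
    · intro n hn
      rw [hfy n, hfv n, if_pos hn, mul_zero]
end

section
/- Let X be a Banach space with Markushevich basis and τ ∈ (0,1]. For m ∈ ℕ let ν_{m,τ} be the property-(A,τ) constant, k_{2m−1}^c the complemented unconditionality constant of order 2m−1, and L_{m,τ} the smallest constant such that ‖x − G‖ ≤ L_{m,τ} σ_m(x) for all x ∈ X and all τ-greedy sums G of order m of x, where σ_m(x) = inf{‖x − ∑_{n∈A} a_n e_n‖ : |A| ≤ m, scalars (a_n)}. Then L_{m,τ} ≤ k_{2m−1}^c ν_{m,τ}/τ. -/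
open Finset

lemma seg_bound {X : Type*} [NormedAddCommGroup X] [NormedSpace ℝ X]
    (v w : X) (p q r C : ℝ) (hp : p ≤ r) (hq : r ≤ q)
    (h1 : ‖v + p • w‖ ≤ C) (h2 : ‖v + q • w‖ ≤ C) :
    ‖v + r • w‖ ≤ C := by
  rcases eq_or_lt_of_le (hp.trans hq) with h | h
  · have : r = p := le_antisymm (h ▸ hq) hp
    rwa [this]
  · set t := (r - p) / (q - p) with ht
    have hqp : 0 < q - p := by linarith
    have ht0 : 0 ≤ t := div_nonneg (by linarith) hqp.le
    have ht1 : t ≤ 1 := by rw [ht, div_le_one hqp]; linarith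
    have hr : r = (1 - t) * p + t * q := by
      have htq : t * (q - p) = r - p := by rw [ht]; exact div_mul_cancel₀ _ hqp.ne'
      linarith
    have key : v + r • w = (1 - t) • (v + p • w) + t • (v + q • w) := by
      rw [hr]; module
    rw [key]
    calc ‖(1 - t) • (v + p • w) + t • (v + q • w)‖
        ≤ ‖(1 - t) • (v + p • w)‖ + ‖t • (v + q • w)‖ := norm_add_le _ _
      _ = (1 - t) * ‖v + p • w‖ + t * ‖v + q • w‖ := by
          rw [norm_smul, norm_smul, Real.norm_of_nonneg (by linarith), Real.norm_of_nonneg ht0]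
      _ ≤ (1 - t) * C + t * C :=
          add_le_add (mul_le_mul_of_nonneg_left h1 (by linarith)) (mul_le_mul_of_nonneg_left h2 ht0)
      _ = C := by ring

lemma cube_bound {X : Type*} [NormedAddCommGroup X] [NormedSpace ℝ X]
    (g : ℕ → X) (C : ℝ) (T : Finset ℕ) :
    ∀ (u : X) (c lo hi : ℕ → ℝ),
    (∀ n ∈ T, lo n ≤ c n ∧ c n ≤ hi n) →
    (∀ s : ℕ → ℝ, (∀ n ∈ T, s n = lo n ∨ s n = hi n) →
      ‖u + ∑ n ∈ T, s n • g n‖ ≤ C) →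
    ‖u + ∑ n ∈ T, c n • g n‖ ≤ C := by
  induction T using Finset.induction_on with
  | empty =>
      intro u c lo hi _ hcor
      simpa using hcor c (by simp)
  | insert b T ha ih =>
      intro u c lo hi hb hcor
      rw [Finset.sum_insert ha]
      have key : ‖(u + c b • g b) + ∑ n ∈ T, c n • g n‖ ≤ C := by
        apply ih (u + c b • g b) c lo hi (fun n hn => hb n (Finset.mem_insert_of_mem hn))
        intro s hs
        have hbb := hb b (Finset.mem_insert_self b T)
        have e1 : ‖(u + ∑ n ∈ T, s n • g n) + lo b • g b‖ ≤ C := by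
          have := hcor (fun n => if n = b then lo b else s n) (by
            intro n hn
            rcases Finset.mem_insert.mp hn with rfl | hn'
            · simp
            · have : n ≠ b := fun h => ha (h ▸ hn')
              simpa [this] using hs n hn')
          rw [Finset.sum_insert ha] at this
          simp only [if_pos rfl] at this
          have hsum : ∑ n ∈ T, (if n = b then lo b else s n) • g n = ∑ n ∈ T, s n • g n := by
            apply Finset.sum_congr rfl
            intro n hn
            have : n ≠ b := fun h => ha (h ▸ hn)
            simp [this]
          rw [hsum] at this
          calc ‖(u + ∑ n ∈ T, s n • g n) + lo b • g b‖
              = ‖u + (lo b • g b + ∑ n ∈ T, s n • g n)‖ := by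
                rw [show (u + ∑ n ∈ T, s n • g n) + lo b • g b
                    = u + (lo b • g b + ∑ n ∈ T, s n • g n) by abel]
            _ ≤ C := this
        have e2 : ‖(u + ∑ n ∈ T, s n • g n) + hi b • g b‖ ≤ C := by
          have := hcor (fun n => if n = b then hi b else s n) (by
            intro n hn
            rcases Finset.mem_insert.mp hn with rfl | hn'
            · simp
            · have : n ≠ b := fun h => ha (h ▸ hn')
              simpa [this] using hs n hn')
          rw [Finset.sum_insert ha] at this
          simp only [if_pos rfl] at this
          have hsum : ∑ n ∈ T, (if n = b then hi b else s n) • g n = ∑ n ∈ T, s n • g n := by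
            apply Finset.sum_congr rfl
            intro n hn
            have : n ≠ b := fun h => ha (h ▸ hn)
            simp [this]
          rw [hsum] at this
          calc ‖(u + ∑ n ∈ T, s n • g n) + hi b • g b‖
              = ‖u + (hi b • g b + ∑ n ∈ T, s n • g n)‖ := by
                rw [show (u + ∑ n ∈ T, s n • g n) + hi b • g b
                    = u + (hi b • g b + ∑ n ∈ T, s n • g n) by abel]
            _ ≤ C := this
        have hseg := seg_bound (u + ∑ n ∈ T, s n • g n) (g b) (lo b) (hi b) (c b) C hbb.1 hbb.2 e1 e2
        calc ‖(u + c b • g b) + ∑ n ∈ T, s n • g n‖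
            = ‖(u + ∑ n ∈ T, s n • g n) + c b • g b‖ := by
              rw [show (u + c b • g b) + ∑ n ∈ T, s n • g n
                  = (u + ∑ n ∈ T, s n • g n) + c b • g b by abel]
          _ ≤ C := hseg
      calc ‖u + (c b • g b + ∑ n ∈ T, c n • g n)‖
          = ‖(u + c b • g b) + ∑ n ∈ T, c n • g n‖ := by
            rw [show u + (c b • g b + ∑ n ∈ T, c n • g n)
                = (u + c b • g b) + ∑ n ∈ T, c n • g n by abel]
        _ ≤ C := key

set_option maxHeartbeats 1000000 in
/-- Theorem 1.1 (upper bound): `L_{m,τ} ≤ k_{2m-1}^c · ν_{m,τ}/τ`. -/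
theorem stmt_5
    {X : Type*} [NormedAddCommGroup X] [NormedSpace ℝ X] [CompleteSpace X]
    (e : ℕ → X) (f : ℕ → X →L[ℝ] ℝ)
    (hbi : ∀ i j, f i (e j) = if i = j then (1 : ℝ) else 0)
    (htotal : ∀ x : X, (∀ n, f n x = 0) → x = 0)
    (hdense : Dense (Submodule.span ℝ (Set.range e) : Set X))
    (τ : ℝ) (hτ : 0 < τ) (hτ1 : τ ≤ 1) (m : ℕ) (hm : 1 ≤ m)
    (kc ν : ℝ)
    (hkc : ∀ A : Finset ℕ, A.card ≤ 2 * m - 1 → ∀ x : X,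
      ‖x - ∑ n ∈ A, f n x • e n‖ ≤ kc * ‖x‖)
    (hν : ∀ (x : X), (∀ n, |f n x| ≤ 1 / τ) →
      ∀ (A B : Finset ℕ), A.card = B.card → B.card ≤ m →
      (∀ n ∈ A, f n x = 0) → (∀ n ∈ B, f n x = 0) → Disjoint A B →
      ∀ ε δ : ℕ → ℝ, (∀ n ∈ A, |ε n| = 1) → (∀ n ∈ B, |δ n| = 1) →
      ‖τ • x + ∑ n ∈ B, δ n • e n‖ ≤ ν * ‖x + ∑ n ∈ A, ε n • e n‖) :
    ∀ (x : X) (Λ : Finset ℕ), Λ.card = m →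
      (∀ i ∈ Λ, ∀ j ∉ Λ, τ * |f j x| ≤ |f i x|) →
      ∀ (A : Finset ℕ) (a : ℕ → ℝ), A.card ≤ m →
      ‖x - ∑ n ∈ Λ, f n x • e n‖
        ≤ (kc * ν / τ) * ‖x - ∑ n ∈ A, a n • e n‖ := by
  classical
  -- biorthogonality for sums
  have hbio : ∀ (n : ℕ) (c : ℕ → ℝ) (S : Finset ℕ),
      f n (∑ k ∈ S, c k • e k) = if n ∈ S then c n else 0 := by
    intro n c S
    rw [map_sum]
    have hterm : ∀ k ∈ S, f n (c k • e k) = if n = k then c k else 0 := by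
      intro k _
      rw [map_smul, hbi]
      simp [smul_eq_mul, mul_ite]
    rw [Finset.sum_congr rfl hterm, Finset.sum_ite_eq]
  have he0 : (0:ℝ) < ‖e 0‖ := by
    have : e 0 ≠ 0 := fun h => by simpa [h] using hbi 0 0
    simpa using norm_pos_iff.mpr this
  have he1 : (0:ℝ) < ‖e 1‖ := by
    have : e 1 ≠ 0 := fun h => by simpa [h] using hbi 1 1
    simpa using norm_pos_iff.mpr this
  have hkc1 : 1 ≤ kc := by
    have h := hkc ∅ (by simp) (e 0)
    simp only [Finset.sum_empty, sub_zero] at h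
    nlinarith
  have hz : ∀ n, |f n (0:X)| ≤ 1/τ := by
    intro n
    simp only [map_zero, abs_zero]
    positivity
  have h01 : ‖e 1‖ ≤ ν * ‖e 0‖ := by
    have h := hν 0 hz {0} {1} (by simp) (by simpa using hm) (by simp) (by simp)
      (by simp) (fun _ => 1) (fun _ => 1) (by simp) (by simp)
    simpa using h
  have h10 : ‖e 0‖ ≤ ν * ‖e 1‖ := by
    have h := hν 0 hz {1} {0} (by simp) (by simpa using hm) (by simp) (by simp)
      (by simp [Finset.disjoint_left]) (fun _ => 1) (fun _ => 1) (by simp) (by simp)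
    simpa using h
  have hν0 : 0 < ν := by nlinarith
  have hν1 : 1 ≤ ν := by
    by_contra hlt
    push_neg at hlt
    have h2 : ν * ‖e 1‖ ≤ ν * (ν * ‖e 0‖) := mul_le_mul_of_nonneg_left h01 hν0.le
    have h3 : ‖e 0‖ ≤ ν * ν * ‖e 0‖ := by
      calc ‖e 0‖ ≤ ν * ‖e 1‖ := h10
        _ ≤ ν * (ν * ‖e 0‖) := h2
        _ = ν * ν * ‖e 0‖ := by ring
    have h4 : ν * ν < 1 := by nlinarith
    nlinarith
  intro x Λ hΛcard hgreedy A a hAcard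
  set Γ := A \ Λ with hΓdef
  set D := Λ ∪ Γ with hDdef
  have hdisjΛΓ : Disjoint Λ Γ := Finset.disjoint_sdiff
  have hΛD : Λ ⊆ D := Finset.subset_union_left
  have hΓD : Γ ⊆ D := Finset.subset_union_right
  have hAD : A ⊆ D := by
    intro n hn
    by_cases h : n ∈ Λ
    · exact Finset.mem_union_left _ h
    · exact Finset.mem_union_right _ (Finset.mem_sdiff.mpr ⟨hn, h⟩)
  set y := x - ∑ n ∈ A, a n • e n with hy
  set u := x - ∑ n ∈ D, f n x • e n with hu
  have hfy : ∀ n, f n y = f n x - (if n ∈ A then a n else 0) := by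
    intro n
    rw [hy, map_sub, hbio]
  have hfu : ∀ n, f n u = f n x - (if n ∈ D then f n x else 0) := by
    intro n
    rw [hu, map_sub, hbio]
  clear_value y u
  have hDcard : D.card = m + Γ.card := by
    rw [hDdef, Finset.card_union_of_disjoint hdisjΛΓ, hΛcard]
  -- key identity
  have keyid : ∀ S' : Finset ℕ, S' ⊆ Λ → Disjoint S' A →
      u + ∑ n ∈ S', f n x • e n = y - ∑ n ∈ D \ S', f n y • e n := by
    intro S' hS'Λ hS'A
    have hS'D : S' ⊆ D := hS'Λ.trans hΛD
    have hAsub : A ⊆ D \ S' := by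
      intro n hn
      exact Finset.mem_sdiff.mpr ⟨hAD hn, fun hmem => (Finset.disjoint_left.mp hS'A hmem) hn⟩
    have h1 : ∑ n ∈ D \ S', f n y • e n
        = ∑ n ∈ D \ S', f n x • e n - ∑ n ∈ A, a n • e n := by
      have hterm : ∀ n ∈ D \ S', f n y • e n
          = f n x • e n - (if n ∈ A then a n else 0) • e n := by
        intro n _
        rw [hfy n, sub_smul]
      rw [Finset.sum_congr rfl hterm, Finset.sum_sub_distrib]
      congr 1
      rw [← Finset.sum_subset hAsub (fun n _ hn => by simp [hn])]
      exact Finset.sum_congr rfl (fun n hn => by simp [hn])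
    have h2 : ∑ n ∈ D \ S', f n x • e n + ∑ n ∈ S', f n x • e n
        = ∑ n ∈ D, f n x • e n := Finset.sum_sdiff hS'D
    rw [h1, hy, hu, ← h2]
    abel
  by_cases hΓe : Γ = ∅
  · -- trivial case: A ⊆ Λ
    have hDΛ : D = Λ := by rw [hDdef, hΓe, Finset.union_empty]
    have hmain := keyid ∅ (Finset.empty_subset _) (by simp)
    simp only [Finset.sum_empty, add_zero, Finset.sdiff_empty] at hmain
    have hcard : D.card ≤ 2 * m - 1 := by
      rw [hDcard, hΓe]
      simp only [Finset.card_empty]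
      omega
    have hb := hkc D hcard y
    have hgoal : x - ∑ n ∈ Λ, f n x • e n = u := by rw [hu, hDΛ]
    rw [hgoal, hmain]
    calc ‖y - ∑ n ∈ D, f n y • e n‖ ≤ kc * ‖y‖ := hb
      _ ≤ kc * ν / τ * ‖y‖ := by
          rw [div_mul_eq_mul_div, le_div_iff₀ hτ]
          nlinarith [norm_nonneg y, mul_nonneg (mul_nonneg (by linarith : (0:ℝ) ≤ kc)
            (norm_nonneg y)) (by linarith : (0:ℝ) ≤ ν - τ)]
  · have hΓne : Γ.Nonempty := Finset.nonempty_iff_ne_empty.mpr hΓe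
    set B := Λ \ A with hBdef
    have hc1 : Γ.card + (A ∩ Λ).card = A.card := by
      rw [hΓdef]
      exact Finset.card_sdiff_add_card_inter A Λ
    have hc2 : B.card + (Λ ∩ A).card = Λ.card := by
      rw [hBdef]
      exact Finset.card_sdiff_add_card_inter Λ A
    have hIC : (A ∩ Λ).card = (Λ ∩ A).card := by rw [Finset.inter_comm]
    have hΓB : Γ.card ≤ B.card := by omega
    have hΓm : Γ.card ≤ m := le_trans (by rw [hΓdef]; exact Finset.card_le_card Finset.sdiff_subset) hAcard
    have hΓpos : 0 < Γ.card := Finset.card_pos.mpr hΓne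
    have hBne : B.Nonempty := Finset.card_pos.mp (lt_of_lt_of_le hΓpos hΓB)
    obtain ⟨n₀, hn₀B, hmin⟩ := Finset.exists_min_image B (fun n => |f n x|) hBne
    have hn₀Λ : n₀ ∈ Λ := (Finset.mem_sdiff.mp hn₀B).1
    have hn₀A : n₀ ∉ A := (Finset.mem_sdiff.mp hn₀B).2
    set α := |f n₀ x| with hα
    clear_value α
    have hRHSnn : 0 ≤ kc * ν / τ * ‖y‖ :=
      mul_nonneg (div_nonneg (mul_nonneg (by linarith) (by linarith)) hτ.le) (norm_nonneg _)
    by_cases hα0 : α = 0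
    · -- then x is supported on Λ and LHS = 0
      have hzero : ∀ j, j ∉ Λ → f j x = 0 := by
        intro j hj
        have hg := hgreedy n₀ hn₀Λ j hj
        rw [← hα, hα0] at hg
        have : |f j x| ≤ 0 := by nlinarith [abs_nonneg (f j x)]
        exact abs_eq_zero.mp (le_antisymm this (abs_nonneg _))
      have hx0 : x - ∑ n ∈ Λ, f n x • e n = 0 := by
        apply htotal
        intro n
        rw [map_sub, hbio]
        by_cases hn : n ∈ Λ
        · simp [hn]
        · simp [hn, hzero n hn]
      rw [hx0]
      simpa using hRHSnn
    · have hαnn : 0 ≤ α := by rw [hα]; exact abs_nonneg _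
      have hαpos : 0 < α := lt_of_le_of_ne hαnn (Ne.symm hα0)
      have hbound : ∀ n, n ∉ Λ → |f n x| ≤ α / τ := by
        intro n hn
        rw [le_div_iff₀ hτ]
        have hg := hgreedy n₀ hn₀Λ n hn
        rw [← hα] at hg
        linarith [hg]
      -- build B₀ = insert n₀ B₁ ⊆ B with card Γ.card
      obtain ⟨B₁, hB₁sub, hB₁card⟩ := Finset.exists_subset_card_eq (s := B.erase n₀) (n := Γ.card - 1)
        (by rw [Finset.card_erase_of_mem hn₀B]; omega)
      have hn₀B₁ : n₀ ∉ B₁ := fun h => (Finset.mem_erase.mp (hB₁sub h)).1 rfl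
      set B₀ := insert n₀ B₁ with hB₀def
      have hB₀card : B₀.card = Γ.card := by
        rw [hB₀def, Finset.card_insert_of_notMem hn₀B₁, hB₁card]
        omega
      have hB₀B : B₀ ⊆ B :=
        Finset.insert_subset hn₀B (hB₁sub.trans (Finset.erase_subset _ _))
      have hB₀Λ : B₀ ⊆ Λ := hB₀B.trans (by rw [hBdef]; exact Finset.sdiff_subset)
      have hB₀A : ∀ n ∈ B₀, n ∉ A := fun n hn => (Finset.mem_sdiff.mp (hB₀B hn)).2
      have hαle : ∀ n ∈ B₀, α ≤ |f n x| := fun n hn => hmin n (hB₀B hn)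
      set ε : ℕ → ℝ := fun n => if 0 ≤ f n x then 1 else -1 with hεdef
      clear_value ε
      have hεabs : ∀ n, |ε n| = 1 := by
        intro n
        simp only [hεdef]
        split <;> simp
      -- rewrite the goal
      have hgoal1 : x - ∑ n ∈ Λ, f n x • e n = u + ∑ n ∈ Γ, f n x • e n := by
        rw [hu, hDdef, Finset.sum_union hdisjΛΓ]
        abel
      rw [hgoal1]
      -- second-stage bound, used at every corner of the first cube
      have hw : ‖u + ∑ n ∈ B₀, (α * ε n) • e n‖ ≤ kc * ‖y‖ := by
        have hn₀coef : α * ε n₀ = f n₀ x := by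
          simp only [hεdef]
          split_ifs with h
          · rw [mul_one, hα, abs_of_nonneg h]
          · rw [hα, abs_of_neg (lt_of_not_ge h)]
            ring
        have hsum0 : u + ∑ n ∈ B₀, (α * ε n) • e n
            = (u + f n₀ x • e n₀) + ∑ n ∈ B₁, (α * ε n) • e n := by
          rw [hB₀def, Finset.sum_insert hn₀B₁, hn₀coef]
          abel
        rw [hsum0]
        apply cube_bound e (kc * ‖y‖) B₁ (u + f n₀ x • e n₀) (fun n => α * ε n)
          (fun n => min 0 (f n x)) (fun n => max 0 (f n x))
        · intro n hn
          have hge := hαle n (Finset.mem_insert_of_mem hn)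
          simp only [hεdef]
          split_ifs with h
          · rw [abs_of_nonneg h] at hge
            constructor
            · rw [mul_one]
              exact le_trans (min_le_left _ _) hαpos.le
            · rw [mul_one]
              exact le_trans hge (le_max_right _ _)
          · rw [abs_of_neg (lt_of_not_ge h)] at hge
            constructor
            · calc min 0 (f n x) ≤ f n x := min_le_right _ _
                _ ≤ α * (-1) := by linarith
            · calc α * (-1) ≤ 0 := by linarith
                _ ≤ max 0 (f n x) := le_max_left _ _
        · intro s hs
          have hs' : ∀ n ∈ B₁, s n = 0 ∨ s n = f n x := by
            intro n hn
            rcases hs n hn with h | h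
            · rcases le_or_gt 0 (f n x) with h0 | h0
              · left; rw [h, min_eq_left h0]
              · right; rw [h, min_eq_right h0.le]
            · rcases le_or_gt 0 (f n x) with h0 | h0
              · right; rw [h, max_eq_right h0]
              · left; rw [h, max_eq_left h0.le]
          set S := B₁.filter (fun n => s n ≠ 0) with hSdef
          have hsum1 : ∑ n ∈ B₁, s n • e n = ∑ n ∈ S, f n x • e n := by
            have hsub : ∑ n ∈ S, s n • e n = ∑ n ∈ B₁, s n • e n := by
              apply Finset.sum_subset (Finset.filter_subset _ _)
              intro n hn hns
              have hsn : s n = 0 := by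
                by_contra hc
                exact hns (Finset.mem_filter.mpr ⟨hn, hc⟩)
              rw [hsn, zero_smul]
            rw [← hsub]
            apply Finset.sum_congr rfl
            intro n hn
            have h2 := (Finset.mem_filter.mp hn).2
            rcases hs' n (Finset.mem_filter.mp hn).1 with h | h
            · exact absurd h h2
            · rw [h]
          have hn₀S : n₀ ∉ S := fun h => hn₀B₁ (Finset.filter_subset _ _ h)
          have hSB : S ⊆ B := (Finset.filter_subset _ _).trans
            (hB₁sub.trans (Finset.erase_subset _ _))
          have hS'Λ : insert n₀ S ⊆ Λ := Finset.insert_subset hn₀Λ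
            (hSB.trans (by rw [hBdef]; exact Finset.sdiff_subset))
          have hS'A : Disjoint (insert n₀ S) A := by
            rw [Finset.disjoint_left]
            intro n hn hnA
            rcases Finset.mem_insert.mp hn with rfl | hn'
            · exact hn₀A hnA
            · exact (Finset.mem_sdiff.mp (hSB hn')).2 hnA
          have hid := keyid (insert n₀ S) hS'Λ hS'A
          have hrw : (u + f n₀ x • e n₀) + ∑ n ∈ B₁, s n • e n
              = u + ∑ n ∈ insert n₀ S, f n x • e n := by
            rw [hsum1, Finset.sum_insert hn₀S]
            abel
          rw [hrw, hid]
          apply hkc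
          have hS'D : insert n₀ S ⊆ D := hS'Λ.trans hΛD
          rw [Finset.card_sdiff_of_subset hS'D, hDcard, Finset.card_insert_of_notMem hn₀S]
          omega
      -- first cube
      apply cube_bound e (kc * ν / τ * ‖y‖) Γ u (fun n => f n x)
        (fun n => -(α/τ)) (fun n => α/τ)
      · intro n hn
        have hnΛ : n ∉ Λ := (Finset.mem_sdiff.mp hn).2
        exact abs_le.mp (hbound n hnΛ)
      · intro s hs
        set δ : ℕ → ℝ := fun n => (τ/α) * s n with hδdef
        clear_value δ
        have hδabs : ∀ n ∈ Γ, |δ n| = 1 := by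
          intro n hn
          rcases hs n hn with h | h
          · have : δ n = -1 := by
              simp only [hδdef]
              rw [h]
              field_simp
              try ring
            rw [this]
            norm_num
          · have : δ n = 1 := by
              simp only [hδdef]
              rw [h]
              field_simp
              try ring
            rw [this]
            norm_num
        have hx' : ∀ n, |f n ((α⁻¹ : ℝ) • u)| ≤ 1/τ := by
          intro n
          rw [map_smul, smul_eq_mul, abs_mul, abs_inv, abs_of_pos hαpos]
          by_cases hn : n ∈ D
          · rw [hfu n]
            simp only [if_pos hn, sub_self, abs_zero, mul_zero]
            positivity
          · have hfun : f n u = f n x := by rw [hfu n, if_neg hn, sub_zero]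
            rw [hfun]
            have hnΛ : n ∉ Λ := fun h => hn (hΛD h)
            calc α⁻¹ * |f n x| ≤ α⁻¹ * (α/τ) :=
                  mul_le_mul_of_nonneg_left (hbound n hnΛ) (inv_nonneg.mpr hαpos.le)
              _ = 1/τ := by field_simp
        have hfuz : ∀ n ∈ D, f n ((α⁻¹ : ℝ) • u) = 0 := by
          intro n hn
          rw [map_smul, smul_eq_mul, hfu n, if_pos hn, sub_self, mul_zero]
        have happ := hν ((α⁻¹ : ℝ) • u) hx' B₀ Γ hB₀card hΓm
          (fun n hn => hfuz n (hΛD (hB₀Λ hn)))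
          (fun n hn => hfuz n (hΓD hn))
          (Finset.disjoint_left.mpr (fun n hn hnΓ => (Finset.mem_sdiff.mp hnΓ).2 (hB₀Λ hn)))
          ε δ (fun n _ => hεabs n) hδabs
        have hid1 : u + ∑ n ∈ Γ, s n • e n
            = (α/τ) • (τ • ((α⁻¹ : ℝ) • u) + ∑ n ∈ Γ, δ n • e n) := by
          have hsc : ∀ n : ℕ, (α/τ) • (δ n • e n) = s n • e n := by
            intro n
            rw [smul_smul]
            congr 1
            simp only [hδdef]
            field_simp
            try ring
          rw [smul_add, Finset.smul_sum, Finset.sum_congr rfl (fun n _ => hsc n)]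
          congr 1
          rw [smul_smul, smul_smul, show α/τ * τ * α⁻¹ = 1 by field_simp, one_smul]
        have hid2 : (α : ℝ) • (((α⁻¹ : ℝ) • u) + ∑ n ∈ B₀, ε n • e n)
            = u + ∑ n ∈ B₀, (α * ε n) • e n := by
          rw [smul_add, Finset.smul_sum, smul_smul, mul_inv_cancel₀ hα0, one_smul]
          congr 1
          apply Finset.sum_congr rfl
          intro n _
          rw [smul_smul]
        calc ‖u + ∑ n ∈ Γ, s n • e n‖
            = (α/τ) * ‖τ • ((α⁻¹ : ℝ) • u) + ∑ n ∈ Γ, δ n • e n‖ := by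
              rw [hid1, norm_smul, Real.norm_of_nonneg (by positivity)]
          _ ≤ (α/τ) * (ν * ‖((α⁻¹ : ℝ) • u) + ∑ n ∈ B₀, ε n • e n‖) :=
              mul_le_mul_of_nonneg_left happ (by positivity)
          _ = (α/τ) * (ν * (α⁻¹ * ‖u + ∑ n ∈ B₀, (α * ε n) • e n‖)) := by
              rw [← hid2, norm_smul, Real.norm_of_nonneg hαpos.le]
              field_simp
          _ ≤ (α/τ) * (ν * (α⁻¹ * (kc * ‖y‖))) := by
              apply mul_le_mul_of_nonneg_left _ (by positivity)
              apply mul_le_mul_of_nonneg_left _ (by linarith)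
              exact mul_le_mul_of_nonneg_left hw (by positivity)
          _ = kc * ν / τ * ‖y‖ := by
              field_simp
end

section
/- Let X be a Banach space with Markushevich basis and τ ∈ (0,1]. Let L̃_{m,τ} be the smallest constant such that ‖x − P_Λ(x)‖ ≤ L̃_{m,τ} σ̃_m(x) for all x ∈ X and all τ-weak greedy sets Λ of x with |Λ| = m, where σ̃_m(x) = inf{‖x − P_A(x)‖ : |A| = m}. Then ν_{m,τ}/τ ≤ L̃_{m,τ} ≤ g_{m−1,τ}^c · ν_{m,τ}/τ. -/
section Aux
variable {X : Type*} [NormedAddCommGroup X] [NormedSpace ℝ X]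
variable {e : ℕ → X} {f : ℕ → X →L[ℝ] ℝ}

lemma fsum_eq (hbi : ∀ i j, f i (e j) = if i = j then (1 : ℝ) else 0)
    (a : ℕ → ℝ) (S : Finset ℕ) (j : ℕ) :
    f j (∑ n ∈ S, a n • e n) = if j ∈ S then a j else 0 := by
  rw [map_sum]
  have h : ∀ n ∈ S, f j (a n • e n) = if j = n then a n else 0 := by
    intro n _
    rw [map_smul, hbi]
    by_cases h : j = n <;> simp [h]
  rw [Finset.sum_congr rfl h, Finset.sum_ite_eq]

lemma convex_signs
    (B : Finset ℕ) (w : X) (a : ℕ → ℝ) (α R : ℝ) (hα : 0 < α)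
    (ha : ∀ n ∈ B, |a n| ≤ α)
    (h : ∀ δ : ℕ → ℝ, (∀ n ∈ B, |δ n| = 1) → ‖w + ∑ n ∈ B, (α * δ n) • e n‖ ≤ R) :
    ‖w + ∑ n ∈ B, a n • e n‖ ≤ R := by
  classical
  induction B using Finset.induction generalizing w with
  | empty =>
    simpa using h (fun _ => 1) (by simp)
  | @insert n₀ s hn ih =>
    have ha0 : |a n₀| ≤ α := ha n₀ (Finset.mem_insert_self _ _)
    set θ : ℝ := (a n₀ + α) / (2 * α) with hθdef
    have hθ0 : 0 ≤ θ := by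
      apply div_nonneg _ (by linarith)
      have := abs_le.mp ha0
      linarith [this.1]
    have hθ1 : θ ≤ 1 := by
      rw [div_le_one (by linarith)]
      have := abs_le.mp ha0
      linarith [this.2]
    have hcomb : (2*θ - 1) * α = a n₀ := by
      field_simp [hθdef]
      rw [hθdef]; field_simp; ring
    have key : w + ∑ n ∈ insert n₀ s, a n • e n
        = θ • ((w + (α * 1) • e n₀) + ∑ n ∈ s, a n • e n)
          + (1-θ) • ((w + (α * (-1)) • e n₀) + ∑ n ∈ s, a n • e n) := by
      rw [Finset.sum_insert hn, ← hcomb]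
      module
    have hx : ∀ (c : ℝ), |c| = 1 → ‖(w + (α*c) • e n₀) + ∑ n ∈ s, a n • e n‖ ≤ R := by
      intro c hc
      apply ih _ (fun n hns => ha n (Finset.mem_insert_of_mem hns))
      intro δ hδ
      have hmem : ∀ n ∈ insert n₀ s, |(fun n => if n = n₀ then c else δ n) n| = 1 := by
        intro n hns
        rcases Finset.mem_insert.mp hns with rfl | hns'
        · simp [hc]
        · have hne : n ≠ n₀ := by rintro rfl; exact hn hns'
          simp only [if_neg hne]
          exact hδ n hns'
      have h2 := h _ hmem
      rw [Finset.sum_insert hn] at h2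
      have hsum : ∑ n ∈ s, (α * (if n = n₀ then c else δ n)) • e n
          = ∑ n ∈ s, (α * δ n) • e n := by
        apply Finset.sum_congr rfl
        intro n hns
        have hne : n ≠ n₀ := by rintro rfl; exact hn hns
        rw [if_neg hne]
      simp only [if_pos rfl] at h2
      rw [hsum] at h2
      calc ‖w + (α*c) • e n₀ + ∑ n ∈ s, (α * δ n) • e n‖
          = ‖w + ((α*c) • e n₀ + ∑ n ∈ s, (α * δ n) • e n)‖ := by rw [add_assoc]
        _ ≤ R := h2
    rw [key]
    calc ‖θ • ((w + (α * 1) • e n₀) + ∑ n ∈ s, a n • e n)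
          + (1-θ) • ((w + (α * (-1)) • e n₀) + ∑ n ∈ s, a n • e n)‖
        ≤ θ * ‖(w + (α * 1) • e n₀) + ∑ n ∈ s, a n • e n‖
          + (1-θ) * ‖(w + (α * (-1)) • e n₀) + ∑ n ∈ s, a n • e n‖ := by
          refine (norm_add_le _ _).trans ?_
          rw [norm_smul, norm_smul, Real.norm_eq_abs, Real.norm_eq_abs,
            abs_of_nonneg hθ0, abs_of_nonneg (by linarith)]
      _ ≤ θ * R + (1-θ) * R := by
          apply add_le_add
          · exact mul_le_mul_of_nonneg_left (hx 1 (by norm_num)) hθ0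
          · exact mul_le_mul_of_nonneg_left (hx (-1) (by norm_num)) (by linarith)
      _ = R := by ring


lemma abel_claim (hbi : ∀ i j, f i (e j) = if i = j then (1 : ℝ) else 0) :
    ∀ (k : ℕ) (Γ : Finset ℕ) (v : X) (s β R : ℝ),
      Γ.card = k → Γ.Nonempty →
      (∀ n ∈ Γ, f n v ≠ 0) →
      0 ≤ s → (∀ n ∈ Γ, s * |f n v| ≤ 1) →
      (∀ n ∈ Γ, β ≤ |f n v|) → (∃ n ∈ Γ, |f n v| = β) →
      (∀ G ⊆ Γ, G ≠ Γ → (∀ i ∈ G, ∀ j ∈ Γ, j ∉ G → |f j v| ≤ |f i v|) →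
        ‖v - ∑ n ∈ G, f n v • e n‖ ≤ R) →
      ‖(β⁻¹ - s) • (v - ∑ n ∈ Γ, f n v • e n)
        + ∑ n ∈ Γ, ((|f n v|⁻¹ - s) * f n v) • e n‖ ≤ (β⁻¹ - s) * R := by
  classical
  intro k
  induction k with
  | zero =>
    intro Γ v s β R hcard hne
    exact absurd (Finset.card_eq_zero.mp hcard) hne.ne_empty
  | succ k IH =>
    intro Γ v s β R hcard hne hc hs0 hs hβle hβmem hbound
    obtain ⟨n₁, hn₁Γ, hmax⟩ := Finset.exists_max_image Γ (fun n => |f n v|) hne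
    set c₁ : ℝ := f n₁ v with hc₁def
    have hc₁ : c₁ ≠ 0 := hc n₁ hn₁Γ
    have habs : 0 < |c₁| := abs_pos.mpr hc₁
    have hβpos : 0 < β := by
      obtain ⟨nm, hnm, hnmeq⟩ := hβmem
      rw [← hnmeq]
      exact abs_pos.mpr (hc nm hnm)
    have hnormv : ‖v‖ ≤ R := by
      have := hbound ∅ (Finset.empty_subset _) (Ne.symm hne.ne_empty) (by simp)
      simpa using this
    set s' : ℝ := |c₁|⁻¹ with hs'def
    have hs'0 : 0 ≤ s' := by positivity
    have hss' : s ≤ s' := by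
      have h2 : s * |c₁| ≤ s' * |c₁| := by
        rw [hs'def, inv_mul_cancel₀ habs.ne']
        exact hs n₁ hn₁Γ
      exact le_of_mul_le_mul_right h2 habs
    have hβc₁ : β ≤ |c₁| := hβle n₁ hn₁Γ
    have hs'β : s' ≤ β⁻¹ := by
      rw [hs'def]
      exact inv_anti₀ hβpos hβc₁
    have hsβ : s ≤ β⁻¹ := le_trans hss' hs'β
    by_cases hΓ'ne : (Γ.erase n₁).Nonempty
    · -- main inductive case
      set v' : X := v - c₁ • e n₁ with hv'def
      have hfv' : ∀ j, j ≠ n₁ → f j v' = f j v := by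
        intro j hj
        rw [hv'def, map_sub, map_smul, hbi]
        simp [hj]
      have hfv'n₁ : f n₁ v' = 0 := by
        rw [hv'def, map_sub, map_smul, hbi]
        simp [hc₁def]
      set Γ' : Finset ℕ := Γ.erase n₁ with hΓ'def
      have hΓ'sub : Γ' ⊆ Γ := Finset.erase_subset _ _
      have hmemΓ' : ∀ n ∈ Γ', n ≠ n₁ ∧ n ∈ Γ := fun n hn =>
        ⟨Finset.ne_of_mem_erase hn, hΓ'sub hn⟩
      have hins : insert n₁ Γ' = Γ := Finset.insert_erase hn₁Γ
      have hn₁Γ' : n₁ ∉ Γ' := Finset.notMem_erase _ _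
      -- IH hypotheses
      have hcard' : Γ'.card = k := by
        rw [hΓ'def, Finset.card_erase_of_mem hn₁Γ, hcard]
        omega
      have hc' : ∀ n ∈ Γ', f n v' ≠ 0 := by
        intro n hn
        rw [hfv' n (hmemΓ' n hn).1]
        exact hc n (hmemΓ' n hn).2
      have hs'cond : ∀ n ∈ Γ', s' * |f n v'| ≤ 1 := by
        intro n hn
        rw [hfv' n (hmemΓ' n hn).1, hs'def]
        have h1 : |f n v| ≤ |c₁| := hmax n (hmemΓ' n hn).2
        calc |c₁|⁻¹ * |f n v| ≤ |c₁|⁻¹ * |c₁| :=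
              mul_le_mul_of_nonneg_left h1 (by positivity)
          _ = 1 := inv_mul_cancel₀ habs.ne'
      have hβle' : ∀ n ∈ Γ', β ≤ |f n v'| := by
        intro n hn
        rw [hfv' n (hmemΓ' n hn).1]
        exact hβle n (hmemΓ' n hn).2
      have hβmem' : ∃ n ∈ Γ', |f n v'| = β := by
        obtain ⟨nm, hnm, hnmeq⟩ := hβmem
        by_cases hcase : nm = n₁
        · obtain ⟨n₂, hn₂⟩ := hΓ'ne
          refine ⟨n₂, hn₂, ?_⟩
          rw [hfv' n₂ (hmemΓ' n₂ hn₂).1]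
          refine le_antisymm ?_ (hβle n₂ (hmemΓ' n₂ hn₂).2)
          calc |f n₂ v| ≤ |c₁| := hmax n₂ (hmemΓ' n₂ hn₂).2
            _ = |f nm v| := by rw [hcase, hc₁def]
            _ = β := hnmeq
        · refine ⟨nm, Finset.mem_erase.mpr ⟨hcase, hnm⟩, ?_⟩
          rw [hfv' nm hcase]
          exact hnmeq
      have hbound' : ∀ G ⊆ Γ', G ≠ Γ' →
          (∀ i ∈ G, ∀ j ∈ Γ', j ∉ G → |f j v'| ≤ |f i v'|) →
          ‖v' - ∑ n ∈ G, f n v' • e n‖ ≤ R := by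
        intro G hGsub hGne hGupper
        have hn₁G : n₁ ∉ G := fun h => hn₁Γ' (hGsub h)
        have hsum : v' - ∑ n ∈ G, f n v' • e n
            = v - ∑ n ∈ insert n₁ G, f n v • e n := by
          rw [Finset.sum_insert hn₁G, hv'def]
          rw [Finset.sum_congr rfl (fun n hn => by
            rw [hfv' n (fun h => hn₁G (h ▸ hn))])]
          abel
        rw [hsum]
        apply hbound (insert n₁ G)
          (Finset.insert_subset hn₁Γ (hGsub.trans hΓ'sub))
        · intro h
          apply hGne
          rw [← Finset.erase_insert hn₁G, h, hΓ'def]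
        · intro i hi j hj hjG
          rcases Finset.mem_insert.mp hi with rfl | hiG
          · exact hmax j hj
          · have hjn₁ : j ≠ n₁ := by
              rintro rfl
              exact hjG (Finset.mem_insert_self _ _)
            have hjΓ' : j ∈ Γ' := Finset.mem_erase.mpr ⟨hjn₁, hj⟩
            have hjG' : j ∉ G := fun h => hjG (Finset.mem_insert_of_mem h)
            have := hGupper i hiG j hjΓ' hjG'
            rwa [hfv' j hjn₁, hfv' i (fun h => hn₁G (h ▸ hiG))] at this
      have hIH := IH Γ' v' s' β R hcard' hΓ'ne hc' hs'0 hs'cond hβle' hβmem' hbound'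
      -- rewrite IH in terms of v
      have hrw1 : ∑ n ∈ Γ', f n v' • e n = ∑ n ∈ Γ', f n v • e n :=
        Finset.sum_congr rfl (fun n hn => by rw [hfv' n (hmemΓ' n hn).1])
      have hrw2 : ∑ n ∈ Γ', ((|f n v'|⁻¹ - s') * f n v') • e n
          = ∑ n ∈ Γ', ((|f n v|⁻¹ - s') * f n v) • e n :=
        Finset.sum_congr rfl (fun n hn => by rw [hfv' n (hmemΓ' n hn).1])
      rw [hrw1, hrw2] at hIH
      -- key identity
      have hsplit1 : ∑ n ∈ Γ, f n v • e n
          = c₁ • e n₁ + ∑ n ∈ Γ', f n v • e n := by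
        rw [← hins, Finset.sum_insert hn₁Γ', hc₁def]
      have hsplit2 : ∑ n ∈ Γ, ((|f n v|⁻¹ - s) * f n v) • e n
          = ((|c₁|⁻¹ - s) * c₁) • e n₁ + ∑ n ∈ Γ', ((|f n v|⁻¹ - s) * f n v) • e n := by
        rw [← hins, Finset.sum_insert hn₁Γ', hc₁def]
      have hsplit3 : ∑ n ∈ Γ', ((|f n v|⁻¹ - s) * f n v) • e n
          = ∑ n ∈ Γ', ((|f n v|⁻¹ - s') * f n v) • e n
            + (s' - s) • ∑ n ∈ Γ', f n v • e n := by
        rw [Finset.smul_sum, ← Finset.sum_add_distrib]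
        apply Finset.sum_congr rfl
        intro n hn
        rw [smul_smul, ← add_smul]
        congr 1
        ring
      have hkey : (β⁻¹ - s) • (v - ∑ n ∈ Γ, f n v • e n)
            + ∑ n ∈ Γ, ((|f n v|⁻¹ - s) * f n v) • e n
          = (s' - s) • v
            + ((β⁻¹ - s') • (v' - ∑ n ∈ Γ', f n v • e n)
              + ∑ n ∈ Γ', ((|f n v|⁻¹ - s') * f n v) • e n) := by
        rw [hsplit1, hsplit2, hsplit3, hv'def]
        have hcc : (|c₁|⁻¹ - s) * c₁ = (s' - s) * c₁ := by rw [hs'def]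
        rw [hcc]
        module
      rw [hkey]
      calc ‖(s' - s) • v
            + ((β⁻¹ - s') • (v' - ∑ n ∈ Γ', f n v • e n)
              + ∑ n ∈ Γ', ((|f n v|⁻¹ - s') * f n v) • e n)‖
          ≤ ‖(s' - s) • v‖
            + ‖(β⁻¹ - s') • (v' - ∑ n ∈ Γ', f n v • e n)
              + ∑ n ∈ Γ', ((|f n v|⁻¹ - s') * f n v) • e n‖ := norm_add_le _ _
        _ ≤ (s' - s) * ‖v‖ + (β⁻¹ - s') * R := by
            apply add_le_add _ hIH
            rw [norm_smul, Real.norm_eq_abs, abs_of_nonneg (by linarith)]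
        _ ≤ (s' - s) * R + (β⁻¹ - s') * R := by
            apply add_le_add_left
            exact mul_le_mul_of_nonneg_left hnormv (by linarith)
        _ = (β⁻¹ - s) * R := by ring
    · -- base: Γ = {n₁}
      have hΓsingle : Γ = {n₁} := by
        have h1 : Γ.erase n₁ = ∅ := Finset.not_nonempty_iff_eq_empty.mp hΓ'ne
        apply Finset.eq_singleton_iff_unique_mem.mpr
        refine ⟨hn₁Γ, fun x hx => ?_⟩
        by_contra hxn
        have : x ∈ Γ.erase n₁ := Finset.mem_erase.mpr ⟨hxn, hx⟩
        rw [h1] at this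
        exact absurd this (Finset.notMem_empty x)
      have hβeq : β = |c₁| := by
        obtain ⟨nm, hnm, hnmeq⟩ := hβmem
        rw [hΓsingle, Finset.mem_singleton] at hnm
        rw [← hnmeq, hnm, hc₁def]
      have hid : (β⁻¹ - s) • (v - ∑ n ∈ Γ, f n v • e n)
            + ∑ n ∈ Γ, ((|f n v|⁻¹ - s) * f n v) • e n
          = (β⁻¹ - s) • v := by
        rw [hΓsingle, Finset.sum_singleton, Finset.sum_singleton, ← hc₁def,
          ← hβeq]
        module
      rw [hid, norm_smul, Real.norm_eq_abs, abs_of_nonneg (by linarith)]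
      exact mul_le_mul_of_nonneg_left hnormv (by linarith)

end Aux


set_option maxHeartbeats 1000000 in
/-- Theorem 1.2: `ν_{m,τ}/τ ≤ L̃_{m,τ} ≤ g_{m-1,τ}^c · ν_{m,τ}/τ`.
The lower bound is expressed by the fact that `τ·L̃` dominates every
ratio in the definition of `ν_{m,τ}`, and the upper bound by the fact
that `g·ν/τ` verifies the defining inequality of `L̃_{m,τ}`. -/
theorem stmt_6
    {X : Type*} [NormedAddCommGroup X] [NormedSpace ℝ X] [CompleteSpace X]
    (e : ℕ → X) (f : ℕ → X →L[ℝ] ℝ)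
    (hbi : ∀ i j, f i (e j) = if i = j then (1 : ℝ) else 0)
    (htotal : ∀ x : X, (∀ n, f n x = 0) → x = 0)
    (hdense : Dense (Submodule.span ℝ (Set.range e) : Set X))
    (τ : ℝ) (hτ : 0 < τ) (hτ1 : τ ≤ 1) (m : ℕ) (hm : 1 ≤ m)
    (g ν L : ℝ)
    (hg : ∀ (x : X) (Λ : Finset ℕ), Λ.card ≤ m - 1 →
      (∀ i ∈ Λ, ∀ j ∉ Λ, τ * |f j x| ≤ |f i x|) →
      ‖x - ∑ n ∈ Λ, f n x • e n‖ ≤ g * ‖x‖)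
    (hν : ∀ (x : X), (∀ n, |f n x| ≤ 1 / τ) →
      ∀ (A B : Finset ℕ), A.card = B.card → B.card ≤ m →
      (∀ n ∈ A, f n x = 0) → (∀ n ∈ B, f n x = 0) → Disjoint A B →
      ∀ ε δ : ℕ → ℝ, (∀ n ∈ A, |ε n| = 1) → (∀ n ∈ B, |δ n| = 1) →
      ‖τ • x + ∑ n ∈ B, δ n • e n‖ ≤ ν * ‖x + ∑ n ∈ A, ε n • e n‖)
    (hL : ∀ (x : X) (Λ : Finset ℕ), Λ.card = m →
      (∀ i ∈ Λ, ∀ j ∉ Λ, τ * |f j x| ≤ |f i x|) →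
      ∀ A : Finset ℕ, A.card = m →
      ‖x - ∑ n ∈ Λ, f n x • e n‖ ≤ L * ‖x - ∑ n ∈ A, f n x • e n‖) :
    ((∀ (x : X), (∀ n, |f n x| ≤ 1 / τ) →
      ∀ (A B : Finset ℕ), A.card = B.card → B.card ≤ m →
      (∀ n ∈ A, f n x = 0) → (∀ n ∈ B, f n x = 0) → Disjoint A B →
      ∀ ε δ : ℕ → ℝ, (∀ n ∈ A, |ε n| = 1) → (∀ n ∈ B, |δ n| = 1) →
      ‖τ • x + ∑ n ∈ B, δ n • e n‖ ≤ (τ * L) * ‖x + ∑ n ∈ A, ε n • e n‖)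
    ∧
    (∀ (x : X) (Λ : Finset ℕ), Λ.card = m →
      (∀ i ∈ Λ, ∀ j ∉ Λ, τ * |f j x| ≤ |f i x|) →
      ∀ A : Finset ℕ, A.card = m →
      ‖x - ∑ n ∈ Λ, f n x • e n‖
        ≤ (g * ν / τ) * ‖x - ∑ n ∈ A, f n x • e n‖)) := by
  classical
  -- basic facts
  have he_pos : ∀ n, 0 < ‖e n‖ := by
    intro n
    rw [norm_pos_iff]
    intro h
    have := hbi n n
    rw [h, map_zero] at this
    simp at this
  have hν_e : ∀ a b : ℕ, a ≠ b → ‖e b‖ ≤ ν * ‖e a‖ := by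
    intro a b hab
    have h0 : ∀ n, |f n (0 : X)| ≤ 1/τ := by
      intro n; rw [map_zero, abs_zero]; positivity
    have := hν 0 h0 {a} {b} (by simp) (by simpa using hm)
      (by simp) (by simp) (by simpa using hab)
      (fun _ => 1) (fun _ => 1) (by simp) (by simp)
    simpa using this
  have hν_pos : 0 < ν := by
    have h1 := hν_e 0 1 (by norm_num)
    nlinarith [he_pos 0, he_pos 1]
  have hν_ge1 : 1 ≤ ν := by
    have h1 := hν_e 0 1 (by norm_num)
    have h2 := hν_e 1 0 (by norm_num)
    nlinarith [he_pos 0, he_pos 1]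
  have hg_ge1 : 1 ≤ g := by
    have := hg (e 0) ∅ (by simp) (by simp)
    simp only [Finset.sum_empty, sub_zero] at this
    nlinarith [he_pos 0]
  have hL_ge1 : 1 ≤ L := by
    set x₀ : X := ∑ n ∈ Finset.range (m+1), (1:ℝ) • e n with hx₀def
    have hfx₀ : ∀ j, f j x₀ = if j ∈ Finset.range (m+1) then 1 else 0 :=
      fun j => fsum_eq hbi _ _ j
    have hgreedy : ∀ i ∈ Finset.range m, ∀ j ∉ Finset.range m,
        τ * |f j x₀| ≤ |f i x₀| := by
      intro i hi j _
      have hi' : i ∈ Finset.range (m+1) := by simp at hi ⊢; omega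
      rw [hfx₀ j, hfx₀ i, if_pos hi']
      by_cases hj' : j ∈ Finset.range (m+1) <;> simp [hj'] <;> nlinarith
    have happ := hL x₀ (Finset.range m) (by simp) hgreedy (Finset.range m) (by simp)
    have hdiff : x₀ - ∑ n ∈ Finset.range m, f n x₀ • e n = e m := by
      have : ∑ n ∈ Finset.range m, f n x₀ • e n
          = ∑ n ∈ Finset.range m, (1:ℝ) • e n := by
        apply Finset.sum_congr rfl
        intro n hn
        rw [hfx₀, if_pos (by simp at hn ⊢; omega)]
      rw [this, hx₀def, Finset.sum_range_succ, one_smul]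
      abel
    rw [hdiff] at happ
    nlinarith [he_pos m]
  have hτ' : (0:ℝ) < 1/τ := by positivity
  -- PART 2
  have part2 : ∀ (x : X) (Λ : Finset ℕ), Λ.card = m →
      (∀ i ∈ Λ, ∀ j ∉ Λ, τ * |f j x| ≤ |f i x|) →
      ∀ A : Finset ℕ, A.card = m →
      ‖x - ∑ n ∈ Λ, f n x • e n‖
        ≤ (g * ν / τ) * ‖x - ∑ n ∈ A, f n x • e n‖ := by
    intro x Λ hΛcard hgreedy A hAcard
    by_cases hz : ∃ i ∈ Λ, f i x = 0
    · -- degenerate: x = P_Λ x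
      obtain ⟨i, hi, hfi⟩ := hz
      have hxeq : x - ∑ n ∈ Λ, f n x • e n = 0 := by
        apply htotal
        intro n
        rw [map_sub, fsum_eq hbi]
        by_cases hn : n ∈ Λ
        · rw [if_pos hn]; ring
        · rw [if_neg hn, sub_zero]
          have := hgreedy i hi n hn
          rw [hfi, abs_zero] at this
          have h2 : |f n x| ≤ 0 := by nlinarith
          have := abs_nonneg (f n x)
          have : |f n x| = 0 := le_antisymm h2 this
          exact abs_eq_zero.mp this
      rw [hxeq, norm_zero]
      positivity
    push_neg at hz
    by_cases hΓne : (Λ \ A).Nonempty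
    swap
    · -- Λ = A
      have hΛA : Λ = A := by
        have hsub : Λ ⊆ A := by
          intro n hn
          by_contra hna
          exact hΓne ⟨n, Finset.mem_sdiff.mpr ⟨hn, hna⟩⟩
        exact Finset.eq_of_subset_of_card_le hsub (by omega)
      rw [hΛA]
      have hcoef : 1 ≤ g * ν / τ := by
        rw [le_div_iff₀ hτ]
        nlinarith
      nlinarith [norm_nonneg (x - ∑ n ∈ A, f n x • e n)]
    · -- main case of part 2
      have hnz : ∀ i ∈ Λ, f i x ≠ 0 := hz
      set Γ : Finset ℕ := Λ \ A with hΓdef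
      set B' : Finset ℕ := A \ Λ with hB'def
      set y : X := x - ∑ n ∈ A, f n x • e n with hydef
      set w' : X := x - ∑ n ∈ Λ ∪ A, f n x • e n with hw'def
      set β : ℝ := Γ.inf' hΓne (fun n => |f n x|) with hβdef
      obtain ⟨i₀, hi₀Γ, hi₀eq⟩ := Finset.exists_mem_eq_inf' hΓne (fun n => |f n x|)
      have hΓΛ : Γ ⊆ Λ := Finset.sdiff_subset
      have hβpos : 0 < β := by
        rw [hβdef, hi₀eq]
        exact abs_pos.mpr (hnz i₀ (hΓΛ hi₀Γ))
      have hβle : ∀ n ∈ Γ, β ≤ |f n x| := fun n hn => by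
        rw [hβdef]; exact Finset.inf'_le _ hn
      have hout : ∀ j, j ∉ Λ → |f j x| ≤ β / τ := by
        intro j hj
        have h1 := hgreedy i₀ (hΓΛ hi₀Γ) j hj
        rw [le_div_iff₀ hτ, hβdef, hi₀eq]
        nlinarith [h1]
      have hΛA : Λ ∪ A = Λ ∪ B' := by
        rw [hB'def, Finset.union_sdiff_self_eq_union]
      have hdisjB' : Disjoint Λ B' := Finset.disjoint_sdiff
      have hsplit : ∑ n ∈ Λ ∪ A, f n x • e n
          = ∑ n ∈ Λ, f n x • e n + ∑ n ∈ B', f n x • e n := by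
        rw [hΛA, Finset.sum_union hdisjB']
      have hdecomp : x - ∑ n ∈ Λ, f n x • e n = w' + ∑ n ∈ B', f n x • e n := by
        rw [hw'def, hsplit]; abel
      rw [hdecomp]
      have hfw' : ∀ n, f n w' = if n ∈ Λ ∪ A then 0 else f n x := by
        intro n
        rw [hw'def, map_sub, fsum_eq hbi]
        by_cases hn : n ∈ Λ ∪ A <;> simp [hn]
      set xstar : X := β⁻¹ • w' with hxsdef
      have hfxs : ∀ n, f n xstar = β⁻¹ * f n w' := by
        intro n; rw [hxsdef, map_smul]; rfl
      have hxscoeff : ∀ n, |f n xstar| ≤ 1 / τ := by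
        intro n
        rw [hfxs, hfw']
        by_cases hn : n ∈ Λ ∪ A
        · rw [if_pos hn, mul_zero, abs_zero]; positivity
        · rw [if_neg hn, abs_mul, abs_inv, abs_of_pos hβpos]
          have h1 : |f n x| ≤ β / τ := hout n (fun h => hn (Finset.mem_union_left _ h))
          calc β⁻¹ * |f n x| ≤ β⁻¹ * (β/τ) :=
                mul_le_mul_of_nonneg_left h1 (by positivity)
            _ = 1/τ := by field_simp
      have hΓB'card : Γ.card = B'.card :=
        Finset.card_sdiff_comm (by rw [hΛcard, hAcard])
      have hB'm : B'.card ≤ m := by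
        calc B'.card ≤ A.card := Finset.card_le_card Finset.sdiff_subset
          _ = m := hAcard
      have hvanΓ : ∀ n ∈ Γ, f n xstar = 0 := by
        intro n hn
        rw [hfxs, hfw', if_pos (Finset.mem_union_left _ (hΓΛ hn))]; ring
      have hvanB' : ∀ n ∈ B', f n xstar = 0 := by
        intro n hn
        rw [hfxs, hfw',
          if_pos (Finset.mem_union_right _ (Finset.mem_sdiff.mp hn).1)]
        ring
      have hdisjΓB' : Disjoint Γ B' := disjoint_sdiff_sdiff
      set ε : ℕ → ℝ := fun n => |f n x|⁻¹ * f n x with hεdef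
      have hε1 : ∀ n ∈ Γ, |ε n| = 1 := by
        intro n hn
        have hne : f n x ≠ 0 := hnz n (hΓΛ hn)
        rw [hεdef]
        simp only
        rw [abs_mul, abs_inv, abs_abs]
        exact inv_mul_cancel₀ (abs_ne_zero.mpr hne)
      have hfy : ∀ n, n ∉ A → f n y = f n x := by
        intro n hn
        rw [hydef, map_sub, fsum_eq hbi, if_neg hn, sub_zero]
      have hfyA : ∀ n ∈ A, f n y = 0 := by
        intro n hn
        rw [hydef, map_sub, fsum_eq hbi, if_pos hn]; ring
      have hΓnA : ∀ n ∈ Γ, n ∉ A := fun n hn => (Finset.mem_sdiff.mp hn).2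
      have hboundy : ∀ G ⊆ Γ, G ≠ Γ →
          (∀ i ∈ G, ∀ j ∈ Γ, j ∉ G → |f j y| ≤ |f i y|) →
          ‖y - ∑ n ∈ G, f n y • e n‖ ≤ g * ‖y‖ := by
        intro G hGsub hGne hGupper
        apply hg y G
        · have h1 : G.card < Γ.card :=
            Finset.card_lt_card (ssubset_of_subset_of_ne hGsub hGne)
          have h2 : Γ.card ≤ m := hΛcard ▸ Finset.card_le_card hΓΛ
          omega
        · intro i hi j hj
          have hiy : f i y = f i x := hfy i (hΓnA i (hGsub hi))
          rw [hiy]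
          by_cases hjA : j ∈ A
          · rw [hfyA j hjA, abs_zero, mul_zero]
            exact abs_nonneg _
          · rw [hfy j hjA]
            by_cases hjΛ : j ∈ Λ
            · have hjΓ : j ∈ Γ := Finset.mem_sdiff.mpr ⟨hjΛ, hjA⟩
              have h3 := hGupper i hi j hjΓ hj
              rw [hfy j hjA, hiy] at h3
              nlinarith [abs_nonneg (f j x)]
            · have h3 := hgreedy i (hΓΛ (hGsub hi)) j hjΛ
              exact h3
      have habel := abel_claim hbi Γ.card Γ y 0 β (g * ‖y‖) rfl hΓne
        (fun n hn => by rw [hfy n (hΓnA n hn)]; exact hnz n (hΓΛ hn))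
        le_rfl
        (fun n hn => by rw [hfy n (hΓnA n hn), zero_mul]; norm_num)
        (fun n hn => by rw [hfy n (hΓnA n hn)]; exact hβle n hn)
        ⟨i₀, hi₀Γ, by rw [hfy i₀ (hΓnA i₀ hi₀Γ)]; exact hi₀eq.symm⟩
        hboundy
      have hyw : y - ∑ n ∈ Γ, f n y • e n = w' := by
        have h1 : ∑ n ∈ Γ, f n y • e n = ∑ n ∈ Γ, f n x • e n :=
          Finset.sum_congr rfl (fun n hn => by rw [hfy n (hΓnA n hn)])
        have h2 : Λ ∪ A = A ∪ Γ := by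
          rw [hΓdef, Finset.union_sdiff_self_eq_union, Finset.union_comm]
        rw [hydef, hw'def, h1, h2, Finset.sum_union Finset.disjoint_sdiff]
        abel
      have hsgn : ∑ n ∈ Γ, ((|f n y|⁻¹ - 0) * f n y) • e n
          = ∑ n ∈ Γ, ε n • e n := by
        apply Finset.sum_congr rfl
        intro n hn
        rw [hfy n (hΓnA n hn), hεdef, sub_zero]
      rw [sub_zero, hyw, hsgn] at habel
      have habel' : ‖xstar + ∑ n ∈ Γ, ε n • e n‖ ≤ β⁻¹ * (g * ‖y‖) := by
        rw [hxsdef]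
        exact habel
      apply convex_signs B' w' (fun n => f n x) (β/τ) _ (by positivity)
        (fun n hn => hout n (Finset.mem_sdiff.mp hn).2)
      intro δ hδ
      have hνd := hν xstar hxscoeff Γ B' hΓB'card hB'm hvanΓ hvanB' hdisjΓB'
        ε δ hε1 hδ
      have hid : w' + ∑ n ∈ B', ((β/τ) * δ n) • e n
          = (β/τ) • (τ • xstar + ∑ n ∈ B', δ n • e n) := by
        rw [hxsdef, smul_add, Finset.smul_sum, smul_smul, smul_smul]
        have hc : β / τ * τ * β⁻¹ = 1 := by field_simp
        rw [hc, one_smul]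
        congr 1
        apply Finset.sum_congr rfl
        intro n _
        rw [smul_smul]
      rw [hid, norm_smul, Real.norm_eq_abs, abs_of_pos (by positivity : (0:ℝ) < β/τ)]
      calc (β/τ) * ‖τ • xstar + ∑ n ∈ B', δ n • e n‖
          ≤ (β/τ) * (ν * (β⁻¹ * (g * ‖y‖))) := by
            apply mul_le_mul_of_nonneg_left _ (by positivity)
            exact hνd.trans (mul_le_mul_of_nonneg_left habel' hν_pos.le)
        _ = (g * ν / τ) * ‖y‖ := by field_simp
  refine ⟨?_, part2⟩
  intro x hx A B hABcard hBm hfA hfB hABdisj ε δ hε hδ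
  -- key construction lemma
  have key : ∀ C : Finset ℕ, Disjoint C (A ∪ B) → A.card + C.card = m →
      ‖τ • (x - ∑ n ∈ C, f n x • e n) + ∑ n ∈ B, δ n • e n‖
        ≤ τ * L * ‖(x - ∑ n ∈ C, f n x • e n) + ∑ n ∈ A, ε n • e n‖ := by
    intro C hCdisj hCcard
    have hCA : Disjoint C A := (Finset.disjoint_union_right.mp hCdisj).1
    have hCB : Disjoint C B := (Finset.disjoint_union_right.mp hCdisj).2
    set z : X := τ • x + ∑ n ∈ A, (τ * ε n) • e n + ∑ n ∈ B, δ n • e n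
      + ∑ n ∈ C, (1 - τ * f n x) • e n with hzdef
    have hfz : ∀ j, f j z = τ * f j x + (if j ∈ A then τ * ε j else 0)
        + (if j ∈ B then δ j else 0) + (if j ∈ C then 1 - τ * f j x else 0) := by
      intro j
      rw [hzdef]
      rw [map_add, map_add, map_add, map_smul, fsum_eq hbi, fsum_eq hbi,
        fsum_eq hbi]
      rfl
    have hfzA : ∀ j ∈ A, f j z = τ * ε j := by
      intro j hj
      rw [hfz, hfA j hj, if_pos hj,
        if_neg (Finset.disjoint_left.mp hABdisj hj),
        if_neg (Finset.disjoint_right.mp hCA hj)]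
      ring
    have hfzB : ∀ j ∈ B, f j z = δ j := by
      intro j hj
      rw [hfz, hfB j hj, if_pos hj,
        if_neg (Finset.disjoint_right.mp hABdisj hj),
        if_neg (Finset.disjoint_right.mp hCB hj)]
      ring
    have hfzC : ∀ j ∈ C, f j z = 1 := by
      intro j hj
      rw [hfz, if_pos hj,
        if_neg (Finset.disjoint_left.mp hCA hj),
        if_neg (Finset.disjoint_left.mp hCB hj)]
      ring
    have hfzout : ∀ j, j ∉ A → j ∉ B → j ∉ C → f j z = τ * f j x := by
      intro j h1 h2 h3
      rw [hfz, if_neg h1, if_neg h2, if_neg h3]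
      ring
    have hgreedyz : ∀ i ∈ A ∪ C, ∀ j ∉ A ∪ C, τ * |f j z| ≤ |f i z| := by
      intro i hi j hj
      have hjA : j ∉ A := fun h => hj (Finset.mem_union_left _ h)
      have hjC : j ∉ C := fun h => hj (Finset.mem_union_right _ h)
      have hjbound : |f j z| ≤ 1 := by
        by_cases hjB : j ∈ B
        · rw [hfzB j hjB, hδ j hjB]
        · rw [hfzout j hjA hjB hjC, abs_mul, abs_of_pos hτ]
          have := hx j
          calc τ * |f j x| ≤ τ * (1/τ) := mul_le_mul_of_nonneg_left this hτ.le
            _ = 1 := by field_simp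
      have hibound : τ ≤ |f i z| := by
        rcases Finset.mem_union.mp hi with hiA | hiC
        · rw [hfzA i hiA, abs_mul, abs_of_pos hτ, hε i hiA, mul_one]
        · rw [hfzC i hiC]
          rw [abs_one]
          exact hτ1
      calc τ * |f j z| ≤ τ * 1 := mul_le_mul_of_nonneg_left hjbound hτ.le
        _ = τ := mul_one τ
        _ ≤ |f i z| := hibound
    have hcard1 : (A ∪ C).card = m := by
      rw [Finset.card_union_of_disjoint hCA.symm]
      omega
    have hcard2 : (B ∪ C).card = m := by
      rw [Finset.card_union_of_disjoint hCB.symm]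
      omega
    have happ := hL z (A ∪ C) hcard1 hgreedyz (B ∪ C) hcard2
    have hCsum : ∑ n ∈ C, (1 - τ * f n x) • e n
        = ∑ n ∈ C, (1:ℝ) • e n - τ • ∑ n ∈ C, f n x • e n := by
      rw [Finset.smul_sum, ← Finset.sum_sub_distrib]
      apply Finset.sum_congr rfl
      intro n _
      rw [smul_smul, ← sub_smul]
    have hAsum : ∑ n ∈ A, (τ * ε n) • e n = τ • ∑ n ∈ A, ε n • e n := by
      rw [Finset.smul_sum]
      apply Finset.sum_congr rfl
      intro n _
      rw [smul_smul]
    have hsum1 : ∑ n ∈ A ∪ C, f n z • e n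
        = ∑ n ∈ A, (τ * ε n) • e n + ∑ n ∈ C, (1:ℝ) • e n := by
      rw [Finset.sum_union hCA.symm]
      congr 1
      · exact Finset.sum_congr rfl (fun n hn => by rw [hfzA n hn])
      · exact Finset.sum_congr rfl (fun n hn => by rw [hfzC n hn])
    have hsum2 : ∑ n ∈ B ∪ C, f n z • e n
        = ∑ n ∈ B, δ n • e n + ∑ n ∈ C, (1:ℝ) • e n := by
      rw [Finset.sum_union hCB.symm]
      congr 1
      · exact Finset.sum_congr rfl (fun n hn => by rw [hfzB n hn])
      · exact Finset.sum_congr rfl (fun n hn => by rw [hfzC n hn])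
    have hz1 : z - ∑ n ∈ A ∪ C, f n z • e n
        = τ • (x - ∑ n ∈ C, f n x • e n) + ∑ n ∈ B, δ n • e n := by
      rw [hsum1, hzdef, hCsum, hAsum, smul_sub]
      abel
    have hz2 : z - ∑ n ∈ B ∪ C, f n z • e n
        = τ • ((x - ∑ n ∈ C, f n x • e n) + ∑ n ∈ A, ε n • e n) := by
      rw [hsum2, hzdef, hCsum, hAsum, smul_add, smul_sub]
      abel
    rw [hz1, hz2, norm_smul, Real.norm_eq_abs, abs_of_pos hτ] at happ
    calc ‖τ • (x - ∑ n ∈ C, f n x • e n) + ∑ n ∈ B, δ n • e n‖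
        ≤ L * (τ * ‖(x - ∑ n ∈ C, f n x • e n) + ∑ n ∈ A, ε n • e n‖) := happ
      _ = τ * L * ‖(x - ∑ n ∈ C, f n x • e n) + ∑ n ∈ A, ε n • e n‖ := by ring
  by_cases hA0 : A = ∅
  · have hB0 : B = ∅ := by
      apply Finset.card_eq_zero.mp
      rw [← hABcard, hA0, Finset.card_empty]
    subst hA0 hB0
    simp only [Finset.sum_empty, add_zero]
    rw [norm_smul, Real.norm_eq_abs, abs_of_pos hτ]
    nlinarith [norm_nonneg x, mul_nonneg hτ.le (norm_nonneg x)]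
  · by_cases hAm : A.card = m
    · have := key ∅ (by simp) (by rw [Finset.card_empty]; omega)
      simpa using this
    · -- perturbation case
      have hA1 : 1 ≤ A.card := Finset.card_pos.mpr (Finset.nonempty_of_ne_empty hA0)
      have hAltm : A.card < m := by
        have : A.card ≤ m := by omega
        omega
      have hm2 : 2 ≤ m := by omega
      -- uniform norm bounds on e
      set c₀ : ℝ := min ‖e 0‖ ‖e 1‖ / ν with hc₀def
      have hc₀pos : 0 < c₀ := by
        rw [hc₀def]
        apply div_pos (lt_min (he_pos 0) (he_pos 1)) hν_pos
      have hlow : ∀ n, c₀ ≤ ‖e n‖ := by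
        intro n
        rw [hc₀def, div_le_iff₀ hν_pos]
        rcases eq_or_ne n 0 with rfl | hn
        · calc min ‖e 0‖ ‖e 1‖ ≤ ‖e 1‖ := min_le_right _ _
            _ ≤ ν * ‖e 0‖ := hν_e 0 1 (by norm_num)
            _ = ‖e 0‖ * ν := by ring
        · calc min ‖e 0‖ ‖e 1‖ ≤ ‖e 0‖ := min_le_left _ _
            _ ≤ ν * ‖e n‖ := hν_e n 0 hn
            _ = ‖e n‖ * ν := by ring
      set E : ℝ := ν * (‖e 0‖ + ‖e 1‖) with hEdef
      have hEpos : 0 < E := by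
        rw [hEdef]
        have := he_pos 0
        have := he_pos 1
        nlinarith
      have hEbound : ∀ n, ‖e n‖ ≤ E := by
        intro n
        rw [hEdef]
        rcases eq_or_ne n 0 with rfl | hn
        · have h1 := hν_e 1 0 (by norm_num)
          nlinarith [he_pos 0, he_pos 1]
        · have h1 := hν_e 0 n hn.symm
          nlinarith [he_pos 0, he_pos 1]
      set F : ℝ := (1 + g) / c₀ with hFdef
      have hFpos : 0 < F := by
        rw [hFdef]
        apply div_pos (by linarith) hc₀pos
      -- coefficient bound on the span
      have hFspan : ∀ u ∈ Submodule.span ℝ (Set.range e), ∀ n, |f n u| ≤ F * ‖u‖ := by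
        intro u hu n
        obtain ⟨co, hco⟩ := Finsupp.mem_span_range_iff_exists_finsupp.mp hu
        have hfu : ∀ j, f j u = co j := by
          intro j
          rw [← hco, Finsupp.sum, fsum_eq hbi]
          by_cases hj : j ∈ co.support
          · rw [if_pos hj]
          · rw [if_neg hj]
            exact (Finsupp.notMem_support_iff.mp hj).symm
        rcases co.support.eq_empty_or_nonempty with hS | hS
        · have : co n = 0 := Finsupp.notMem_support_iff.mp
            (by rw [hS]; exact Finset.notMem_empty n)
          rw [hfu, this, abs_zero]
          positivity
        · obtain ⟨j₀, hj₀S, hj₀max⟩ := Finset.exists_max_image co.support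
            (fun j => |co j|) hS
          have hmax' : ∀ j, |co j| ≤ |co j₀| := by
            intro j
            by_cases hj : j ∈ co.support
            · exact hj₀max j hj
            · rw [Finsupp.notMem_support_iff.mp hj, abs_zero]
              exact abs_nonneg _
          have hgre : ∀ i ∈ ({j₀} : Finset ℕ), ∀ j ∉ ({j₀} : Finset ℕ),
              τ * |f j u| ≤ |f i u| := by
            intro i hi j _
            rw [Finset.mem_singleton] at hi
            rw [hi, hfu, hfu]
            calc τ * |co j| ≤ 1 * |co j| := by nlinarith [abs_nonneg (co j)]
              _ = |co j| := one_mul _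
              _ ≤ |co j₀| := hmax' j
          have hhg := hg u {j₀} (by rw [Finset.card_singleton]; omega) hgre
          rw [Finset.sum_singleton, hfu] at hhg
          have hnorm : |co j₀| * ‖e j₀‖ ≤ (1 + g) * ‖u‖ := by
            calc |co j₀| * ‖e j₀‖ = ‖co j₀ • e j₀‖ := by
                  rw [norm_smul, Real.norm_eq_abs]
              _ = ‖u - (u - co j₀ • e j₀)‖ := by congr 1; abel
              _ ≤ ‖u‖ + ‖u - co j₀ • e j₀‖ := norm_sub_le _ _
              _ ≤ ‖u‖ + g * ‖u‖ := by linarith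
              _ = (1 + g) * ‖u‖ := by ring
          rw [hfu]
          calc |co n| ≤ |co j₀| := hmax' n
            _ ≤ F * ‖u‖ := by
                rw [hFdef, div_mul_eq_mul_div, le_div_iff₀ hc₀pos]
                nlinarith [mul_le_mul_of_nonneg_left (hlow j₀) (abs_nonneg (co j₀))]
      -- coefficient bound everywhere
      have hFall : ∀ (u : X) (n : ℕ), |f n u| ≤ F * ‖u‖ := by
        intro u n
        refine le_of_forall_pos_le_add (fun η' hη' => ?_)
        obtain ⟨y', hy'mem, hy'dist⟩ := Metric.mem_closure_iff.mp (hdense u)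
          (η' / (F + ‖f n‖ + 1)) (by positivity)
        rw [dist_eq_norm] at hy'dist
        have h1 : |f n u| ≤ |f n y'| + |f n (u - y')| := by
          have h0 : f n u = f n y' + f n (u - y') := by rw [map_sub]; ring
          rw [h0]
          exact abs_add_le _ _
        have h2 : |f n y'| ≤ F * ‖y'‖ := hFspan y' hy'mem n
        have h3 : |f n (u - y')| ≤ ‖f n‖ * ‖u - y'‖ := (f n).le_opNorm _
        have h4 : ‖y'‖ ≤ ‖u‖ + ‖u - y'‖ := by
          calc ‖y'‖ = ‖u - (u - y')‖ := by congr 1; abel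
            _ ≤ ‖u‖ + ‖u - y'‖ := norm_sub_le _ _
        have h6 : (F + ‖f n‖ + 1) * (η' / (F + ‖f n‖ + 1)) = η' := by
          field_simp
        have h7 : (F + ‖f n‖) * ‖u - y'‖
            ≤ (F + ‖f n‖) * (η' / (F + ‖f n‖ + 1)) :=
          mul_le_mul_of_nonneg_left hy'dist.le (by positivity)
        have hq : 0 ≤ η' / (F + ‖f n‖ + 1) := by positivity
        have h8 : (F + ‖f n‖) * (η' / (F + ‖f n‖ + 1)) ≤ η' := by nlinarith
        have h9 : F * ‖y'‖ ≤ F * (‖u‖ + ‖u - y'‖) :=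
          mul_le_mul_of_nonneg_left h4 hFpos.le
        nlinarith [norm_nonneg (u - y'), norm_nonneg (f n)]
      -- approximation argument
      refine le_of_forall_pos_le_add (fun η hη => ?_)
      set t : ℕ := m - A.card with htdef
      have ht1 : 1 ≤ t := by omega
      set D : ℝ := τ * (L + 1) * t * F * E + 1 with hDdef
      have hDnn : 0 ≤ τ * (L + 1) * t * F * E := by
        have h1 : (0:ℝ) ≤ (t:ℝ) := Nat.cast_nonneg t
        have h2 : (0:ℝ) ≤ L + 1 := by linarith
        positivity
      have hD0 : 0 < D := by rw [hDdef]; linarith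
      obtain ⟨y, hymem, hydist⟩ := Metric.mem_closure_iff.mp (hdense x)
        (η / D) (by positivity)
      rw [dist_eq_norm] at hydist
      obtain ⟨co, hco⟩ := Finsupp.mem_span_range_iff_exists_finsupp.mp hymem
      set S : Finset ℕ := co.support with hSdef
      have hfy0 : ∀ n, n ∉ S → f n y = 0 := by
        intro n hn
        rw [← hco, Finsupp.sum, fsum_eq hbi, if_neg hn]
      have hinf : (↑(A ∪ B ∪ S) : Set ℕ)ᶜ.Infinite :=
        Set.Finite.infinite_compl (A ∪ B ∪ S).finite_toSet
      obtain ⟨C, hCsub, hCcard⟩ := hinf.exists_subset_card_eq t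
      have hCdisj : Disjoint C (A ∪ B) := by
        rw [Finset.disjoint_left]
        intro n hnC hnAB
        apply hCsub hnC
        simp only [Finset.coe_union, Set.mem_union]
        rcases Finset.mem_union.mp hnAB with h | h
        · exact Or.inl (Or.inl h)
        · exact Or.inl (Or.inr h)
      have hCm : A.card + C.card = m := by rw [hCcard]; omega
      have hsmall : ∀ n ∈ C, |f n x| ≤ F * (η / D) := by
        intro n hnC
        have hnS : n ∉ S := by
          intro h
          apply hCsub hnC
          simp only [Finset.coe_union, Set.mem_union]
          exact Or.inr h
        have h1 : f n x = f n (x - y) := by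
          rw [map_sub, hfy0 n hnS, sub_zero]
        rw [h1]
        calc |f n (x - y)| ≤ F * ‖x - y‖ := hFall _ _
          _ ≤ F * (η / D) := mul_le_mul_of_nonneg_left hydist.le hFpos.le
      have hPC : ‖∑ n ∈ C, f n x • e n‖ ≤ t * (F * (η / D)) * E := by
        calc ‖∑ n ∈ C, f n x • e n‖ ≤ ∑ n ∈ C, ‖f n x • e n‖ :=
              norm_sum_le _ _
          _ ≤ ∑ n ∈ C, F * (η / D) * E := by
              apply Finset.sum_le_sum
              intro n hn
              rw [norm_smul, Real.norm_eq_abs]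
              exact mul_le_mul (hsmall n hn) (hEbound n) (norm_nonneg _)
                (by positivity)
          _ = t * (F * (η / D)) * E := by
              rw [Finset.sum_const, hCcard, nsmul_eq_mul]
              ring
      have hkeyC := key C hCdisj hCm
      have h1 : ‖τ • x + ∑ n ∈ B, δ n • e n‖
          ≤ ‖τ • (x - ∑ n ∈ C, f n x • e n) + ∑ n ∈ B, δ n • e n‖
            + τ * ‖∑ n ∈ C, f n x • e n‖ := by
        have hid : τ • x + ∑ n ∈ B, δ n • e n
            = (τ • (x - ∑ n ∈ C, f n x • e n) + ∑ n ∈ B, δ n • e n)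
              + τ • ∑ n ∈ C, f n x • e n := by
          rw [smul_sub]
          abel
        rw [hid]
        refine (norm_add_le _ _).trans ?_
        rw [norm_smul, Real.norm_eq_abs, abs_of_pos hτ]
      have h2 : ‖(x - ∑ n ∈ C, f n x • e n) + ∑ n ∈ A, ε n • e n‖
          ≤ ‖x + ∑ n ∈ A, ε n • e n‖ + ‖∑ n ∈ C, f n x • e n‖ := by
        have hid : (x - ∑ n ∈ C, f n x • e n) + ∑ n ∈ A, ε n • e n
            = (x + ∑ n ∈ A, ε n • e n) - ∑ n ∈ C, f n x • e n := by abel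
        rw [hid]
        exact norm_sub_le _ _
      have hLnn : (0:ℝ) ≤ τ * L := by nlinarith
      have hfinal : τ * (L + 1) * ‖∑ n ∈ C, f n x • e n‖ ≤ η := by
        have hb : τ * (L + 1) * ‖∑ n ∈ C, f n x • e n‖
            ≤ τ * (L + 1) * (t * (F * (η / D)) * E) := by
          apply mul_le_mul_of_nonneg_left hPC
          nlinarith
        have heq : τ * (L + 1) * (t * (F * (η / D)) * E)
            = (τ * (L + 1) * t * F * E) * η / D := by ring
        rw [heq] at hb
        have hfrac : (τ * (L + 1) * t * F * E) * η / D ≤ η := by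
          rw [div_le_iff₀ hD0, hDdef]
          nlinarith
        linarith
      calc ‖τ • x + ∑ n ∈ B, δ n • e n‖
          ≤ ‖τ • (x - ∑ n ∈ C, f n x • e n) + ∑ n ∈ B, δ n • e n‖
            + τ * ‖∑ n ∈ C, f n x • e n‖ := h1
        _ ≤ τ * L * ‖(x - ∑ n ∈ C, f n x • e n) + ∑ n ∈ A, ε n • e n‖
            + τ * ‖∑ n ∈ C, f n x • e n‖ := by linarith
        _ ≤ τ * L * (‖x + ∑ n ∈ A, ε n • e n‖ + ‖∑ n ∈ C, f n x • e n‖)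
            + τ * ‖∑ n ∈ C, f n x • e n‖ := by
            have := mul_le_mul_of_nonneg_left h2 hLnn
            linarith
        _ = τ * L * ‖x + ∑ n ∈ A, ε n • e n‖
            + τ * (L + 1) * ‖∑ n ∈ C, f n x • e n‖ := by ring
        _ ≤ τ * L * ‖x + ∑ n ∈ A, ε n • e n‖ + η := by linarith
end

section
/- Let X be a Banach space with a Schauder basis (e_n) with basis constant K_b = sup_m ‖S_m‖, where S_m(x) = ∑_{n=1}^m e_n^*(x) e_n. Fix τ ∈ (0,1] and m ∈ ℕ. Let L^{ch}_{m,τ} be the smallest constant such that ‖x − CG(x)‖ ≤ L^{ch}_{m,τ} σ_m(x) for every Chebyshev τ-greedy operator CG of order m (where CG(x) minimizes ‖x − ∑_{n∈Λ} a_n e_n‖ over scalars, for some τ-weak greedy set Λ of x of size m) and σ_m(x) is the best m-term approximation error. Then g_{m,τ}^c ≤ K_b · L^{ch}_{m,τ} (1 + L^{ch}_{m,τ} + L^{ch}_{m,τ} K_b), and consequently L^{ch}_{m,τ} ≥ (1/K_b) (g_{m,τ}^c/3)^{1/2}. -/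
lemma coef_sum {X : Type*} [NormedAddCommGroup X] [NormedSpace ℝ X]
    (e : ℕ → X) (f : ℕ → X →L[ℝ] ℝ)
    (hbi : ∀ i j, f i (e j) = if i = j then (1 : ℝ) else 0)
    (A : Finset ℕ) (c : ℕ → ℝ) (n : ℕ) :
    f n (∑ k ∈ A, c k • e k) = if n ∈ A then c n else 0 := by
  rw [map_sum]
  simp only [map_smul, smul_eq_mul, hbi, mul_ite, mul_one, mul_zero]
  exact Finset.sum_ite_eq A n c

lemma ite_sum_mem {X : Type*} [NormedAddCommGroup X] [NormedSpace ℝ X]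
    (e : ℕ → X) (Λ : Finset ℕ) (N : ℕ) (hΛ : ∀ i ∈ Λ, i < N) (c : ℕ → ℝ) :
    ∑ n ∈ Finset.range N, (if n ∈ Λ then c n else 0) • e n
      = ∑ n ∈ Λ, c n • e n := by
  simp only [ite_smul, zero_smul]
  rw [Finset.sum_ite_mem]
  congr 1
  exact Finset.inter_eq_right.mpr (fun i hi => Finset.mem_range.mpr (hΛ i hi))

lemma key_s8 {X : Type*} [NormedAddCommGroup X] [NormedSpace ℝ X]
    (e : ℕ → X) (f : ℕ → X →L[ℝ] ℝ)
    (hbi : ∀ i j, f i (e j) = if i = j then (1 : ℝ) else 0)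
    (htotal : ∀ x : X, (∀ n, f n x = 0) → x = 0)
    (τ : ℝ) (hτ : 0 < τ) (hτ1 : τ ≤ 1) (m : ℕ)
    (Kb : ℝ) (hKb1 : 1 ≤ Kb)
    (hKb : ∀ (N : ℕ) (x : X),
      ‖∑ n ∈ Finset.range N, f n x • e n‖ ≤ Kb * ‖x‖)
    (L : ℝ) (hL0 : 0 ≤ L)
    (hL : ∀ (x : X) (Λ : Finset ℕ), Λ.card = m →
      (∀ i ∈ Λ, ∀ j ∉ Λ, τ * |f j x| ≤ |f i x|) →
      ∃ b : ℕ → ℝ,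
        (∀ c : ℕ → ℝ,
          ‖x - ∑ n ∈ Λ, b n • e n‖ ≤ ‖x - ∑ n ∈ Λ, c n • e n‖) ∧
        (∀ (A : Finset ℕ) (a : ℕ → ℝ), A.card ≤ m →
          ‖x - ∑ n ∈ Λ, b n • e n‖ ≤ L * ‖x - ∑ n ∈ A, a n • e n‖))
    (x : X) (Λ : Finset ℕ) (hne : Λ.Nonempty) (hcard : Λ.card ≤ m)
    (hgreedy : ∀ i ∈ Λ, ∀ j ∉ Λ, τ * |f j x| ≤ |f i x|)
    (N₀ : ℕ) (hΛN : ∀ i ∈ Λ, i < N₀) (hsupp : ∀ n, N₀ ≤ n → f n x = 0) :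
    ‖x - ∑ n ∈ Λ, f n x • e n‖ ≤ Kb * L * (1 + L + L * Kb) * ‖x‖ := by
  classical
  obtain ⟨i₀, hi₀, hmin⟩ := Finset.exists_min_image Λ (fun i => |f i x|) hne
  set t : ℝ := |f i₀ x| with ht
  have ht0 : 0 ≤ t := abs_nonneg _
  set B₁ : Finset ℕ := Finset.Ico N₀ (N₀ + (m - Λ.card)) with hB₁
  set Γw : Finset ℕ := Finset.Ico N₀ (N₀ + m) with hΓw
  set Γz : Finset ℕ := Λ ∪ B₁ with hΓz
  have hdisj : Disjoint Λ B₁ := by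
    rw [Finset.disjoint_left]
    intro i hi hiB
    have := hΛN i hi
    have := (Finset.mem_Ico.mp hiB).1
    omega
  have hΓzcard : Γz.card = m := by
    rw [hΓz, Finset.card_union_of_disjoint hdisj, Nat.card_Ico]
    omega
  have hΓwcard : Γw.card = m := by rw [hΓw, Nat.card_Ico]; omega
  set T : X := ∑ n ∈ Γw, t • e n with hT
  set z : X := x + T with hz
  set PΛ : X := ∑ n ∈ Λ, f n x • e n with hPΛ
  set w : X := (x - PΛ) + T with hw
  have hfT : ∀ n, f n T = if n ∈ Γw then t else 0 := by
    intro n; exact coef_sum e f hbi Γw (fun _ => t) n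
  have hfPΛ : ∀ n, f n PΛ = if n ∈ Λ then f n x else 0 := by
    intro n; exact coef_sum e f hbi Λ (fun k => f k x) n
  have hfz : ∀ n, f n z = f n x + (if n ∈ Γw then t else 0) := by
    intro n; rw [hz, map_add, hfT]
  have hfw : ∀ n, f n w = (f n x - (if n ∈ Λ then f n x else 0))
      + (if n ∈ Γw then t else 0) := by
    intro n; rw [hw, map_add, map_sub, hfPΛ, hfT]
  have hout : ∀ j ∉ Λ, τ * |f j x| ≤ t := fun j hj => hgreedy i₀ hi₀ j hj
  -- greedy for (z, Γz)
  have hgz : ∀ i ∈ Γz, ∀ j ∉ Γz, τ * |f j z| ≤ |f i z| := by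
    intro i hi j hj
    have hjt : τ * |f j z| ≤ t := by
      rw [hfz]
      by_cases hjN : j < N₀
      · have hjΓw : j ∉ Γw := by rw [hΓw, Finset.mem_Ico]; omega
        have hjΛ : j ∉ Λ := fun h => hj (Finset.mem_union_left _ h)
        rw [if_neg hjΓw, add_zero]
        exact hout j hjΛ
      · have hjx : f j x = 0 := hsupp j (by omega)
        rw [hjx, zero_add]
        by_cases hjΓw : j ∈ Γw
        · rw [if_pos hjΓw, abs_of_nonneg ht0]
          nlinarith
        · rw [if_neg hjΓw]; simpa using ht0
    have hit : t ≤ |f i z| := by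
      rw [hfz]
      rcases Finset.mem_union.mp hi with hiΛ | hiB
      · have hiΓw : i ∉ Γw := by
          have := hΛN i hiΛ; rw [hΓw, Finset.mem_Ico]; omega
        rw [if_neg hiΓw, add_zero]
        exact hmin i hiΛ
      · have hix : f i x = 0 := hsupp i (Finset.mem_Ico.mp hiB).1
        have hiΓw : i ∈ Γw := by
          have := Finset.mem_Ico.mp hiB; rw [hΓw, Finset.mem_Ico]; omega
        rw [hix, zero_add, if_pos hiΓw, abs_of_nonneg ht0]
    linarith
  obtain ⟨b, -, happ⟩ := hL z Γz hΓzcard hgz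
  set G : X := ∑ n ∈ Γz, b n • e n with hG
  set GΛ : X := ∑ n ∈ Λ, b n • e n with hGΛ
  set GB : X := ∑ n ∈ B₁, b n • e n with hGB
  have hGsplit : G = GΛ + GB := by rw [hG, hΓz, Finset.sum_union hdisj]
  set r : X := z - G with hr
  have hrL : ‖r‖ ≤ L * ‖x‖ := by
    have h1 := happ Γw (fun _ => t) (le_of_eq hΓwcard)
    have hzT : z - ∑ n ∈ Γw, (fun _ => t) n • e n = x := by
      rw [hz, hT]; abel
    rw [hzT] at h1
    exact h1
  -- x = S_{N₀} x
  have hxS : x = ∑ n ∈ Finset.range N₀, f n x • e n := by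
    have h0 : ∀ n, f n (x - ∑ k ∈ Finset.range N₀, f k x • e k) = 0 := by
      intro n
      rw [map_sub, coef_sum e f hbi]
      by_cases hn : n ∈ Finset.range N₀
      · rw [if_pos hn, sub_self]
      · rw [if_neg hn, sub_zero]
        exact hsupp n (by simpa using hn)
    exact sub_eq_zero.mp (htotal _ h0)
  -- x - GΛ = S_{N₀} r
  have hxGΛ : x - GΛ = ∑ n ∈ Finset.range N₀, f n r • e n := by
    have hcoef : ∀ n ∈ Finset.range N₀,
        f n r • e n = f n x • e n - (if n ∈ Λ then b n else 0) • e n := by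
      intro n hn
      have hnN : n < N₀ := Finset.mem_range.mp hn
      have hnΓw : n ∉ Γw := by rw [hΓw, Finset.mem_Ico]; omega
      have hfG : f n G = if n ∈ Λ then b n else 0 := by
        rw [hG, coef_sum e f hbi Γz b n]
        by_cases hnΛ : n ∈ Λ
        · rw [if_pos (Finset.mem_union_left _ hnΛ), if_pos hnΛ]
        · rw [if_neg (fun h => ?_), if_neg hnΛ]
          rcases Finset.mem_union.mp h with h' | h'
          · exact hnΛ h'
          · exact absurd (Finset.mem_Ico.mp h').1 (by omega)
      rw [hr, map_sub, hfz, if_neg hnΓw, add_zero, hfG, sub_smul]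
    rw [Finset.sum_congr rfl hcoef, Finset.sum_sub_distrib,
        ite_sum_mem e Λ N₀ hΛN b, ← hGΛ, ← hxS]
  have hxGΛn : ‖x - GΛ‖ ≤ Kb * ‖r‖ := by rw [hxGΛ]; exact hKb N₀ r
  have hGΛn : ‖GΛ‖ ≤ ‖x‖ + Kb * ‖r‖ := by
    calc ‖GΛ‖ = ‖x - (x - GΛ)‖ := by congr 1; abel
    _ ≤ ‖x‖ + ‖x - GΛ‖ := norm_sub_le _ _
    _ ≤ ‖x‖ + Kb * ‖r‖ := by linarith
  -- greedy for (w, Γw)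
  have hgw : ∀ i ∈ Γw, ∀ j ∉ Γw, τ * |f j w| ≤ |f i w| := by
    intro i hi j hj
    have hiI := Finset.mem_Ico.mp hi
    have hiΛ : i ∉ Λ := fun h => by have := hΛN i h; omega
    have hit : |f i w| = t := by
      rw [hfw, if_neg hiΛ, if_pos hi, hsupp i hiI.1, sub_zero, zero_add,
          abs_of_nonneg ht0]
    rw [hit]
    rw [hfw, if_neg hj]
    by_cases hjΛ : j ∈ Λ
    · rw [if_pos hjΛ, sub_self, add_zero]
      simpa using ht0
    · rw [if_neg hjΛ, sub_zero, add_zero]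
      by_cases hjN : j < N₀
      · exact hout j hjΛ
      · rw [hsupp j (by omega)]
        simpa using ht0
  obtain ⟨bw, -, happw⟩ := hL w Γw hΓwcard hgw
  set rw' : X := w - ∑ n ∈ Γw, bw n • e n with hrw'
  -- ‖rw'‖ ≤ L * ‖r + GΛ‖
  have hrwL : ‖rw'‖ ≤ L * ‖r + GΛ‖ := by
    have h1 := happw Γz (fun n => if n ∈ Λ then -(f n x) else b n)
      (le_of_eq hΓzcard)
    have hcomp : w - ∑ n ∈ Γz, (if n ∈ Λ then -(f n x) else b n) • e n
        = r + GΛ := by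
      have hsplit : ∑ n ∈ Γz, (if n ∈ Λ then -(f n x) else b n) • e n
          = (∑ n ∈ Λ, (-(f n x)) • e n) + ∑ n ∈ B₁, b n • e n := by
        rw [hΓz, Finset.sum_union hdisj]
        congr 1
        · exact Finset.sum_congr rfl (fun n hn => by rw [if_pos hn])
        · refine Finset.sum_congr rfl (fun n hn => ?_)
          rw [if_neg (Finset.disjoint_right.mp hdisj hn)]
      rw [hsplit]
      have hnegP : ∑ n ∈ Λ, (-(f n x)) • e n = -PΛ := by
        rw [hPΛ, ← Finset.sum_neg_distrib]
        exact Finset.sum_congr rfl (fun n _ => by rw [neg_smul])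
      rw [hnegP, ← hGB, hr, hGsplit, hw, hz]
      abel
    rw [hcomp] at h1
    exact h1
  -- x - PΛ = S_{N₀} rw'
  have hfinal : x - PΛ = ∑ n ∈ Finset.range N₀, f n rw' • e n := by
    have hcoef : ∀ n ∈ Finset.range N₀,
        f n rw' • e n = f n x • e n - (if n ∈ Λ then f n x else 0) • e n := by
      intro n hn
      have hnN : n < N₀ := Finset.mem_range.mp hn
      have hnΓw : n ∉ Γw := by rw [hΓw, Finset.mem_Ico]; omega
      have hfGw : f n (∑ k ∈ Γw, bw k • e k) = if n ∈ Γw then bw n else 0 :=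
        coef_sum e f hbi Γw bw n
      rw [hrw', map_sub, hfw, if_neg hnΓw, add_zero, hfGw, if_neg hnΓw,
          sub_zero, sub_smul]
    rw [Finset.sum_congr rfl hcoef, Finset.sum_sub_distrib,
        ite_sum_mem e Λ N₀ hΛN (fun n => f n x), ← hPΛ, ← hxS]
  have hfinaln : ‖x - PΛ‖ ≤ Kb * ‖rw'‖ := by rw [hfinal]; exact hKb N₀ rw'
  -- assemble
  have hKb0 : (0:ℝ) ≤ Kb := by linarith
  have hx0 : (0:ℝ) ≤ ‖x‖ := norm_nonneg x
  have hr0 : (0:ℝ) ≤ ‖r‖ := norm_nonneg r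
  calc ‖x - PΛ‖ ≤ Kb * ‖rw'‖ := hfinaln
    _ ≤ Kb * (L * ‖r + GΛ‖) := by
        exact mul_le_mul_of_nonneg_left hrwL hKb0
    _ ≤ Kb * (L * (‖r‖ + ‖GΛ‖)) := by
        have := norm_add_le r GΛ
        exact mul_le_mul_of_nonneg_left
          (mul_le_mul_of_nonneg_left this hL0) hKb0
    _ ≤ Kb * (L * (L * ‖x‖ + (‖x‖ + Kb * (L * ‖x‖)))) := by
        have h2 : ‖r‖ + ‖GΛ‖ ≤ L * ‖x‖ + (‖x‖ + Kb * (L * ‖x‖)) := by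
          have := mul_le_mul_of_nonneg_left hrL hKb0
          linarith
        exact mul_le_mul_of_nonneg_left
          (mul_le_mul_of_nonneg_left h2 hL0) hKb0
    _ = Kb * L * (1 + L + L * Kb) * ‖x‖ := by ring

lemma bound_all {X : Type*} [NormedAddCommGroup X] [NormedSpace ℝ X]
    (e : ℕ → X) (f : ℕ → X →L[ℝ] ℝ)
    (hbi : ∀ i j, f i (e j) = if i = j then (1 : ℝ) else 0)
    (htotal : ∀ x : X, (∀ n, f n x = 0) → x = 0)
    (hdense : Dense (Submodule.span ℝ (Set.range e) : Set X))
    (τ : ℝ) (hτ : 0 < τ) (hτ1 : τ ≤ 1) (m : ℕ)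
    (Kb : ℝ) (hKb1 : 1 ≤ Kb)
    (hKb : ∀ (N : ℕ) (x : X),
      ‖∑ n ∈ Finset.range N, f n x • e n‖ ≤ Kb * ‖x‖)
    (L : ℝ) (hL0 : 0 ≤ L) (hL1 : 1 ≤ L)
    (hL : ∀ (x : X) (Λ : Finset ℕ), Λ.card = m →
      (∀ i ∈ Λ, ∀ j ∉ Λ, τ * |f j x| ≤ |f i x|) →
      ∃ b : ℕ → ℝ,
        (∀ c : ℕ → ℝ,
          ‖x - ∑ n ∈ Λ, b n • e n‖ ≤ ‖x - ∑ n ∈ Λ, c n • e n‖) ∧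
        (∀ (A : Finset ℕ) (a : ℕ → ℝ), A.card ≤ m →
          ‖x - ∑ n ∈ Λ, b n • e n‖ ≤ L * ‖x - ∑ n ∈ A, a n • e n‖))
    (x : X) (Λ : Finset ℕ) (hcard : Λ.card ≤ m)
    (hgreedy : ∀ i ∈ Λ, ∀ j ∉ Λ, τ * |f j x| ≤ |f i x|) :
    ‖x - ∑ n ∈ Λ, f n x • e n‖ ≤ Kb * L * (1 + L + L * Kb) * ‖x‖ := by
  classical
  set C : ℝ := Kb * L * (1 + L + L * Kb) with hC
  have hKL : 1 ≤ Kb * L := by nlinarith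
  have hC1 : 1 ≤ C := by
    have h2 : 1 ≤ 1 + L + L * Kb := by nlinarith
    calc (1:ℝ) = 1 * 1 := by ring
      _ ≤ (Kb * L) * (1 + L + L * Kb) := by
          exact mul_le_mul hKL h2 zero_le_one (by nlinarith)
      _ = C := by rw [hC]
  rcases Finset.eq_empty_or_nonempty Λ with hΛe | hne
  · subst hΛe
    simp only [Finset.sum_empty, sub_zero]
    nlinarith [norm_nonneg x]
  · apply le_of_forall_pos_le_add
    intro ε hε
    set D : ℝ := (1 + C) * (1 + Kb) with hD
    have hD0 : 0 < D := by nlinarith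
    obtain ⟨y, hy_mem, hy_dist⟩ :=
      Metric.mem_closure_iff.mp (hdense x) (ε / D) (by positivity)
    obtain ⟨c, hc⟩ := Finsupp.mem_span_range_iff_exists_finsupp.mp hy_mem
    have hy_sum : y = ∑ i ∈ c.support, c i • e i := hc.symm
    set N : ℕ := (Λ ∪ c.support).sup id + 1 with hN
    have hΛN : ∀ i ∈ Λ, i < N := by
      intro i hi
      have : i ≤ (Λ ∪ c.support).sup id :=
        Finset.le_sup (f := id) (Finset.mem_union_left _ hi)
      omega
    have hcN : ∀ i ∈ c.support, i < N := by
      intro i hi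
      have : i ≤ (Λ ∪ c.support).sup id :=
        Finset.le_sup (f := id) (Finset.mem_union_right _ hi)
      omega
    set xN : X := ∑ n ∈ Finset.range N, f n x • e n with hxN
    have hfxN : ∀ k, f k xN = if k ∈ Finset.range N then f k x else 0 :=
      fun k => coef_sum e f hbi _ _ k
    have hy_eq : y = ∑ n ∈ Finset.range N, f n y • e n := by
      have hfy : ∀ k, f k y = if k ∈ c.support then c k else 0 := by
        intro k; rw [hy_sum]; exact coef_sum e f hbi _ _ k
      calc y = ∑ i ∈ c.support, c i • e i := hy_sum
        _ = ∑ n ∈ Finset.range N, (if n ∈ c.support then c n else 0) • e n :=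
            (ite_sum_mem e c.support N hcN c).symm
        _ = ∑ n ∈ Finset.range N, f n y • e n := by
            exact Finset.sum_congr rfl (fun n _ => by rw [hfy])
    have hyxN : ‖y - xN‖ ≤ Kb * ‖y - x‖ := by
      have heq : y - xN = ∑ n ∈ Finset.range N, f n (y - x) • e n := by
        calc y - xN
            = (∑ n ∈ Finset.range N, f n y • e n)
              - ∑ n ∈ Finset.range N, f n x • e n := by rw [← hy_eq]
          _ = ∑ n ∈ Finset.range N, f n (y - x) • e n := by
              rw [← Finset.sum_sub_distrib]
              exact Finset.sum_congr rfl
                (fun n _ => by rw [map_sub, sub_smul])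
      rw [heq]; exact hKb N (y - x)
    have hxy : ‖x - y‖ ≤ ε / D := by
      rw [← dist_eq_norm]; exact le_of_lt hy_dist
    have hxxN : ‖x - xN‖ ≤ (1 + Kb) * ‖x - y‖ := by
      calc ‖x - xN‖ = ‖(x - y) + (y - xN)‖ := by congr 1; abel
        _ ≤ ‖x - y‖ + ‖y - xN‖ := norm_add_le _ _
        _ ≤ ‖x - y‖ + Kb * ‖y - x‖ := by linarith
        _ = (1 + Kb) * ‖x - y‖ := by rw [norm_sub_rev y x]; ring
    have hgN : ∀ i ∈ Λ, ∀ j ∉ Λ, τ * |f j xN| ≤ |f i xN| := by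
      intro i hi j hj
      have hiN : i ∈ Finset.range N := Finset.mem_range.mpr (hΛN i hi)
      rw [hfxN i, if_pos hiN, hfxN j]
      by_cases hjN : j ∈ Finset.range N
      · rw [if_pos hjN]; exact hgreedy i hi j hj
      · rw [if_neg hjN]; simpa using abs_nonneg (f i x)
    have hsuppN : ∀ n, N ≤ n → f n xN = 0 := by
      intro n hn
      rw [hfxN n, if_neg (by simpa using by omega : n ∉ Finset.range N)]
    have hk := key_s8 e f hbi htotal τ hτ hτ1 m Kb hKb1 hKb L hL0 hL
      xN Λ hne hcard hgN N hΛN hsuppN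
    have hsame : ∑ n ∈ Λ, f n xN • e n = ∑ n ∈ Λ, f n x • e n := by
      refine Finset.sum_congr rfl (fun n hn => ?_)
      rw [hfxN n, if_pos (Finset.mem_range.mpr (hΛN n hn))]
    rw [hsame] at hk
    have hxNn : ‖xN‖ ≤ ‖x‖ + ‖x - xN‖ := by
      calc ‖xN‖ = ‖x - (x - xN)‖ := by congr 1; abel
        _ ≤ ‖x‖ + ‖x - xN‖ := norm_sub_le _ _
    have hC0 : 0 ≤ C := by linarith
    calc ‖x - ∑ n ∈ Λ, f n x • e n‖
        ≤ ‖x - xN‖ + ‖xN - ∑ n ∈ Λ, f n x • e n‖ := by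
          have : x - ∑ n ∈ Λ, f n x • e n
              = (x - xN) + (xN - ∑ n ∈ Λ, f n x • e n) := by abel
          rw [this]; exact norm_add_le _ _
      _ ≤ ‖x - xN‖ + C * ‖xN‖ := by rw [hC]; linarith
      _ ≤ ‖x - xN‖ + C * (‖x‖ + ‖x - xN‖) := by nlinarith
      _ = C * ‖x‖ + (1 + C) * ‖x - xN‖ := by ring
      _ ≤ C * ‖x‖ + (1 + C) * ((1 + Kb) * ‖x - y‖) := by nlinarith
      _ ≤ C * ‖x‖ + (1 + C) * ((1 + Kb) * (ε / D)) := by nlinarith [norm_nonneg (x-y)]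
      _ = C * ‖x‖ + D * (ε / D) := by rw [hD]; ring
      _ = C * ‖x‖ + ε := by rw [mul_div_cancel₀ _ (ne_of_gt hD0)]
      _ = Kb * L * (1 + L + L * Kb) * ‖x‖ + ε := by rw [hC]

/-- Theorem 1.5: `g_{m,τ}^c ≤ K_b·L^{ch}(1 + L^{ch} + L^{ch}K_b)` and
consequently `L^{ch} ≥ (1/K_b)·√(g_{m,τ}^c/3)`, for a Schauder basis with
basis constant `K_b`. -/
theorem stmt_8
    {X : Type*} [NormedAddCommGroup X] [NormedSpace ℝ X] [CompleteSpace X]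
    (e : ℕ → X) (f : ℕ → X →L[ℝ] ℝ)
    (hbi : ∀ i j, f i (e j) = if i = j then (1 : ℝ) else 0)
    (htotal : ∀ x : X, (∀ n, f n x = 0) → x = 0)
    (hdense : Dense (Submodule.span ℝ (Set.range e) : Set X))
    (τ : ℝ) (hτ : 0 < τ) (hτ1 : τ ≤ 1) (m : ℕ)
    (Kb : ℝ) (hKb1 : 1 ≤ Kb)
    (hKb : ∀ (N : ℕ) (x : X),
      ‖∑ n ∈ Finset.range N, f n x • e n‖ ≤ Kb * ‖x‖)
    (g : ℝ)
    -- `g` is the weak quasi-greedy constant `g_{m,τ}^c` (least such bound):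
    (hg_ub : ∀ (x : X) (Λ : Finset ℕ), Λ.card ≤ m →
      (∀ i ∈ Λ, ∀ j ∉ Λ, τ * |f j x| ≤ |f i x|) →
      ‖x - ∑ n ∈ Λ, f n x • e n‖ ≤ g * ‖x‖)
    (hg_least : ∀ c : ℝ,
      (∀ (x : X) (Λ : Finset ℕ), Λ.card ≤ m →
        (∀ i ∈ Λ, ∀ j ∉ Λ, τ * |f j x| ≤ |f i x|) →
        ‖x - ∑ n ∈ Λ, f n x • e n‖ ≤ c * ‖x‖) → g ≤ c)
    (L : ℝ) (hL0 : 0 ≤ L)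
    -- every Chebyshev τ-greedy operator of order m is an `L`-approximation:
    (hL : ∀ (x : X) (Λ : Finset ℕ), Λ.card = m →
      (∀ i ∈ Λ, ∀ j ∉ Λ, τ * |f j x| ≤ |f i x|) →
      ∃ b : ℕ → ℝ,
        (∀ c : ℕ → ℝ,
          ‖x - ∑ n ∈ Λ, b n • e n‖ ≤ ‖x - ∑ n ∈ Λ, c n • e n‖) ∧
        (∀ (A : Finset ℕ) (a : ℕ → ℝ), A.card ≤ m →
          ‖x - ∑ n ∈ Λ, b n • e n‖ ≤ L * ‖x - ∑ n ∈ A, a n • e n‖)) :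
    g ≤ Kb * L * (1 + L + L * Kb) ∧ (1 / Kb) * Real.sqrt (g / 3) ≤ L := by
  classical
  -- Step 1 : L ≥ 1
  have hL1 : 1 ≤ L := by
    set x₀ : X := ∑ n ∈ Finset.range (m + 1), (1 : ℝ) • e n with hx₀
    have hfx₀ : ∀ k, f k x₀ = if k ∈ Finset.range (m + 1) then 1 else 0 :=
      fun k => coef_sum e f hbi _ _ k
    have hg₀ : ∀ i ∈ Finset.range m, ∀ j ∉ Finset.range m,
        τ * |f j x₀| ≤ |f i x₀| := by
      intro i hi j hj
      have him : i ∈ Finset.range (m + 1) := by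
        rw [Finset.mem_range] at hi ⊢; omega
      rw [hfx₀ i, if_pos him, hfx₀ j]
      by_cases hjm : j ∈ Finset.range (m + 1)
      · rw [if_pos hjm]; simpa using hτ1
      · rw [if_neg hjm]; simp
    obtain ⟨b, -, hb2⟩ := hL x₀ (Finset.range m) (Finset.card_range m) hg₀
    set R : X := x₀ - ∑ n ∈ Finset.range m, b n • e n with hR
    have hfR : f m R = 1 := by
      rw [hR, map_sub, hfx₀ m, if_pos (by simp), coef_sum e f hbi,
          if_neg (by simp), sub_zero]
    have hR0 : 0 < ‖R‖ := by
      rw [norm_pos_iff]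
      intro h
      rw [h] at hfR
      simp at hfR
    have := hb2 (Finset.range m) b (le_of_eq (Finset.card_range m))
    rw [← hR] at this
    nlinarith
  -- Step 2 : the bound on g
  have h1 : g ≤ Kb * L * (1 + L + L * Kb) := by
    apply hg_least
    intro x Λ hc hg
    exact bound_all e f hbi htotal hdense τ hτ hτ1 m Kb hKb1 hKb L hL0 hL1 hL
      x Λ hc hg
  refine ⟨h1, ?_⟩
  -- Step 3 : arithmetic
  have hKb0 : (0:ℝ) < Kb := by linarith
  have hKL1 : 1 ≤ Kb * L := by nlinarith
  have h3 : g / 3 ≤ (Kb * L) ^ 2 := by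
    have factA : 0 ≤ Kb * L * (L * (Kb - 1)) :=
      mul_nonneg (mul_nonneg hKb0.le hL0) (mul_nonneg hL0 (by linarith))
    have factB : Kb * L * 1 ≤ Kb * L * (Kb * L) :=
      mul_le_mul_of_nonneg_left hKL1 (mul_nonneg hKb0.le hL0)
    nlinarith [h1, factA, factB]
  have h4 : Real.sqrt (g / 3) ≤ Kb * L := by
    calc Real.sqrt (g / 3) ≤ Real.sqrt ((Kb * L) ^ 2) := Real.sqrt_le_sqrt h3
      _ = Kb * L := Real.sqrt_sq (by positivity)
  calc (1 / Kb) * Real.sqrt (g / 3) ≤ (1 / Kb) * (Kb * L) :=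
        mul_le_mul_of_nonneg_left h4 (by positivity)
    _ = L := by field_simp
end

section
/- Let X be a Banach space with Markushevich basis. Suppose the basis is K_s-suppression unconditional (‖x − P_A(x)‖ ≤ K_s‖x‖ for all x and all finite A) and has C_b-property (A): ‖y + 1_{δB}‖ ≤ C_b ‖y + 1_{εA}‖ whenever ‖y‖_∞ ≤ 1, |A| = |B| finite, A, B, supp(y) pairwise disjoint, and (ε), (δ) are signs. Then for every τ ∈ (0,1], the basis has C_b·K_s-property (A, τ): ‖τx + 1_{δB}‖ ≤ C_b K_s ‖x + 1_{εA}‖ whenever ‖x‖_∞ ≤ 1/τ, |A| = |B| finite, A, B, supp(x) pairwise disjoint, and (ε), (δ) are signs. -/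
/-- Proposition 5.3(1): a `K_s`-suppression unconditional basis with
`C_b`-property (A) has `C_b·K_s`-property (A, τ) for every `τ ∈ (0,1]`. -/
theorem stmt_9
    {X : Type*} [NormedAddCommGroup X] [NormedSpace ℝ X] [CompleteSpace X]
    (e : ℕ → X) (f : ℕ → X →L[ℝ] ℝ)
    (hbi : ∀ i j, f i (e j) = if i = j then (1 : ℝ) else 0)
    (htotal : ∀ x : X, (∀ n, f n x = 0) → x = 0)
    (hdense : Dense (Submodule.span ℝ (Set.range e) : Set X))
    (Ks Cb : ℝ)
    (hKs : ∀ (A : Finset ℕ) (x : X),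
      ‖x - ∑ n ∈ A, f n x • e n‖ ≤ Ks * ‖x‖)
    (hCb : ∀ (y : X), (∀ n, |f n y| ≤ 1) →
      ∀ (A B : Finset ℕ), A.card = B.card →
      (∀ n ∈ A, f n y = 0) → (∀ n ∈ B, f n y = 0) → Disjoint A B →
      ∀ ε δ : ℕ → ℝ, (∀ n ∈ A, |ε n| = 1) → (∀ n ∈ B, |δ n| = 1) →
      ‖y + ∑ n ∈ B, δ n • e n‖ ≤ Cb * ‖y + ∑ n ∈ A, ε n • e n‖) :
    ∀ (τ : ℝ), 0 < τ → τ ≤ 1 →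
      ∀ (x : X), (∀ n, |f n x| ≤ 1 / τ) →
      ∀ (A B : Finset ℕ), A.card = B.card →
      (∀ n ∈ A, f n x = 0) → (∀ n ∈ B, f n x = 0) → Disjoint A B →
      ∀ ε δ : ℕ → ℝ, (∀ n ∈ A, |ε n| = 1) → (∀ n ∈ B, |δ n| = 1) →
      ‖τ • x + ∑ n ∈ B, δ n • e n‖
        ≤ (Cb * Ks) * ‖x + ∑ n ∈ A, ε n • e n‖ := by
  -- e 0 ≠ 0
  have he0 : e 0 ≠ 0 := by
    intro h
    have := hbi 0 0
    simp [h] at this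
  have he0pos : (0:ℝ) < ‖e 0‖ := norm_pos_iff.mpr he0
  -- Ks ≥ 1
  have hKs1 : (1:ℝ) ≤ Ks := by
    have h := hKs ∅ (e 0)
    simp at h
    nlinarith
  have hKspos : (0:ℝ) < Ks := lt_of_lt_of_le one_pos hKs1
  -- Cb ≥ 1
  have hCb1 : (1:ℝ) ≤ Cb := by
    have hb : ∀ n, |f n (e 0)| ≤ 1 := by
      intro n
      rw [hbi]
      split <;> simp
    have h := hCb (e 0) hb ∅ ∅ rfl (by simp) (by simp) (by simp)
      (fun _ => 1) (fun _ => 1) (by simp) (by simp)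
    simp at h
    nlinarith
  -- key: the projections are bounded by Ks
  have hPA : ∀ (A : Finset ℕ) (z : X), ‖∑ n ∈ A, f n z • e n‖ ≤ Ks * ‖z‖ := by
    intro A z
    refine le_of_forall_pos_le_add ?_
    intro η hη
    -- find a span element close to z
    have hz : z ∈ closure (Submodule.span ℝ (Set.range e) : Set X) := hdense z
    obtain ⟨s, hs_mem, hs_close⟩ := Metric.mem_closure_iff.mp hz (η / Ks) (by positivity)
    rw [dist_eq_norm] at hs_close
    obtain ⟨c, hc⟩ := Finsupp.mem_span_range_iff_exists_finsupp.mp hs_mem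
    set D := c.support \ A with hD
    have hdisj : Disjoint A D := Finset.disjoint_sdiff
    have hfs : ∀ n, f n s = c n := by
      intro n
      rw [← hc, Finsupp.sum, map_sum]
      simp only [map_smul, smul_eq_mul, hbi, mul_ite, mul_one, mul_zero,
        Finset.sum_ite_eq]
      split
      · rfl
      · exact (Finsupp.notMem_support_iff.mp (by assumption)).symm
    have hsub : c.support ⊆ A ∪ D := by
      intro n hn
      by_cases hA : n ∈ A
      · exact Finset.mem_union_left _ hA
      · exact Finset.mem_union_right _ (Finset.mem_sdiff.mpr ⟨hn, hA⟩)
    have hPs : ∑ n ∈ A ∪ D, f n s • e n = s := by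
      calc ∑ n ∈ A ∪ D, f n s • e n = ∑ n ∈ A ∪ D, c n • e n :=
            Finset.sum_congr rfl fun n _ => by rw [hfs]
        _ = ∑ n ∈ c.support, c n • e n := by
            refine (Finset.sum_subset hsub fun n _ hn => ?_).symm
            rw [Finsupp.notMem_support_iff.mp hn, zero_smul]
        _ = s := by rw [← hc, Finsupp.sum]
    have hsplit : ∑ n ∈ A, f n z • e n
        = (z - ∑ n ∈ D, f n z • e n)
          - ((z - s) - ∑ n ∈ A ∪ D, f n (z - s) • e n) := by
      have h1 : ∑ n ∈ A ∪ D, f n z • e n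
          = ∑ n ∈ A, f n z • e n + ∑ n ∈ D, f n z • e n :=
        Finset.sum_union hdisj
      have h2 : ∑ n ∈ A ∪ D, f n (z - s) • e n
          = ∑ n ∈ A ∪ D, f n z • e n - ∑ n ∈ A ∪ D, f n s • e n := by
        rw [← Finset.sum_sub_distrib]
        refine Finset.sum_congr rfl fun n _ => ?_
        rw [map_sub, sub_smul]
      rw [h2, h1, hPs]
      abel
    rw [hsplit]
    have t1 := hKs D z
    have t2 := hKs (A ∪ D) (z - s)
    calc ‖(z - ∑ n ∈ D, f n z • e n)
          - ((z - s) - ∑ n ∈ A ∪ D, f n (z - s) • e n)‖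
        ≤ ‖z - ∑ n ∈ D, f n z • e n‖
          + ‖(z - s) - ∑ n ∈ A ∪ D, f n (z - s) • e n‖ := norm_sub_le _ _
      _ ≤ Ks * ‖z‖ + Ks * ‖z - s‖ := add_le_add t1 t2
      _ ≤ Ks * ‖z‖ + Ks * (η / Ks) := by nlinarith
      _ = Ks * ‖z‖ + η := by field_simp
  -- main proof
  intro τ hτ0 hτ1 x hx A B hcard hA hB hAB ε δ hε hδ
  set z := x + ∑ n ∈ A, ε n • e n with hz
  -- coefficients of τ • x are bounded by 1
  have hfy : ∀ n, |f n (τ • x)| ≤ 1 := by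
    intro n
    rw [map_smul, smul_eq_mul, abs_mul, abs_of_pos hτ0]
    calc τ * |f n x| ≤ τ * (1 / τ) := by
          exact mul_le_mul_of_nonneg_left (hx n) (le_of_lt hτ0)
      _ = 1 := by field_simp
  have step1 := hCb (τ • x) hfy A B hcard
    (fun n hn => by rw [map_smul, smul_eq_mul, hA n hn, mul_zero])
    (fun n hn => by rw [map_smul, smul_eq_mul, hB n hn, mul_zero])
    hAB ε δ hε hδ
  -- the A-part of z is exactly ∑ ε n • e n
  have hSA : ∑ n ∈ A, f n z • e n = ∑ n ∈ A, ε n • e n := by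
    refine Finset.sum_congr rfl fun n hn => ?_
    have : f n z = ε n := by
      rw [hz, map_add, hA n hn, map_sum, zero_add]
      simp only [map_smul, smul_eq_mul, hbi, mul_ite, mul_one, mul_zero,
        Finset.sum_ite_eq]
      simp [hn]
    rw [this]
  have hnormSA : ‖∑ n ∈ A, ε n • e n‖ ≤ Ks * ‖z‖ := hSA ▸ hPA A z
  -- key middle step
  have step2 : ‖τ • x + ∑ n ∈ A, ε n • e n‖ ≤ Ks * ‖z‖ := by
    have hdecomp : τ • x + ∑ n ∈ A, ε n • e n
        = τ • z + (1 - τ) • (∑ n ∈ A, ε n • e n) := by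
      rw [hz]
      module
    rw [hdecomp]
    have hzn : (0:ℝ) ≤ ‖z‖ := norm_nonneg _
    calc ‖τ • z + (1 - τ) • (∑ n ∈ A, ε n • e n)‖
        ≤ ‖τ • z‖ + ‖(1 - τ) • (∑ n ∈ A, ε n • e n)‖ := norm_add_le _ _
      _ = τ * ‖z‖ + (1 - τ) * ‖∑ n ∈ A, ε n • e n‖ := by
          rw [norm_smul, norm_smul, Real.norm_eq_abs, Real.norm_eq_abs,
            abs_of_pos hτ0, abs_of_nonneg (by linarith)]
      _ ≤ τ * ‖z‖ + (1 - τ) * (Ks * ‖z‖) := by nlinarith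
      _ ≤ Ks * ‖z‖ := by nlinarith [mul_nonneg (mul_nonneg hτ0.le hzn) (sub_nonneg.mpr hKs1)]
  calc ‖τ • x + ∑ n ∈ B, δ n • e n‖
      ≤ Cb * ‖τ • x + ∑ n ∈ A, ε n • e n‖ := step1
    _ ≤ Cb * (Ks * ‖z‖) := by nlinarith
    _ = (Cb * Ks) * ‖x + ∑ n ∈ A, ε n • e n‖ := by rw [hz]; ring
end

section
/- Let X be a Banach space with Markushevich basis and let 0 < τ₂ < τ₁ ≤ 1. Suppose the basis has C-property (A, τ₂): ‖τ₂ x + 1_{δB}‖ ≤ C ‖x + 1_{εA}‖ whenever ‖x‖_∞ ≤ 1/τ₂, |A| = |B| finite, A, B, supp(x) pairwise disjoint, and (ε), (δ) are signs. Then the basis has (C τ₁/τ₂)-property (A, τ₁): ‖τ₁ x + 1_{δB}‖ ≤ (C τ₁/τ₂) ‖x + 1_{εA}‖ whenever ‖x‖_∞ ≤ 1/τ₁, |A| = |B| finite, A, B, supp(x) pairwise disjoint, and (ε), (δ) are signs. -/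
/-- Proposition 5.3(2): property (A, τ₂) implies (C·τ₁/τ₂)-property (A, τ₁)
for 0 < τ₂ < τ₁ ≤ 1. -/
theorem stmt_10
    {X : Type*} [NormedAddCommGroup X] [NormedSpace ℝ X] [CompleteSpace X]
    (e : ℕ → X) (f : ℕ → X →L[ℝ] ℝ)
    (hbi : ∀ i j, f i (e j) = if i = j then (1 : ℝ) else 0)
    (htotal : ∀ x : X, (∀ n, f n x = 0) → x = 0)
    (hdense : Dense (Submodule.span ℝ (Set.range e) : Set X))
    (τ₁ τ₂ : ℝ) (h2 : 0 < τ₂) (h21 : τ₂ < τ₁) (h1 : τ₁ ≤ 1)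
    (C : ℝ)
    (hC : ∀ (x : X), (∀ n, |f n x| ≤ 1 / τ₂) →
      ∀ (A B : Finset ℕ), A.card = B.card →
      (∀ n ∈ A, f n x = 0) → (∀ n ∈ B, f n x = 0) → Disjoint A B →
      ∀ ε δ : ℕ → ℝ, (∀ n ∈ A, |ε n| = 1) → (∀ n ∈ B, |δ n| = 1) →
      ‖τ₂ • x + ∑ n ∈ B, δ n • e n‖ ≤ C * ‖x + ∑ n ∈ A, ε n • e n‖) :
    ∀ (x : X), (∀ n, |f n x| ≤ 1 / τ₁) →
      ∀ (A B : Finset ℕ), A.card = B.card →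
      (∀ n ∈ A, f n x = 0) → (∀ n ∈ B, f n x = 0) → Disjoint A B →
      ∀ ε δ : ℕ → ℝ, (∀ n ∈ A, |ε n| = 1) → (∀ n ∈ B, |δ n| = 1) →
      ‖τ₁ • x + ∑ n ∈ B, δ n • e n‖
        ≤ (C * τ₁ / τ₂) * ‖x + ∑ n ∈ A, ε n • e n‖ := by
  intro x hx A B hcard hA hB hAB ε δ hε hδ
  have h1pos : (0:ℝ) < τ₁ := h2.trans h21
  -- x satisfies the τ₂ sup-bound
  have hx2 : ∀ n, |f n x| ≤ 1 / τ₂ := fun n =>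
    (hx n).trans (one_div_le_one_div_of_le h2 h21.le)
  set SA : X := ∑ n ∈ A, ε n • e n with hSA
  set SB : X := ∑ n ∈ B, δ n • e n with hSB
  -- two applications of hC, with signs δ and -δ
  have key1 : ‖τ₂ • x + SB‖ ≤ C * ‖x + SA‖ :=
    hC x hx2 A B hcard hA hB hAB ε δ hε hδ
  have key2 : ‖τ₂ • x - SB‖ ≤ C * ‖x + SA‖ := by
    have := hC x hx2 A B hcard hA hB hAB ε (fun n => -δ n) hε
      (fun n hn => by rw [abs_neg]; exact hδ n hn)
    simpa [sub_eq_add_neg, neg_smul, Finset.sum_neg_distrib] using this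
  -- convex combination coefficients
  set a : ℝ := (τ₁ + τ₂) / (2 * τ₁) with ha
  set b : ℝ := (τ₁ - τ₂) / (2 * τ₁) with hb
  have hane : (0:ℝ) ≤ a := by positivity
  have hbne : (0:ℝ) ≤ b := by
    apply div_nonneg (by linarith) (by linarith)
  have hab : a + b = 1 := by
    rw [ha, hb, ← add_div, div_eq_one_iff_eq (by positivity)]; ring
  have hcomb : τ₂ • x + (τ₂ / τ₁) • SB = a • (τ₂ • x + SB) + b • (τ₂ • x - SB) := by
    rw [ha, hb]
    match_scalars <;> field_simp <;> ring
  have heq : τ₁ • x + SB = (τ₁ / τ₂) • (τ₂ • x + (τ₂ / τ₁) • SB) := by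
    match_scalars <;> field_simp
  calc ‖τ₁ • x + SB‖ = (τ₁ / τ₂) * ‖τ₂ • x + (τ₂ / τ₁) • SB‖ := by
        rw [heq, norm_smul, Real.norm_eq_abs, abs_of_pos (by positivity)]
    _ ≤ (τ₁ / τ₂) * (a * ‖τ₂ • x + SB‖ + b * ‖τ₂ • x - SB‖) := by
        apply mul_le_mul_of_nonneg_left _ (by positivity)
        rw [hcomb]
        calc ‖a • (τ₂ • x + SB) + b • (τ₂ • x - SB)‖
            ≤ ‖a • (τ₂ • x + SB)‖ + ‖b • (τ₂ • x - SB)‖ := norm_add_le _ _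
          _ = a * ‖τ₂ • x + SB‖ + b * ‖τ₂ • x - SB‖ := by
              rw [norm_smul, norm_smul, Real.norm_eq_abs, Real.norm_eq_abs,
                abs_of_nonneg hane, abs_of_nonneg hbne]
    _ ≤ (τ₁ / τ₂) * (a * (C * ‖x + SA‖) + b * (C * ‖x + SA‖)) := by
        apply mul_le_mul_of_nonneg_left _ (by positivity)
        exact add_le_add (mul_le_mul_of_nonneg_left key1 hane)
          (mul_le_mul_of_nonneg_left key2 hbne)
    _ = (C * τ₁ / τ₂) * ‖x + SA‖ := by
        rw [← add_mul, hab]; ring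
end

section
/- Let X be the completion of c_00 under a norm ‖·‖ = max{‖·‖₁, ‖·‖_{ℓ₂}}, where ‖·‖₁ is a semi-norm on c_00 and ‖·‖_{ℓ₂} is the ℓ₂ norm, and suppose the unit vectors form a basis. Assume there exists λ ≥ 1 such that for every sign sequence (δ) and every nonempty finite A ⊂ ℕ, ‖1_{δA}‖₁ ≤ λ|A|^{1/2}. Then for every τ ∈ (0,1], finite sets A, B with |A| = |B| = n ≥ 1, A, B, supp(x) pairwise disjoint, x ∈ c_00 with ‖x‖_∞ ≤ 1/τ, and signs (ε), (δ): ‖τx + 1_{δB}‖ ≤ 3λ‖x + 1_{εA}‖. -/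
/-- The `ℓ₂` part of the norm on `c₀₀`. -/
noncomputable def l2norm (x : ℕ →₀ ℝ) : ℝ :=
  Real.sqrt (∑ n ∈ x.support, (x n) ^ 2)

lemma l2norm_eq_of_subset (v : ℕ →₀ ℝ) (s : Finset ℕ) (h : v.support ⊆ s) :
    l2norm v = Real.sqrt (∑ k ∈ s, (v k) ^ 2) := by
  unfold l2norm
  congr 1
  exact Finset.sum_subset h (fun k _ hk => by
    simp [Finsupp.notMem_support_iff.mp hk])

/-- Proposition 5.8: if `‖1_{δA}‖₁ ≤ λ√|A|`, then the norm
`max{‖·‖₁, ‖·‖_{ℓ₂}}` satisfies `(3λ)`-property (A, τ) for all `τ ∈ (0,1]`. -/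
theorem stmt_11
    (n1 : (ℕ →₀ ℝ) → ℝ)
    (hadd : ∀ x y : ℕ →₀ ℝ, n1 (x + y) ≤ n1 x + n1 y)
    (hsmul : ∀ (a : ℝ) (x : ℕ →₀ ℝ), n1 (a • x) = |a| * n1 x)
    (lam : ℝ) (hlam : 1 ≤ lam)
    (hflat : ∀ (A : Finset ℕ) (δ : ℕ → ℝ), A.Nonempty →
      (∀ n ∈ A, |δ n| = 1) →
      n1 (∑ n ∈ A, Finsupp.single n (δ n)) ≤ lam * Real.sqrt A.card)
    (τ : ℝ) (hτ : 0 < τ) (hτ1 : τ ≤ 1)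
    (x : ℕ →₀ ℝ) (hx : ∀ k, |x k| ≤ 1 / τ)
    (A B : Finset ℕ) (hcard : A.card = B.card) (hA : A.Nonempty)
    (hAB : Disjoint A B) (hAx : ∀ n ∈ A, x n = 0) (hBx : ∀ n ∈ B, x n = 0)
    (ε δ : ℕ → ℝ) (hε : ∀ n ∈ A, |ε n| = 1) (hδ : ∀ n ∈ B, |δ n| = 1) :
    max (n1 (τ • x + ∑ n ∈ B, Finsupp.single n (δ n)))
        (l2norm (τ • x + ∑ n ∈ B, Finsupp.single n (δ n)))
      ≤ 3 * lam *
        max (n1 (x + ∑ n ∈ A, Finsupp.single n (ε n)))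
            (l2norm (x + ∑ n ∈ A, Finsupp.single n (ε n))) := by
  classical
  set SA : ℕ →₀ ℝ := ∑ n ∈ A, Finsupp.single n (ε n) with hSA
  set SB : ℕ →₀ ℝ := ∑ n ∈ B, Finsupp.single n (δ n) with hSB
  have hB : B.Nonempty := by
    rw [← Finset.card_pos, ← hcard, Finset.card_pos]; exact hA
  -- coordinate formulas
  have hSAapp : ∀ k, SA k = if k ∈ A then ε k else 0 := by
    intro k
    rw [hSA, Finsupp.finset_sum_apply]
    simp [Finsupp.single_apply]
  have hSBapp : ∀ k, SB k = if k ∈ B then δ k else 0 := by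
    intro k
    rw [hSB, Finsupp.finset_sum_apply]
    simp [Finsupp.single_apply]
  -- n1 is nonnegative
  have hn0 : n1 0 = 0 := by
    have := hsmul 0 0
    simpa using this
  have hneg : ∀ v : ℕ →₀ ℝ, n1 (-v) = n1 v := by
    intro v
    have := hsmul (-1) v
    simpa using this
  have hnneg : ∀ v : ℕ →₀ ℝ, 0 ≤ n1 v := by
    intro v
    have h := hadd v (-v)
    simp [hn0, hneg] at h
    linarith
  set y : ℕ →₀ ℝ := x + SA with hy
  set z : ℕ →₀ ℝ := τ • x + SB with hz
  set S2 : ℝ := ∑ k ∈ x.support, (x k) ^ 2 with hS2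
  have hS2nn : 0 ≤ S2 := Finset.sum_nonneg fun k _ => sq_nonneg _
  have hxA : Disjoint x.support A := by
    rw [Finset.disjoint_left]
    intro k hk hkA
    exact (Finsupp.mem_support_iff.mp hk) (hAx k hkA)
  have hxB : Disjoint x.support B := by
    rw [Finset.disjoint_left]
    intro k hk hkB
    exact (Finsupp.mem_support_iff.mp hk) (hBx k hkB)
  -- l2 of y
  have hl2y : l2norm y = Real.sqrt (S2 + A.card) := by
    have hsub : y.support ⊆ x.support ∪ A := by
      intro k hk
      by_contra hkn
      simp only [Finset.mem_union, not_or] at hkn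
      apply Finsupp.mem_support_iff.mp hk
      have : y k = x k + SA k := rfl
      rw [this, hSAapp, if_neg hkn.2, Finsupp.notMem_support_iff.mp hkn.1, add_zero]
    rw [l2norm_eq_of_subset y _ hsub, Finset.sum_union hxA]
    congr 1
    have h1 : ∑ k ∈ x.support, (y k) ^ 2 = S2 := by
      apply Finset.sum_congr rfl
      intro k hk
      have : y k = x k + SA k := rfl
      rw [this, hSAapp, if_neg (Finset.disjoint_left.mp hxA hk), add_zero]
    have h2 : ∑ k ∈ A, (y k) ^ 2 = (A.card : ℝ) := by
      rw [show ∑ k ∈ A, (y k) ^ 2 = ∑ k ∈ A, 1 from ?_, Finset.sum_const, nsmul_eq_mul, mul_one]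
      apply Finset.sum_congr rfl
      intro k hk
      have : y k = x k + SA k := rfl
      rw [this, hSAapp, if_pos hk, hAx k hk, zero_add, ← sq_abs, hε k hk, one_pow]
    rw [h1, h2]
  -- l2 of z
  have hl2z : l2norm z = Real.sqrt (τ ^ 2 * S2 + B.card) := by
    have hsub : z.support ⊆ x.support ∪ B := by
      intro k hk
      by_contra hkn
      simp only [Finset.mem_union, not_or] at hkn
      apply Finsupp.mem_support_iff.mp hk
      have : z k = τ * x k + SB k := rfl
      rw [this, hSBapp, if_neg hkn.2, Finsupp.notMem_support_iff.mp hkn.1, mul_zero, add_zero]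
    rw [l2norm_eq_of_subset z _ hsub, Finset.sum_union hxB]
    congr 1
    have h1 : ∑ k ∈ x.support, (z k) ^ 2 = τ ^ 2 * S2 := by
      rw [hS2, Finset.mul_sum]
      apply Finset.sum_congr rfl
      intro k hk
      have : z k = τ * x k + SB k := rfl
      rw [this, hSBapp, if_neg (Finset.disjoint_left.mp hxB hk), add_zero, mul_pow]
    have h2 : ∑ k ∈ B, (z k) ^ 2 = (B.card : ℝ) := by
      rw [show ∑ k ∈ B, (z k) ^ 2 = ∑ k ∈ B, 1 from ?_, Finset.sum_const, nsmul_eq_mul, mul_one]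
      apply Finset.sum_congr rfl
      intro k hk
      have : z k = τ * x k + SB k := rfl
      rw [this, hSBapp, if_pos hk, hBx k hk, mul_zero, zero_add, ← sq_abs, hδ k hk, one_pow]
    rw [h1, h2]
  set M : ℝ := max (n1 y) (l2norm y) with hM
  have hMnn : 0 ≤ M := le_trans (hnneg y) (le_max_left _ _)
  -- l2 z ≤ l2 y
  have hl2zy : l2norm z ≤ l2norm y := by
    rw [hl2y, hl2z, ← hcard]
    apply Real.sqrt_le_sqrt
    have hτ2 : τ ^ 2 ≤ 1 := by nlinarith
    have := mul_le_of_le_one_left hS2nn hτ2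
    linarith
  -- √|A| ≤ l2 y
  have hsqrtA : Real.sqrt A.card ≤ l2norm y := by
    rw [hl2y]
    apply Real.sqrt_le_sqrt
    linarith
  have hsqrtA_M : Real.sqrt A.card ≤ M := le_trans hsqrtA (le_max_right _ _)
  -- n1 bounds
  have hSAb : n1 SA ≤ lam * Real.sqrt A.card := hflat A ε hA hε
  have hSBb : n1 SB ≤ lam * Real.sqrt A.card := by
    rw [hcard]; exact hflat B δ hB hδ
  have hn1x : n1 x ≤ n1 y + lam * Real.sqrt A.card := by
    have h := hadd y (-SA)
    have hxy : x = y + -SA := by rw [hy]; abel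
    rw [← hxy, hneg] at h
    linarith
  have hn1τx : n1 (τ • x) ≤ n1 x := by
    rw [hsmul, abs_of_pos hτ]
    nlinarith [hnneg x]
  have hn1z : n1 z ≤ n1 y + 2 * lam * Real.sqrt A.card := by
    have h := hadd (τ • x) SB
    rw [← hz] at h
    linarith
  have hsqrtnn : 0 ≤ Real.sqrt (A.card : ℝ) := Real.sqrt_nonneg _
  have hlamnn : (0:ℝ) ≤ lam := by linarith
  -- put together
  have hfin1 : n1 z ≤ 3 * lam * M := by
    have hn1yM : n1 y ≤ M := le_max_left _ _
    have h1 : lam * Real.sqrt A.card ≤ lam * M :=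
      mul_le_mul_of_nonneg_left hsqrtA_M hlamnn
    have h2 : 0 ≤ (lam - 1) * M := mul_nonneg (by linarith) hMnn
    linarith
  have hfin2 : l2norm z ≤ 3 * lam * M := by
    have : l2norm y ≤ M := le_max_right _ _
    have h3 : 0 ≤ (3 * lam - 1) * M := mul_nonneg (by linarith) hMnn
    linarith
  exact max_le hfin1 hfin2
end

section
/- Let X be a Banach space with Markushevich basis. Suppose there exist a function f: ℕ → (0,∞) and constants c₁, c₂ > 0 such that ‖1_{εΛ}‖ ≤ c₁ f(|Λ|) and ‖1_{εΛ} + x‖ ≥ c₂ f(|Λ|) for every nonempty finite Λ ⊂ ℕ, every sign (ε), and every x ∈ X with ‖x‖_∞ ≤ 1/τ and supp(x) ∩ Λ = ∅. Then the basis has (2τ+1)·c₁/c₂-property (A, τ): ‖τx + 1_{δB}‖ ≤ ((2τ+1)c₁/c₂)‖x + 1_{εA}‖ for all x with ‖x‖_∞ ≤ 1/τ, finite A, B with |A| = |B|, A, B, supp(x) pairwise disjoint, and signs (ε), (δ). -/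
/-- Theorem 5.11, (2) ⇒ (1): the existence of `f`, `c₁`, `c₂` with
`‖1_{εΛ}‖ ≤ c₁ f(|Λ|)` and `‖1_{εΛ} + x‖ ≥ c₂ f(|Λ|)` implies
`((2τ+1)c₁/c₂)`-property (A, τ). -/
theorem stmt_16
    {X : Type*} [NormedAddCommGroup X] [NormedSpace ℝ X] [CompleteSpace X]
    (e : ℕ → X) (fc : ℕ → X →L[ℝ] ℝ)
    (hbi : ∀ i j, fc i (e j) = if i = j then (1 : ℝ) else 0)
    (htotal : ∀ x : X, (∀ n, fc n x = 0) → x = 0)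
    (hdense : Dense (Submodule.span ℝ (Set.range e) : Set X))
    (τ : ℝ) (hτ : 0 < τ) (hτ1 : τ ≤ 1)
    (f : ℕ → ℝ) (hf : ∀ n, 0 < f n)
    (c₁ c₂ : ℝ) (hc₁ : 0 < c₁) (hc₂ : 0 < c₂)
    (hub : ∀ (Λ : Finset ℕ), Λ.Nonempty → ∀ ε : ℕ → ℝ,
      (∀ n ∈ Λ, |ε n| = 1) → ‖∑ n ∈ Λ, ε n • e n‖ ≤ c₁ * f Λ.card)
    (hlb : ∀ (Λ : Finset ℕ), Λ.Nonempty → ∀ ε : ℕ → ℝ,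
      (∀ n ∈ Λ, |ε n| = 1) → ∀ x : X, (∀ n, |fc n x| ≤ 1 / τ) →
      (∀ n ∈ Λ, fc n x = 0) →
      c₂ * f Λ.card ≤ ‖(∑ n ∈ Λ, ε n • e n) + x‖) :
    ∀ (x : X), (∀ n, |fc n x| ≤ 1 / τ) →
      ∀ (A B : Finset ℕ), A.card = B.card →
      (∀ n ∈ A, fc n x = 0) → (∀ n ∈ B, fc n x = 0) → Disjoint A B →
      ∀ ε δ : ℕ → ℝ, (∀ n ∈ A, |ε n| = 1) → (∀ n ∈ B, |δ n| = 1) →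
      ‖τ • x + ∑ n ∈ B, δ n • e n‖
        ≤ ((2 * τ + 1) * c₁ / c₂) * ‖x + ∑ n ∈ A, ε n • e n‖ := by
  intro x hx A B hcard hA hB hAB ε δ hε hδ
  -- First establish c₂ ≤ c₁
  have hc21 : c₂ ≤ c₁ := by
    have h1 := hub {0} (by simp) (fun _ => 1) (by simp)
    have h2 := hlb {0} (by simp) (fun _ => 1) (by simp) 0
      (fun n => by simp; positivity) (by simp)
    simp only [Finset.card_singleton, Finset.sum_singleton, one_smul, add_zero] at h1 h2
    exact le_of_mul_le_mul_right (h2.trans h1) (hf 1)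
  rcases A.eq_empty_or_nonempty with rfl | hAne
  · have hB0 : B = ∅ := Finset.card_eq_zero.mp (by simpa using hcard.symm)
    subst hB0
    simp only [Finset.sum_empty, add_zero, norm_smul, Real.norm_eq_abs,
      abs_of_pos hτ]
    have hcc : τ ≤ (2 * τ + 1) * c₁ / c₂ := by
      rw [le_div_iff₀ hc₂]
      nlinarith
    exact mul_le_mul_of_nonneg_right hcc (norm_nonneg _)
  · have hBne : B.Nonempty := Finset.card_pos.mp (hcard ▸ Finset.card_pos.mpr hAne)
    set SA := ∑ n ∈ A, ε n • e n with hSA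
    set SB := ∑ n ∈ B, δ n • e n with hSB
    have h1 : ‖SB‖ ≤ c₁ * f A.card := by
      have := hub B hBne δ hδ
      rwa [← hcard] at this
    have h2 : c₂ * f A.card ≤ ‖x + SA‖ := by
      have := hlb A hAne ε hε x hx hA
      rwa [add_comm] at this
    have h3 : ‖x‖ ≤ ‖x + SA‖ + c₁ * f A.card := by
      have h4 := hub A hAne ε hε
      calc ‖x‖ = ‖(x + SA) - SA‖ := by rw [add_sub_cancel_right]
        _ ≤ ‖x + SA‖ + ‖SA‖ := norm_sub_le _ _
        _ ≤ ‖x + SA‖ + c₁ * f A.card := by linarith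
    have h5 : ‖τ • x + SB‖ ≤ τ * ‖x‖ + c₁ * f A.card := by
      calc ‖τ • x + SB‖ ≤ ‖τ • x‖ + ‖SB‖ := norm_add_le _ _
        _ = τ * ‖x‖ + ‖SB‖ := by rw [norm_smul, Real.norm_eq_abs, abs_of_pos hτ]
        _ ≤ τ * ‖x‖ + c₁ * f A.card := by linarith
    have hfA : 0 < f A.card := hf _
    have hN : 0 ≤ ‖x + SA‖ := norm_nonneg _
    rw [div_mul_eq_mul_div, le_div_iff₀ hc₂]
    nlinarith [mul_le_mul_of_nonneg_left h3 (le_of_lt hτ),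
      mul_le_mul_of_nonneg_left h2 (le_of_lt hτ),
      mul_le_mul_of_nonneg_right hc21 hN]
end

section
/- Let X be a Banach space with a C_w-quasi-greedy Markushevich basis, i.e., ‖P_Λ(x)‖ ≤ C_w‖x‖ for every x ∈ X and every greedy set Λ of x. Assume additionally the truncation estimate: for any x and finite sets A₁ ⊂ A₂ with τ ≤ |e_n^*(x)| ≤ 1 for all n ∈ A₂, one has ‖P_{A₁}(x)‖ ≤ (8C_w³/τ)‖P_{A₂}(x)‖. Then for every τ ∈ (0,1], every x ∈ X, and every τ-weak greedy set A of x (of any finite size), ‖x − P_A(x)‖ ≤ (1 + C_w + 16C_w⁴/τ)‖x‖. -/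
set_option maxHeartbeats 1000000 in
/-- Theorem 6.1 (Konyagin–Temlyakov, improved): a `C_w`-quasi-greedy basis
satisfying the truncation estimate is `(1 + C_w + 16C_w⁴/τ, τ)`-quasi-greedy. -/
theorem stmt_17
    {X : Type*} [NormedAddCommGroup X] [NormedSpace ℝ X] [CompleteSpace X]
    (e : ℕ → X) (f : ℕ → X →L[ℝ] ℝ)
    (hbi : ∀ i j, f i (e j) = if i = j then (1 : ℝ) else 0)
    (htotal : ∀ x : X, (∀ n, f n x = 0) → x = 0)
    (hdense : Dense (Submodule.span ℝ (Set.range e) : Set X))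
    (Cw : ℝ) (hCw1 : 1 ≤ Cw)
    (hCw : ∀ (x : X) (Λ : Finset ℕ),
      (∀ i ∈ Λ, ∀ j ∉ Λ, |f j x| ≤ |f i x|) →
      ‖∑ n ∈ Λ, f n x • e n‖ ≤ Cw * ‖x‖)
    (τ : ℝ) (hτ : 0 < τ) (hτ1 : τ ≤ 1)
    (htrunc : ∀ (x : X) (A₁ A₂ : Finset ℕ), A₁ ⊆ A₂ →
      (∀ n ∈ A₂, τ ≤ |f n x| ∧ |f n x| ≤ 1) →
      ‖∑ n ∈ A₁, f n x • e n‖ ≤ (8 * Cw ^ 3 / τ) * ‖∑ n ∈ A₂, f n x • e n‖) :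
    ∀ (x : X) (A : Finset ℕ),
      (∀ i ∈ A, ∀ j ∉ A, τ * |f j x| ≤ |f i x|) →
      ‖x - ∑ n ∈ A, f n x • e n‖ ≤ (1 + Cw + 16 * Cw ^ 4 / τ) * ‖x‖ := by
  classical
  intro x A hA
  have hCwpos : (0:ℝ) < Cw := lt_of_lt_of_le one_pos hCw1
  have hMpos : (0:ℝ) < 16 * Cw ^ 4 / τ := by
    apply div_pos _ hτ
    nlinarith [pow_pos hCwpos 4]
  -- coefficient computation lemma
  have hsum_coef : ∀ (S : Finset ℕ) (g : ℕ → ℝ) (m : ℕ),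
      f m (∑ n ∈ S, g n • e n) = if m ∈ S then g m else 0 := by
    intro S g m
    rw [map_sum]
    have h1 : ∀ n ∈ S, f m (g n • e n) = if m = n then g n else 0 := by
      intro n _
      rw [map_smul, hbi m n, smul_eq_mul, mul_ite, mul_one, mul_zero]
    rw [Finset.sum_congr rfl h1, Finset.sum_ite_eq S m g]
  rcases A.eq_empty_or_nonempty with hAe | hAne
  · -- A empty
    rw [hAe]
    simp only [Finset.sum_empty, sub_zero]
    nlinarith [norm_nonneg x, mul_nonneg (le_of_lt hMpos) (norm_nonneg x),
      mul_nonneg (le_of_lt hCwpos) (norm_nonneg x)]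
  obtain ⟨i₀, hi₀A, hi₀⟩ := A.exists_min_image (fun n => |f n x|) hAne
  set β := |f i₀ x| with hβdef
  have hout : ∀ j ∉ A, |f j x| ≤ β / τ := by
    intro j hj
    rw [le_div_iff₀ hτ]
    have := hA i₀ hi₀A j hj
    linarith
  rcases eq_or_lt_of_le (abs_nonneg (f i₀ x)) with hβ0 | hβpos
  · -- β = 0 : all outside coefficients vanish, x = P_A x by totality
    rw [← hβdef] at hβ0
    have hzero : ∀ m, f m (x - ∑ n ∈ A, f n x • e n) = 0 := by
      intro m
      rw [map_sub, hsum_coef A (fun n => f n x) m]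
      by_cases hm : m ∈ A
      · simp [hm]
      · simp only [hm, if_false, sub_zero]
        have h1 := hA i₀ hi₀A m hm
        rw [← hβdef, ← hβ0] at h1
        have habs : |f m x| = 0 := by
          by_contra hne
          have h3 : 0 < |f m x| := lt_of_le_of_ne (abs_nonneg _) (Ne.symm hne)
          have h4 : 0 < τ * |f m x| := mul_pos hτ h3
          linarith
        exact abs_eq_zero.mp habs
    have h0 := htotal _ hzero
    rw [h0, norm_zero]
    have hc1 : (0:ℝ) ≤ 1 + Cw + 16 * Cw ^ 4 / τ := by linarith
    exact mul_nonneg hc1 (norm_nonneg x)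
  · -- main case : β > 0
    rw [← hβdef] at hβpos
    set A₁ := A.filter (fun n => β / τ < |f n x|) with hA₁def
    set D := A.filter (fun n => ¬ (β / τ < |f n x|)) with hDdef
    have hsplit : ∑ n ∈ A₁, f n x • e n + ∑ n ∈ D, f n x • e n = ∑ n ∈ A, f n x • e n :=
      Finset.sum_filter_add_sum_filter_not A (fun n => β / τ < |f n x|) _
    -- A₁ is a greedy set of x
    have hA₁bound : ‖∑ n ∈ A₁, f n x • e n‖ ≤ Cw * ‖x‖ := by
      apply hCw
      intro i hi j hj
      have hip : β / τ < |f i x| := (Finset.mem_filter.mp hi).2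
      by_cases hjA : j ∈ A
      · have hjp : ¬ (β / τ < |f j x|) := fun hpj => hj (Finset.mem_filter.mpr ⟨hjA, hpj⟩)
        exact le_of_lt (lt_of_le_of_lt (le_of_not_gt hjp) hip)
      · exact le_of_lt (lt_of_le_of_lt (hout j hjA) hip)
    -- the key bound on the D-part
    have hDbound : ‖∑ n ∈ D, f n x • e n‖ ≤ (16 * Cw ^ 4 / τ) * ‖x‖ := by
      apply le_of_forall_pos_le_add
      intro δ hδ
      set M := 16 * Cw ^ 4 / τ with hMdef
      set CA := ∑ n ∈ A, ‖f n‖ * ‖e n‖ with hCAdef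
      have hCA0 : 0 ≤ CA := Finset.sum_nonneg (fun n _ => mul_nonneg (norm_nonneg _) (norm_nonneg _))
      have hCA1 : (0:ℝ) < 1 + CA := by linarith
      have hεpos : 0 < (δ / M) / (1 + CA) := div_pos (div_pos hδ hMpos) hCA1
      obtain ⟨y, hyS, hyd⟩ := Metric.mem_closure_iff.mp (hdense x) _ hεpos
      obtain ⟨c, hc⟩ := Finsupp.mem_span_range_iff_exists_finsupp.mp (SetLike.mem_coe.mp hyS)
      have hfy : ∀ n, f n y = c n := by
        intro n
        have hcs : (c.sum fun i a => a • e i) = ∑ i ∈ c.support, c i • e i := rfl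
        rw [← hc, hcs, hsum_coef c.support (fun i => c i) n]
        by_cases h : n ∈ c.support
        · simp [h]
        · simp only [h, if_false]
          exact (Finsupp.notMem_support_iff.mp h).symm
      -- the corrected approximant Y : coefficients of Y agree with those of x on A
      set Y := y + ∑ n ∈ A, (f n x - f n y) • e n with hYdef
      have hfY : ∀ m, f m Y = if m ∈ A then f m x else f m y := by
        intro m
        rw [hYdef, map_add, hsum_coef A (fun n => f n x - f n y) m]
        by_cases hm : m ∈ A
        · simp only [hm, if_true]
          ring
        · simp only [hm, if_false, add_zero]
      have hfYA : ∀ m ∈ A, f m Y = f m x := by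
        intro m hm
        rw [hfY]
        simp [hm]
      -- norm control : ‖Y‖ ≤ ‖x‖ + δ/M
      have hxy : ‖x - y‖ < (δ / M) / (1 + CA) := by
        rw [← dist_eq_norm]; exact hyd
      have hsum_norm : ‖∑ n ∈ A, (f n x - f n y) • e n‖ ≤ CA * ‖x - y‖ := by
        calc ‖∑ n ∈ A, (f n x - f n y) • e n‖
            ≤ ∑ n ∈ A, ‖(f n x - f n y) • e n‖ := norm_sum_le _ _
          _ ≤ ∑ n ∈ A, (‖f n‖ * ‖e n‖) * ‖x - y‖ := by
              apply Finset.sum_le_sum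
              intro n _
              rw [norm_smul, Real.norm_eq_abs]
              have h1 : |f n x - f n y| ≤ ‖f n‖ * ‖x - y‖ := by
                have h2 := (f n).le_opNorm (x - y)
                rw [map_sub] at h2
                calc |f n x - f n y| = ‖f n x - f n y‖ := (Real.norm_eq_abs _).symm
                  _ ≤ ‖f n‖ * ‖x - y‖ := h2
              calc |f n x - f n y| * ‖e n‖ ≤ (‖f n‖ * ‖x - y‖) * ‖e n‖ :=
                    mul_le_mul_of_nonneg_right h1 (norm_nonneg _)
                _ = (‖f n‖ * ‖e n‖) * ‖x - y‖ := by ring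
          _ = CA * ‖x - y‖ := by rw [hCAdef, Finset.sum_mul]
      have hYx : ‖Y - x‖ ≤ δ / M := by
        have hYmx : Y - x = (y - x) + ∑ n ∈ A, (f n x - f n y) • e n := by
          rw [hYdef]; abel
        have h2 : ‖Y - x‖ ≤ ‖y - x‖ + CA * ‖x - y‖ := by
          rw [hYmx]
          exact le_trans (norm_add_le _ _) (by linarith [hsum_norm])
        have h3 : ‖y - x‖ = ‖x - y‖ := norm_sub_rev y x
        have h4 : ‖x - y‖ * (1 + CA) ≤ ((δ / M) / (1 + CA)) * (1 + CA) :=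
          mul_le_mul_of_nonneg_right (le_of_lt hxy) (le_of_lt hCA1)
        rw [div_mul_cancel₀ _ (ne_of_gt hCA1)] at h4
        calc ‖Y - x‖ ≤ ‖x - y‖ + CA * ‖x - y‖ := by linarith
          _ = ‖x - y‖ * (1 + CA) := by ring
          _ ≤ δ / M := h4
      have hYnorm : ‖Y‖ ≤ ‖x‖ + δ / M := by
        have h5 : Y = x + (Y - x) := by abel
        calc ‖Y‖ = ‖x + (Y - x)‖ := by rw [← h5]
          _ ≤ ‖x‖ + ‖Y - x‖ := norm_add_le _ _
          _ ≤ ‖x‖ + δ / M := by linarith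
      -- Y has finite support S₀
      set S₀ := c.support ∪ A with hS₀def
      have hY0 : ∀ m, m ∉ S₀ → f m Y = 0 := by
        intro m hm
        have hmA : m ∉ A := fun h => hm (Finset.mem_union_right _ h)
        have hmc : m ∉ c.support := fun h => hm (Finset.mem_union_left _ h)
        rw [hfY]
        simp only [hmA, if_false]
        rw [hfy m]
        exact Finsupp.notMem_support_iff.mp hmc
      -- threshold sets of Y
      set G := S₀.filter (fun n => β ≤ |f n Y|) with hGdef
      set H := S₀.filter (fun n => β / τ < |f n Y|) with hHdef
      have hGbound : ‖∑ n ∈ G, f n Y • e n‖ ≤ Cw * ‖Y‖ := by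
        apply hCw
        intro i hi j hj
        have hib : β ≤ |f i Y| := (Finset.mem_filter.mp hi).2
        by_cases hjS : j ∈ S₀
        · have hjb : ¬ (β ≤ |f j Y|) := fun h => hj (Finset.mem_filter.mpr ⟨hjS, h⟩)
          linarith [lt_of_not_ge hjb]
        · rw [hY0 j hjS, abs_zero]
          exact le_trans (abs_nonneg _) hib
      have hHbound : ‖∑ n ∈ H, f n Y • e n‖ ≤ Cw * ‖Y‖ := by
        apply hCw
        intro i hi j hj
        have hib : β / τ < |f i Y| := (Finset.mem_filter.mp hi).2
        by_cases hjS : j ∈ S₀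
        · have hjb : ¬ (β / τ < |f j Y|) := fun h => hj (Finset.mem_filter.mpr ⟨hjS, h⟩)
          linarith [le_of_not_gt hjb]
        · rw [hY0 j hjS, abs_zero]
          linarith [abs_nonneg (f i Y)]
      have hββτ : β ≤ β / τ := by
        rw [le_div_iff₀ hτ]
        nlinarith
      have hHG : H ⊆ G := by
        intro n hn
        obtain ⟨hnS, hnb⟩ := Finset.mem_filter.mp hn
        exact Finset.mem_filter.mpr ⟨hnS, by linarith⟩
      have hDsub : D ⊆ G \ H := by
        intro n hn
        obtain ⟨hnA, hnp⟩ := Finset.mem_filter.mp hn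
        have hfnY : f n Y = f n x := hfYA n hnA
        refine Finset.mem_sdiff.mpr ⟨Finset.mem_filter.mpr ⟨Finset.mem_union_right _ hnA, ?_⟩, ?_⟩
        · rw [hfnY]
          exact hi₀ n hnA
        · intro hmem
          have := (Finset.mem_filter.mp hmem).2
          rw [hfnY] at this
          exact hnp this
      -- apply the truncation estimate to (τ/β) • Y
      have hβne : β ≠ 0 := ne_of_gt hβpos
      have hτβpos : 0 < τ / β := div_pos hτ hβpos
      have hband : ∀ n ∈ G \ H, τ ≤ |f n ((τ/β) • Y)| ∧ |f n ((τ/β) • Y)| ≤ 1 := by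
        intro n hn
        obtain ⟨hnG, hnH⟩ := Finset.mem_sdiff.mp hn
        obtain ⟨hnS, hnlow⟩ := Finset.mem_filter.mp hnG
        have hnhigh : |f n Y| ≤ β / τ :=
          le_of_not_gt (fun h => hnH (Finset.mem_filter.mpr ⟨hnS, h⟩))
        have habs : |f n ((τ/β) • Y)| = (τ/β) * |f n Y| := by
          rw [map_smul, smul_eq_mul, abs_mul, abs_of_pos hτβpos]
        constructor
        · rw [habs]
          have h6 : (τ/β) * β ≤ (τ/β) * |f n Y| :=
            mul_le_mul_of_nonneg_left hnlow (le_of_lt hτβpos)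
          calc τ = (τ/β) * β := by field_simp
            _ ≤ (τ/β) * |f n Y| := h6
        · rw [habs]
          have h7 : (τ/β) * |f n Y| ≤ (τ/β) * (β/τ) :=
            mul_le_mul_of_nonneg_left hnhigh (le_of_lt hτβpos)
          calc (τ/β) * |f n Y| ≤ (τ/β) * (β/τ) := h7
            _ = 1 := by field_simp
      have htr := htrunc ((τ/β) • Y) D (G \ H) hDsub hband
      have hscale : ∀ (S : Finset ℕ),
          ∑ n ∈ S, f n ((τ/β) • Y) • e n = (τ/β) • ∑ n ∈ S, f n Y • e n := by
        intro S
        rw [Finset.smul_sum]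
        apply Finset.sum_congr rfl
        intro n _
        rw [map_smul, smul_eq_mul, mul_smul]
      rw [hscale D, hscale (G \ H)] at htr
      rw [norm_smul, norm_smul, Real.norm_eq_abs, abs_of_pos hτβpos] at htr
      have htr2 : ‖∑ n ∈ D, f n Y • e n‖ ≤ (8 * Cw ^ 3 / τ) * ‖∑ n ∈ (G \ H), f n Y • e n‖ := by
        have h8 : (τ/β) * ‖∑ n ∈ D, f n Y • e n‖
            ≤ (τ/β) * ((8 * Cw ^ 3 / τ) * ‖∑ n ∈ (G \ H), f n Y • e n‖) := by
          calc (τ/β) * ‖∑ n ∈ D, f n Y • e n‖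
              ≤ 8 * Cw ^ 3 / τ * ((τ/β) * ‖∑ n ∈ (G \ H), f n Y • e n‖) := htr
            _ = (τ/β) * ((8 * Cw ^ 3 / τ) * ‖∑ n ∈ (G \ H), f n Y • e n‖) := by ring
        exact le_of_mul_le_mul_left h8 hτβpos
      have hDYx : ∑ n ∈ D, f n Y • e n = ∑ n ∈ D, f n x • e n := by
        apply Finset.sum_congr rfl
        intro n hn
        rw [hfYA n (Finset.mem_filter.mp hn).1]
      have hGH : ‖∑ n ∈ (G \ H), f n Y • e n‖ ≤ 2 * Cw * ‖Y‖ := by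
        rw [Finset.sum_sdiff_eq_sub hHG]
        calc ‖∑ n ∈ G, f n Y • e n - ∑ n ∈ H, f n Y • e n‖
            ≤ ‖∑ n ∈ G, f n Y • e n‖ + ‖∑ n ∈ H, f n Y • e n‖ := norm_sub_le _ _
          _ ≤ Cw * ‖Y‖ + Cw * ‖Y‖ := add_le_add hGbound hHbound
          _ = 2 * Cw * ‖Y‖ := by ring
      have hK₀ : (0:ℝ) ≤ 8 * Cw ^ 3 / τ := by
        apply div_nonneg _ (le_of_lt hτ)
        nlinarith [pow_pos hCwpos 3]
      have h2Cw : (0:ℝ) ≤ 2 * Cw := by linarith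
      calc ‖∑ n ∈ D, f n x • e n‖
          = ‖∑ n ∈ D, f n Y • e n‖ := by rw [hDYx]
        _ ≤ (8 * Cw ^ 3 / τ) * ‖∑ n ∈ (G \ H), f n Y • e n‖ := htr2
        _ ≤ (8 * Cw ^ 3 / τ) * (2 * Cw * ‖Y‖) := mul_le_mul_of_nonneg_left hGH hK₀
        _ ≤ (8 * Cw ^ 3 / τ) * (2 * Cw * (‖x‖ + δ / M)) :=
            mul_le_mul_of_nonneg_left (mul_le_mul_of_nonneg_left hYnorm h2Cw) hK₀
        _ = M * (‖x‖ + δ / M) := by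
            rw [hMdef]
            field_simp
            ring
        _ = M * ‖x‖ + M * (δ / M) := by ring
        _ = M * ‖x‖ + δ := by
            rw [mul_comm M (δ / M), div_mul_cancel₀ _ (ne_of_gt hMpos)]
    -- assemble
    rw [← hsplit]
    calc ‖x - (∑ n ∈ A₁, f n x • e n + ∑ n ∈ D, f n x • e n)‖
        ≤ ‖x‖ + ‖∑ n ∈ A₁, f n x • e n + ∑ n ∈ D, f n x • e n‖ := norm_sub_le _ _
      _ ≤ ‖x‖ + (‖∑ n ∈ A₁, f n x • e n‖ + ‖∑ n ∈ D, f n x • e n‖) := by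
          linarith [norm_add_le (∑ n ∈ A₁, f n x • e n) (∑ n ∈ D, f n x • e n)]
      _ ≤ ‖x‖ + (Cw * ‖x‖ + (16 * Cw ^ 4 / τ) * ‖x‖) := by linarith
      _ = (1 + Cw + 16 * Cw ^ 4 / τ) * ‖x‖ := by ring
end
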